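/- arXiv:0901.2061 — 5 statements merged into one kernel-verified Lean document; each statement's English description precedes it below -/
import Mathlib

section
/- Fix r ≥ 3. For all sufficiently large k, every r-graph with independent neighborhoods and at most b_𝓘 · k^{r+1/(r−1)} edges has chromatic number at most k, where b_𝓘 = 1/(40 r^2 2^r). Equivalently, m_k(F_r) > b_𝓘 k^{r+1/(r−1)}. -/
/-- `E` is the edge set of an `r`-uniform hypergraph: every edge has exactly `r` vertices. -/
def IsRGraph (r : ℕ) {V : Type*} (E : Finset (Finset V)) : Prop :=
  ∀ e ∈ E, e.card = r

/-- `f` is a proper coloring of the hypergraph with edge set `E`: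
no edge with at least two vertices is monochromatic. -/
def IsProperColoring {V : Type*} (E : Finset (Finset V)) {k : ℕ} (f : V → Fin k) : Prop :=
  ∀ e ∈ E, 2 ≤ e.card → ∃ u ∈ e, ∃ v ∈ e, f u ≠ f v

/-- The hypergraph with edge set `E` is properly `k`-colorable,
i.e. its chromatic number is at most `k`. -/
def HypColorable {V : Type*} (E : Finset (Finset V)) (k : ℕ) : Prop :=
  ∃ f : V → Fin k, IsProperColoring E f

/-- The `r`-graph `E` contains a copy of `F_r`: there are disjoint sets `A` (of size `r-1`)
and `B` (of size `r`) such that `B` is an edge and `A ∪ {b}` is an edge for every `b ∈ B`. -/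
def HasFr (r : ℕ) {V : Type*} [DecidableEq V] (E : Finset (Finset V)) : Prop :=
  ∃ A B : Finset V, Disjoint A B ∧ A.card = r - 1 ∧ B.card = r ∧
    B ∈ E ∧ ∀ b ∈ B, insert b A ∈ E

section Aux

variable {n r : ℕ} {E : Finset (Finset (Fin n))}

-- Bernoulli-type bound: if 2N ≤ q then q^N ≤ 2 (q-1)^N
lemma bern (N q : ℕ) (h : 2 * N ≤ q) : q ^ N ≤ 2 * (q - 1) ^ N := by
  rcases Nat.eq_zero_or_pos N with hN | hN
  · subst hN; simp
  have hq2 : 2 ≤ q := le_trans (by omega) h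
  have hq0 : (0:ℝ) < (q:ℝ) := by positivity
  have hq1 : (1:ℝ)/(q:ℝ) ≤ 1 := by
    rw [div_le_one hq0]; exact_mod_cast by omega
  have key : (1 : ℝ) - (N:ℝ)/(q:ℝ) ≤ ((q:ℝ) - 1)^N / (q:ℝ)^N := by
    have h1 : (1:ℝ) + (N:ℝ) * (-(1/(q:ℝ))) ≤ (1 + (-(1/(q:ℝ))))^N := by
      apply one_add_mul_le_pow
      linarith
    have h2 : (1 + (-(1/(q:ℝ))))^N = ((q:ℝ) - 1)^N / (q:ℝ)^N := by
      rw [← div_pow]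
      congr 1
      field_simp
      ring
    rw [h2] at h1
    calc (1:ℝ) - (N:ℝ)/(q:ℝ) = 1 + (N:ℝ) * (-(1/(q:ℝ))) := by ring
    _ ≤ _ := h1
  have half : (1:ℝ)/2 ≤ (1 : ℝ) - (N:ℝ)/(q:ℝ) := by
    have : (N:ℝ)/(q:ℝ) ≤ 1/2 := by
      rw [div_le_div_iff₀ hq0 (by norm_num)]
      have : (2:ℝ) * N ≤ q := by exact_mod_cast h
      linarith
    linarith
  have final : ((q:ℝ))^N ≤ 2 * ((q:ℝ) - 1)^N := by
    have hpow : (0:ℝ) < (q:ℝ)^N := by positivity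
    have := le_trans half key
    rw [le_div_iff₀ hpow] at this
    linarith
  have hcast : ((q - 1 : ℕ) : ℝ) = (q:ℝ) - 1 := by
    have h1 : 1 ≤ q := by omega
    push_cast [Nat.cast_sub h1]
    ring
  have : ((q:ℕ):ℝ)^N ≤ 2 * (((q-1:ℕ)):ℝ)^N := by rw [hcast]; exact final
  exact_mod_cast this

-- (q+1)^r ≤ q^r + r * (q+1)^(r-1)
lemma pow_succ_bound (q : ℕ) : ∀ r : ℕ, (q+1)^r ≤ q^r + r * (q+1)^(r-1)
  | 0 => by simp
  | 1 => by simp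
  | (r+2) => by
    have IH := pow_succ_bound q (r+1)
    simp only [Nat.add_sub_cancel] at IH ⊢
    have step : (q+1)^(r+2) = (q+1)^(r+1) * q + (q+1)^(r+1) := by ring
    have h1 : (q+1)^(r+1) * q ≤ (q^(r+1) + (r+1) * (q+1)^r) * q :=
      Nat.mul_le_mul_right q IH
    have h2 : (q^(r+1) + (r+1) * (q+1)^r) * q = q^(r+2) + (r+1) * ((q+1)^r * q) := by ring
    have h3 : (q+1)^r * q ≤ (q+1)^(r+1) := by
      have : (q+1)^r * q ≤ (q+1)^r * (q+1) := Nat.mul_le_mul_left _ (by omega)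
      simpa [pow_succ] using this
    have h4 : (r+1) * ((q+1)^r * q) ≤ (r+1) * (q+1)^(r+1) := Nat.mul_le_mul_left _ h3
    have h5 : (q+1)^(r+2) ≤ q^(r+2) + (r+1) * (q+1)^(r+1) + (q+1)^(r+1) := by omega
    calc (q+1)^(r+2) ≤ q^(r+2) + (r+1) * (q+1)^(r+1) + (q+1)^(r+1) := h5
    _ = q^(r+2) + (r+2) * (q+1)^(r+1) := by ring

-- 16 r ≤ 40^(r-1) for r ≥ 3
lemma sixteen_le (r : ℕ) (hr : 3 ≤ r) : 16 * r ≤ 40 ^ (r - 1) := by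
  induction r with
  | zero => omega
  | succ n IH =>
    rcases Nat.lt_or_ge n 3 with h | h
    · have hn : n = 2 := by omega
      subst hn; norm_num
    · have h1 := IH (by omega)
      have h2 : n + 1 - 1 = (n - 1) + 1 := by omega
      rw [h2, pow_succ]
      have h3 : 16 * (n+1) ≤ 16 * n * 2 := by omega
      calc 16 * (n+1) ≤ 16 * n * 2 := h3
      _ ≤ 40 ^ (n-1) * 2 := Nat.mul_le_mul_right 2 h1
      _ ≤ 40 ^ (n-1) * 40 := Nat.mul_le_mul_left _ (by norm_num)

/-- In an `F_r`-free `r`-graph, any finite vertex set `W` contains an independent set `I`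
(no edge inside) with `|W| ≤ |I| + |I|·|I|^(r-1)`. -/
lemma exists_indep (hr : 3 ≤ r) (hE : IsRGraph r E) (hFr : ¬ HasFr r E)
    (W : Finset (Fin n)) :
    ∃ I : Finset (Fin n), I ⊆ W ∧ (∀ e ∈ E, ¬ e ⊆ I) ∧
      W.card ≤ I.card + I.card * I.card ^ (r - 1) := by
  classical
  set S : Finset (Finset (Fin n)) := W.powerset.filter (fun I => ∀ e ∈ E, ¬ e ⊆ I) with hS
  have hSmem : ∀ I, I ∈ S ↔ I ⊆ W ∧ ∀ e ∈ E, ¬ e ⊆ I := by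
    intro I
    simp [hS, Finset.mem_filter, Finset.mem_powerset]
  have hempty : (∅ : Finset (Fin n)) ∈ S := by
    rw [hSmem]
    refine ⟨Finset.empty_subset _, fun e he hsub => ?_⟩
    have hc := hE e he
    rw [Finset.subset_empty.mp hsub] at hc
    simp at hc
    omega
  obtain ⟨I, hIS, hImax⟩ := S.exists_max_image Finset.card ⟨∅, hempty⟩
  obtain ⟨hIW, hIind⟩ := (hSmem I).mp hIS
  refine ⟨I, hIW, hIind, ?_⟩
  -- the link of A within W
  set L : Finset (Fin n) → Finset (Fin n) :=
    fun A => W.filter (fun u => u ∉ A ∧ insert u A ∈ E) with hL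
  -- covering claim
  have hcov : W \ I ⊆ (I.powersetCard (r-1)).biUnion L := by
    intro w hw
    obtain ⟨hwW, hwI⟩ := Finset.mem_sdiff.mp hw
    have hins : insert w I ∉ S := by
      intro hmem
      have hcard := hImax _ hmem
      rw [Finset.card_insert_of_notMem hwI] at hcard
      omega
    have hinsW : insert w I ⊆ W := Finset.insert_subset hwW hIW
    have : ∃ e ∈ E, e ⊆ insert w I := by
      by_contra hcon
      push_neg at hcon
      exact hins ((hSmem _).mpr ⟨hinsW, hcon⟩)
    obtain ⟨e, heE, hesub⟩ := this
    have hwe : w ∈ e := by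
      by_contra hwe
      have : e ⊆ I := by
        intro x hx
        rcases Finset.mem_insert.mp (hesub hx) with h | h
        · exact absurd (h ▸ hx) hwe
        · exact h
      exact hIind e heE this
    refine Finset.mem_biUnion.mpr ⟨e.erase w, ?_, ?_⟩
    · rw [Finset.mem_powersetCard]
      constructor
      · intro x hx
        obtain ⟨hxw, hxe⟩ := Finset.mem_erase.mp hx
        rcases Finset.mem_insert.mp (hesub hxe) with h | h
        · exact absurd h hxw
        · exact h
      · rw [Finset.card_erase_of_mem hwe, hE e heE]
    · rw [hL]
      simp only [Finset.mem_filter]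
      exact ⟨hwW, Finset.notMem_erase w e, by rw [Finset.insert_erase hwe]; exact heE⟩
  -- each link is independent, hence small
  have hLle : ∀ A ∈ I.powersetCard (r-1), (L A).card ≤ I.card := by
    intro A hA
    obtain ⟨hAI, hAcard⟩ := Finset.mem_powersetCard.mp hA
    have hLS : L A ∈ S := by
      rw [hSmem]
      constructor
      · exact Finset.filter_subset _ _
      · intro e' he' hsub
        apply hFr
        refine ⟨A, e', ?_, hAcard, hE e' he', he', ?_⟩
        · rw [Finset.disjoint_right]
          intro b hb
          exact ((Finset.mem_filter.mp (hsub hb)).2).1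
        · intro b hb
          exact ((Finset.mem_filter.mp (hsub hb)).2).2
    exact hImax _ hLS
  -- cardinality chain
  have h1 : (W \ I).card ≤ ((I.powersetCard (r-1)).biUnion L).card :=
    Finset.card_le_card hcov
  have h2 : ((I.powersetCard (r-1)).biUnion L).card ≤
      ∑ A ∈ I.powersetCard (r-1), (L A).card := Finset.card_biUnion_le
  have h3 : ∑ A ∈ I.powersetCard (r-1), (L A).card ≤
      ∑ A ∈ I.powersetCard (r-1), I.card := Finset.sum_le_sum hLle
  have h4 : ∑ A ∈ I.powersetCard (r-1), I.card = I.card.choose (r-1) * I.card := by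
    rw [Finset.sum_const, Finset.card_powersetCard, smul_eq_mul]
  have h5 : I.card.choose (r-1) ≤ I.card ^ (r-1) := Nat.choose_le_pow _ _
  have h6 : (W \ I).card + I.card = W.card := Finset.card_sdiff_add_card_eq_card hIW
  have h7 : I.card.choose (r-1) * I.card ≤ I.card ^ (r-1) * I.card :=
    Nat.mul_le_mul_right _ h5
  have h8 : I.card ^ (r-1) * I.card = I.card * I.card ^ (r-1) := Nat.mul_comm _ _
  omega

/-- Trivial coloring by blocks of size `r-1`. -/
lemma blocks (hr : 3 ≤ r) (hE : IsRGraph r E) (W : Finset (Fin n)) (q : ℕ)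
    (h : W.card ≤ q * (r-1)) :
    ∃ g : Fin n → ℕ, (∀ w ∈ W, g w < q) ∧
      (∀ e ∈ E, e ⊆ W → ∃ u ∈ e, ∃ v ∈ e, g u ≠ g v) := by
  classical
  set l : List (Fin n) := W.sort (· ≤ ·) with hl
  have hlen : l.length = W.card := Finset.length_sort _
  have hmem : ∀ w, w ∈ l ↔ w ∈ W := fun w => Finset.mem_sort _
  have hr1 : 0 < r - 1 := by omega
  refine ⟨fun v => l.idxOf v / (r-1), ?_, ?_⟩
  · intro w hw
    have hidx : l.idxOf w < W.card := hlen ▸ List.idxOf_lt_length_iff.mpr ((hmem w).mpr hw)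
    rw [Nat.div_lt_iff_lt_mul hr1]
    omega
  · intro e heE hesub
    by_contra hcon
    push_neg at hcon
    have hecard := hE e heE
    have hne : e.Nonempty := by
      rw [← Finset.card_pos, hecard]; omega
    obtain ⟨u₀, hu₀⟩ := hne
    set c := l.idxOf u₀ / (r-1) with hc
    set idx : Fin n → ℕ := fun v => l.idxOf v with hidxf
    have himg : e.image idx ⊆ Finset.Ico (c*(r-1)) (c*(r-1)+(r-1)) := by
      intro j hj
      obtain ⟨u, hue, huj⟩ := Finset.mem_image.mp hj
      have hgu : idx u / (r-1) = c := hcon u hue u₀ hu₀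
      rw [Finset.mem_Ico, ← huj]
      constructor
      · calc c*(r-1) = (idx u/(r-1))*(r-1) := by rw [hgu]
        _ ≤ idx u := Nat.div_mul_le_self _ _
      · have : idx u / (r-1) < c + 1 := by omega
        rw [Nat.div_lt_iff_lt_mul hr1, Nat.succ_mul] at this
        omega
    have hinj : Set.InjOn idx e := by
      intro u hu v hv huv
      have hul : u ∈ l := (hmem u).mpr (hesub hu)
      have hvl : v ∈ l := (hmem v).mpr (hesub hv)
      have h1 : l.idxOf u < l.length := List.idxOf_lt_length_iff.mpr hul
      have h2 : l.idxOf v < l.length := List.idxOf_lt_length_iff.mpr hvl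
      have e1 : l[l.idxOf u] = u := List.getElem_idxOf h1
      have e2 : l[l.idxOf v] = v := List.getElem_idxOf h2
      rw [← e1, ← e2]
      simp only [hidxf] at huv
      congr 1
    have hcard1 : (e.image idx).card = r := by
      rw [Finset.card_image_of_injOn hinj, hecard]
    have hcard2 : (e.image idx).card ≤ r - 1 := by
      calc (e.image idx).card ≤ (Finset.Ico (c*(r-1)) (c*(r-1)+(r-1))).card :=
        Finset.card_le_card himg
      _ = r - 1 := by rw [Nat.card_Ico]; omega
    omega

/-- Peeling: an F_r-free r-graph on a small vertex set has small chromatic number. -/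
lemma peel (hr : 3 ≤ r) (hE : IsRGraph r E) (hFr : ¬ HasFr r E) :
    ∀ q : ℕ, ∀ W : Finset (Fin n), 4 * r^r * W.card^(r-1) ≤ q^r →
    ∃ g : Fin n → ℕ, (∀ w ∈ W, g w < q) ∧
      (∀ e ∈ E, e ⊆ W → ∃ u ∈ e, ∃ v ∈ e, g u ≠ g v) := by
  intro q
  induction q with
  | zero =>
    intro W h
    have hW : W.card = 0 := by
      have h0 : (0:ℕ)^r = 0 := by rw [Nat.zero_pow]; omega
      rw [h0, Nat.le_zero] at h
      have hrr : 0 < 4 * r^r := by positivity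
      have hpow : W.card ^ (r-1) = 0 := by
        rcases Nat.mul_eq_zero.mp h with h' | h'
        · omega
        · exact h'
      exact (Nat.pow_eq_zero.mp hpow).1
    refine ⟨fun _ => 0, ?_, ?_⟩
    · intro w hw
      rw [Finset.card_eq_zero.mp hW] at hw
      simp at hw
    · intro e heE hesub
      exfalso
      rw [Finset.card_eq_zero.mp hW, Finset.subset_empty] at hesub
      have hce := hE e heE
      rw [hesub] at hce
      simp at hce
      omega
  | succ q IH =>
    intro W h
    by_cases hc1 : 4 * r^r * W.card^(r-1) ≤ q^r
    · obtain ⟨g, hg1, hg2⟩ := IH W hc1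
      exact ⟨g, fun w hw => Nat.lt_succ_of_lt (hg1 w hw), hg2⟩
    by_cases hc2 : W.card ≤ (q+1) * (r-1)
    · exact blocks hr hE W (q+1) hc2
    push_neg at hc1 hc2
    obtain ⟨I, hIW, hIind, hIcov⟩ := exists_indep hr hE hFr W
    set x := W.card with hxdef
    set i := I.card with hidef
    have hile : i ≤ x := Finset.card_le_card hIW
    have hii : i ≤ i^r := Nat.le_self_pow (by omega) _
    have hipow : i * i^(r-1) = i^r := by
      rw [← pow_succ']
      congr 1
      omega
    have hxi : x ≤ 2 * i^r := by rw [hipow] at hIcov; omega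
    have hx1 : 1 ≤ x := by
      have : 1*1 ≤ (q+1)*(r-1) := Nat.mul_le_mul (by omega) (by omega)
      omega
    have hi1 : 1 ≤ i := by
      by_contra hcon
      push_neg at hcon
      have hi0 : i = 0 := by omega
      rw [hi0] at hIcov
      simp at hIcov
      omega
    -- q is large
    have hqbig : 4*r^r*(r-1)^(r-1) < q+1 := by
      have hlt : ((q+1)*(r-1))^(r-1) < x^(r-1) :=
        Nat.pow_lt_pow_left hc2 (by omega)
      have h0 : 0 < 4*r^r := by positivity
      have h1 : (4*r^r) * (((q+1)*(r-1))^(r-1)) < (4*r^r) * (x^(r-1)) :=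
        mul_lt_mul_of_pos_left hlt h0
      have e1 : (4*r^r) * (((q+1)*(r-1))^(r-1)) = (4*r^r*(r-1)^(r-1)) * (q+1)^(r-1) := by
        rw [mul_pow]; ring
      have e2 : (q+1)^r = (q+1) * (q+1)^(r-1) := by
        conv_lhs => rw [show r = (r-1)+1 by omega]
        rw [pow_succ]; ring
      have h2 : (4*r^r*(r-1)^(r-1)) * (q+1)^(r-1) < (q+1) * (q+1)^(r-1) := by
        rw [← e1, ← e2]
        exact lt_of_lt_of_le h1 h
      exact lt_of_mul_lt_mul_right h2 (Nat.zero_le _)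
    -- the key bound B ≥ (q+1)^(r-1)
    set B := 4*r^(r-1)*i*x^(r-2) with hBdef
    have hBr : B^r = 4^r * (r^((r-1)*r)) * i^r * (x^((r-2)*r)) := by
      rw [hBdef, mul_pow, mul_pow, mul_pow, ← pow_mul, ← pow_mul]
    have hx2 : x * x^((r-2)*r) = x^((r-1)*(r-1)) := by
      rw [← pow_succ']
      congr 1
      obtain ⟨s, rfl⟩ : ∃ s, r = s + 3 := ⟨r - 3, by omega⟩
      have e1 : s + 3 - 2 = s + 1 := by omega
      have e2 : s + 3 - 1 = s + 2 := by omega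
      rw [e1, e2]; ring
    have hstep1 : 4^r * (r^((r-1)*r)) * (x^((r-1)*(r-1))) ≤ 2 * B^r := by
      calc 4^r * (r^((r-1)*r)) * (x^((r-1)*(r-1)))
          = 4^r * (r^((r-1)*r)) * (x * x^((r-2)*r)) := by rw [hx2]
      _ ≤ 4^r * (r^((r-1)*r)) * ((2*i^r) * x^((r-2)*r)) :=
          Nat.mul_le_mul_left _ (Nat.mul_le_mul_right _ hxi)
      _ = 2 * (4^r * (r^((r-1)*r)) * i^r * (x^((r-2)*r))) := by ring
      _ = 2 * B^r := by rw [hBr]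
    have hstep2 : (q^r)^(r-1) ≤ ((4*r^r)^(r-1)) * (x^((r-1)*(r-1))) := by
      calc (q^r)^(r-1) ≤ (4*r^r*x^(r-1))^(r-1) :=
            Nat.pow_le_pow_left (le_of_lt hc1) _
      _ = ((4*r^r)^(r-1)) * ((x^(r-1))^(r-1)) := by rw [mul_pow]
      _ = ((4*r^r)^(r-1)) * (x^((r-1)*(r-1))) := by rw [← pow_mul]
    have hc4 : 4^r * (r^((r-1)*r)) = 4*((4*r^r)^(r-1)) := by
      rw [mul_pow, ← pow_mul]
      rw [show r*(r-1) = (r-1)*r from Nat.mul_comm _ _]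
      have h4 : (4:ℕ)^r = 4*4^(r-1) := by
        conv_lhs => rw [show r = 1+(r-1) by omega]
        rw [pow_add, pow_one]
      rw [h4]; ring
    have hkey : 2 * (q^(r*(r-1))) ≤ B^r := by
      have k1 : 4 * ((q^r)^(r-1)) ≤ 4 * (((4*r^r)^(r-1)) * (x^((r-1)*(r-1)))) :=
        Nat.mul_le_mul_left _ hstep2
      have k2 : 4 * (((4*r^r)^(r-1)) * (x^((r-1)*(r-1)))) =
          4^r * (r^((r-1)*r)) * (x^((r-1)*(r-1))) := by rw [hc4]; ring
      have k3 : (q^r)^(r-1) = q^(r*(r-1)) := by rw [← pow_mul]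
      omega
    have hq2N : 2*(r*(r-1)) ≤ q+1 := by
      have e1 : r ≤ r^r := Nat.le_self_pow (by omega) _
      have e2 : (r-1) ≤ (r-1)^(r-1) := Nat.le_self_pow (by omega) _
      have e3 : r*(r-1) ≤ (r^r)*((r-1)^(r-1)) := Nat.mul_le_mul e1 e2
      have e4 : 4*((r^r)*((r-1)^(r-1))) = 4*r^r*(r-1)^(r-1) := by ring
      omega
    have hBub : (q+1)^(r-1) ≤ B := by
      have b1 : (q+1)^(r*(r-1)) ≤ 2*(q^(r*(r-1))) := by
        have := bern (r*(r-1)) (q+1) hq2N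
        simpa using this
      have b2 : ((q+1)^(r-1))^r = (q+1)^(r*(r-1)) := by
        rw [← pow_mul, Nat.mul_comm]
      have b3 : ((q+1)^(r-1))^r ≤ B^r := by omega
      exact (Nat.pow_le_pow_iff_left (show r ≠ 0 by omega)).mp b3
    -- derive the induction-hypothesis bound for W \ I
    have t1 : (x-i)^(r-1) ≤ (x^(r-2))*(x-i) := by
      have e : (x-i)^(r-1) = ((x-i)^(r-2))*(x-i) := by
        rw [← pow_succ]; congr 1; omega
      rw [e]
      exact Nat.mul_le_mul_right _ (Nat.pow_le_pow_left (Nat.sub_le _ _) _)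
    have t2 : 4*r^r*((x^(r-2))*(x-i)) + 4*r^r*(i*(x^(r-2))) = 4*r^r*x^(r-1) := by
      have base : (x^(r-2))*(x-i) + i*(x^(r-2)) = x^(r-1) := by
        have e3 : (x - i) + i = x := by omega
        have e4 : (x^(r-2))*(x-i) + i*(x^(r-2)) = (x^(r-2))*((x-i)+i) := by ring
        rw [e4, e3, ← pow_succ]
        congr 1
        omega
      rw [← base]
      ring
    have t3 : r*((q+1)^(r-1)) ≤ 4*r^r*(i*(x^(r-2))) := by
      have m1 : r*((q+1)^(r-1)) ≤ r*B := Nat.mul_le_mul_left _ hBub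
      have e : r*B = 4*r^r*(i*(x^(r-2))) := by
        rw [hBdef]
        have e1 : r*(r^(r-1)) = r^r := by rw [← pow_succ']; congr 1; omega
        calc r*(4*r^(r-1)*i*x^(r-2)) = 4*(r*(r^(r-1)))*(i*(x^(r-2))) := by ring
        _ = 4*r^r*(i*(x^(r-2))) := by rw [e1]
      omega
    have t4 := pow_succ_bound q r
    have t5 : 4*r^r*((x-i)^(r-1)) ≤ 4*r^r*((x^(r-2))*(x-i)) :=
      Nat.mul_le_mul_left _ t1
    have hT : 4 * r^r * ((W \ I).card)^(r-1) ≤ q^r := by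
      rw [Finset.card_sdiff_of_subset hIW, ← hxdef, ← hidef]
      omega
    obtain ⟨g, hg1, hg2⟩ := IH (W \ I) hT
    refine ⟨fun v => if v ∈ I then q else g v, ?_, ?_⟩
    · intro w hw
      by_cases hwI : w ∈ I
      · simp [hwI]
      · simp only [if_neg hwI]
        exact Nat.lt_succ_of_lt (hg1 w (Finset.mem_sdiff.mpr ⟨hw, hwI⟩))
    · intro e heE hesub
      by_cases heI : ∀ u ∈ e, u ∉ I
      · have hsub' : e ⊆ W \ I := fun u hu => Finset.mem_sdiff.mpr ⟨hesub hu, heI u hu⟩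
        obtain ⟨u, hu, v, hv, huv⟩ := hg2 e heE hsub'
        refine ⟨u, hu, v, hv, ?_⟩
        simp only [if_neg (heI u hu), if_neg (heI v hv)]
        exact huv
      · push_neg at heI
        obtain ⟨w, hwe, hwI⟩ := heI
        have : ∃ u ∈ e, u ∉ I := by
          by_contra hcon
          push_neg at hcon
          exact hIind e heE (fun u hu => hcon u hu)
        obtain ⟨u, hue, huI⟩ := this
        refine ⟨u, hue, w, hwe, ?_⟩
        simp only [if_neg huI, if_pos hwI]
        have : g u < q := hg1 u (Finset.mem_sdiff.mpr ⟨hesub hue, huI⟩)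
        omega

lemma card_const_on (K : ℕ) (e : Finset (Fin n)) (he : e.Nonempty) :
    (Finset.univ.filter (fun f : Fin n → Fin K => ∀ x ∈ e, ∀ y ∈ e, f x = f y)).card
      = K ^ (n + 1 - e.card) := by
  classical
  obtain ⟨x₀, hx₀⟩ := he
  have hecard : 1 ≤ e.card := Finset.card_pos.mpr ⟨x₀, hx₀⟩
  have hen : e.card ≤ n := by
    have h2 := Finset.card_le_univ e
    rwa [Fintype.card_fin] at h2
  have hexp : n - (e.card - 1) = n + 1 - e.card := by omega
  set s := e.erase x₀ with hs
  have hx₀s : x₀ ∉ s := Finset.notMem_erase _ _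
  have hsub : ∀ x ∈ s, x ∈ e := fun x hx => Finset.mem_of_mem_erase hx
  -- the equivalence
  let φ : {f : Fin n → Fin K // ∀ x ∈ e, ∀ y ∈ e, f x = f y} ≃ ({x : Fin n // x ∉ s} → Fin K) :=
    { toFun := fun f x => f.1 x.1
      invFun := fun g => ⟨fun x => if h : x ∈ s then g ⟨x₀, hx₀s⟩ else g ⟨x, h⟩, by
        intro x hx y hy
        dsimp only
        have key : ∀ z ∈ e, (if h : z ∈ s then g ⟨x₀, hx₀s⟩ else g ⟨z, h⟩) = g ⟨x₀, hx₀s⟩ := by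
          intro z hz
          by_cases hzs : z ∈ s
          · rw [dif_pos hzs]
          · rw [dif_neg hzs]
            have hz0 : z = x₀ := by
              by_contra hne
              exact hzs (Finset.mem_erase.mpr ⟨hne, hz⟩)
            subst hz0
            rfl
        rw [key x hx, key y hy]⟩
      left_inv := by
        intro f
        ext x
        dsimp only
        by_cases hxs : x ∈ s
        · rw [dif_pos hxs]
          exact congrArg Fin.val (f.2 x₀ hx₀ x (hsub x hxs))
        · rw [dif_neg hxs]
      right_inv := by
        intro g
        ext x
        dsimp only
        rw [dif_neg x.2] }
  have hcard1 := Fintype.card_congr φ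
  rw [Fintype.card_subtype] at hcard1
  rw [hcard1, Fintype.card_fun]
  have hscard : Fintype.card {x : Fin n // x ∉ s} = n - s.card := by
    rw [Fintype.card_subtype_compl]
    congr 1
    · exact Fintype.card_fin n
    · rw [Fintype.card_coe]
  have hse : s.card = e.card - 1 := Finset.card_erase_of_mem hx₀
  rw [hscard, hse, Fintype.card_fin, hexp]

/-- Averaging: some coloring has few monochromatic edges. -/
lemma exists_good_coloring (hr : 3 ≤ r) (hE : IsRGraph r E) (K : ℕ) (hK : 1 ≤ K) :
    ∃ f : Fin n → Fin K,
      K ^ (r-1) * (E.filter (fun e => ∀ x ∈ e, ∀ y ∈ e, f x = f y)).card ≤ E.card := by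
  classical
  rcases E.eq_empty_or_nonempty with hEe | hEne
  · refine ⟨fun _ => ⟨0, hK⟩, ?_⟩
    rw [hEe]
    simp
  obtain ⟨e₀, he₀⟩ := hEne
  have hrn : r ≤ n := by
    have h1 := hE e₀ he₀
    have h2 := Finset.card_le_univ e₀
    rw [Fintype.card_fin] at h2
    omega
  by_contra hcon
  push_neg at hcon
  -- sum over all colorings
  have hsum : ∑ f : Fin n → Fin K,
      (E.filter (fun e => ∀ x ∈ e, ∀ y ∈ e, f x = f y)).card
      = E.card * K ^ (n + 1 - r) := by
    have h1 : ∀ f : Fin n → Fin K,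
        (E.filter (fun e => ∀ x ∈ e, ∀ y ∈ e, f x = f y)).card
        = ∑ e ∈ E, (if (∀ x ∈ e, ∀ y ∈ e, f x = f y) then 1 else 0) := by
      intro f
      rw [Finset.card_filter]
    calc ∑ f : Fin n → Fin K,
        (E.filter (fun e => ∀ x ∈ e, ∀ y ∈ e, f x = f y)).card
        = ∑ f : Fin n → Fin K, ∑ e ∈ E,
            (if (∀ x ∈ e, ∀ y ∈ e, f x = f y) then 1 else 0) := by
          exact Finset.sum_congr rfl (fun f _ => h1 f)
    _ = ∑ e ∈ E, ∑ f : Fin n → Fin K,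
            (if (∀ x ∈ e, ∀ y ∈ e, f x = f y) then 1 else 0) := Finset.sum_comm
    _ = ∑ e ∈ E, K ^ (n + 1 - r) := by
        refine Finset.sum_congr rfl (fun e he => ?_)
        have hne : e.Nonempty := by
          rw [← Finset.card_pos, hE e he]; omega
        rw [← Finset.card_filter, card_const_on K e hne, hE e he]
    _ = E.card * K ^ (n + 1 - r) := by rw [Finset.sum_const, smul_eq_mul]
  have hfinal : K^n * (E.card + 1) ≤ K ^ (r-1) * (E.card * K ^ (n+1-r)) := by
    calc K^n * (E.card + 1)
        = ∑ _f : Fin n → Fin K, (E.card + 1) := by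
          rw [Finset.sum_const, smul_eq_mul, Finset.card_univ, Fintype.card_fun,
            Fintype.card_fin, Fintype.card_fin]
    _ ≤ ∑ f : Fin n → Fin K,
          K ^ (r-1) * (E.filter (fun e => ∀ x ∈ e, ∀ y ∈ e, f x = f y)).card :=
        Finset.sum_le_sum (fun f _ => hcon f)
    _ = K ^ (r-1) * ∑ f : Fin n → Fin K,
          (E.filter (fun e => ∀ x ∈ e, ∀ y ∈ e, f x = f y)).card := by
        rw [Finset.mul_sum]
    _ = K ^ (r-1) * (E.card * K ^ (n+1-r)) := by rw [hsum]
  clear hsum hcon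
  have hKexp : K ^ (r-1) * K ^ (n + 1 - r) = K ^ n := by
    rw [← pow_add]
    congr 1
    omega
  have hKpow : K ^ (r-1) * (E.card * K ^ (n + 1 - r)) = E.card * K ^ n := by
    calc K ^ (r-1) * (E.card * K ^ (n + 1 - r))
        = E.card * (K ^ (r-1) * K ^ (n + 1 - r)) := by ring
    _ = E.card * K ^ n := by rw [hKexp]
  rw [hKpow] at hfinal
  have hKn : 1 ≤ K ^ n := Nat.one_le_pow _ _ (by omega)
  have hexpand : K^n * (E.card + 1) = E.card * K^n + K^n := by ring
  omega

end Aux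

lemma main_arith (r k m : ℕ) (hr : 3 ≤ r) (hk : 2*r^2 ≤ k)
    (hm : (m:ℝ) ≤ 1/(40*(r:ℝ)^2*2^r) * (k:ℝ) ^ ((r:ℝ) + 1/((r:ℝ)-1))) :
    4 * r^(2*r-1) * m^(r-1) ≤ (k - k/2)^r * (k/2)^((r-1)^2) := by
  obtain ⟨a, rfl⟩ : ∃ a, r = a + 1 := ⟨r-1, by omega⟩
  have ha : 2 ≤ a := by omega
  have ha0 : (a:ℝ) ≠ 0 := by positivity
  have hk18 : 18 ≤ k := by nlinarith
  have hk1R : (1:ℝ) ≤ (k:ℝ) := by exact_mod_cast by omega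
  have hk0 : (0:ℝ) ≤ (k:ℝ) := by positivity
  simp only [Nat.add_sub_cancel] at hm ⊢
  rw [show 2*(a+1)-1 = 2*a+1 by omega]
  push_cast at hm
  have hexp1 : ((a:ℝ) + 1 - 1) = (a:ℝ) := by ring
  rw [hexp1] at hm
  set K₁ := k / 2 with hK1def
  set K₂ := k - k / 2 with hK2def
  -- reduce to a real inequality
  rw [show (4 * (a+1)^(2*a+1) * m^a ≤ K₂^(a+1) * K₁^(a^2)) =
      ((4 * (a+1)^(2*a+1) * m^a : ℕ) ≤ (K₂^(a+1) * K₁^(a^2) : ℕ)) from rfl]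
  have hcast : ((4 * (a+1)^(2*a+1) * m^a : ℕ) : ℝ) ≤ ((K₂^(a+1) * K₁^(a^2) : ℕ) : ℝ) → 
      (4 * (a+1)^(2*a+1) * m^a : ℕ) ≤ (K₂^(a+1) * K₁^(a^2) : ℕ) := fun h => by exact_mod_cast h
  apply hcast
  push_cast
  -- real-number quantities
  have hbpos : (0:ℝ) < 40*((a:ℝ)+1)^2*2^(a+1) := by positivity
  -- Step A : m^a ≤ b^a k^(a²+a+1)
  have hA : (m:ℝ)^a ≤ (1/(40*((a:ℝ)+1)^2*2^(a+1)))^a * (k:ℝ)^(a^2+a+1 : ℕ) := by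
    have h1 : (m:ℝ)^a ≤ ((1/(40*((a:ℝ)+1)^2*2^(a+1))) * (k:ℝ)^((a:ℝ)+1+1/(a:ℝ)))^a := by
      exact pow_le_pow_left₀ (by positivity) hm a
    rw [mul_pow] at h1
    have h2 : (((k:ℝ)^((a:ℝ)+1+1/(a:ℝ)))^a : ℝ) = (k:ℝ)^(a^2+a+1 : ℕ) := by
      rw [← Real.rpow_natCast ((k:ℝ)^((a:ℝ)+1+1/(a:ℝ))) a, ← Real.rpow_mul hk0,
        ← Real.rpow_natCast (k:ℝ) (a^2+a+1)]
      congr 1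
      push_cast
      field_simp
    rw [h2] at h1
    exact h1
  -- Step B : bounds on K₁ K₂
  have hK2R : (k:ℝ)/2 ≤ (K₂:ℝ) := by
    have h2 : K₁ ≤ k := Nat.div_le_self _ _
    have h3 : ((K₁:ℕ):ℝ) ≤ (k:ℝ)/2 := by
      rw [le_div_iff₀ (by norm_num : (0:ℝ) < 2)]
      exact_mod_cast (by omega : K₁*2 ≤ k)
    have h4 : ((K₂:ℕ):ℝ) = (k:ℝ) - (K₁:ℝ) := by
      rw [hK2def]
      exact Nat.cast_sub h2
    rw [h4]
    linarith
  have hK1R : ((k:ℝ)-1)/2 ≤ (K₁:ℝ) := by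
    have h5 : k - 1 ≤ 2*K₁ := by omega
    have h6 : (k:ℝ) - 1 ≤ 2*(K₁:ℝ) := by
      have := (Nat.cast_le (α := ℝ)).mpr h5
      push_cast [Nat.cast_sub (show 1 ≤ k by omega)] at this
      linarith
    linarith
  have hK2nn : (0:ℝ) ≤ (k:ℝ)/2 := by positivity
  have hK1nn : (0:ℝ) ≤ ((k:ℝ)-1)/2 := by linarith
  -- the middle inequality
  have coeff : (4:ℝ) * ((a:ℝ)+1)^(2*a+1) * (1/(40*((a:ℝ)+1)^2*2^(a+1)))^a
      * 2^(a^2+a+1) * 40^a = 8*((a:ℝ)+1) := by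
    have e1 : ((a:ℝ)+1)^(2*a+1) = (((a:ℝ)+1)^2)^a * ((a:ℝ)+1) := by
      rw [pow_succ, pow_mul]
    have e2 : (2:ℝ)^(a^2+a+1) = (2^(a+1))^a * 2 := by
      rw [pow_succ, ← pow_mul]
      congr 2
      ring
    have e3 : (40*((a:ℝ)+1)^2*2^(a+1)) * (1/(40*((a:ℝ)+1)^2*2^(a+1))) = 1 := by
      field_simp
    have e4 : ((40*((a:ℝ)+1)^2*2^(a+1))^a * (1/(40*((a:ℝ)+1)^2*2^(a+1)))^a : ℝ) = 1 := by
      rw [← mul_pow, e3, one_pow]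
    have e5 : ((40:ℝ)*((a:ℝ)+1)^2*2^(a+1))^a = 40^a*(((a:ℝ)+1)^2)^a*(2^(a+1))^a := by
      rw [mul_pow, mul_pow]
    calc (4:ℝ) * ((a:ℝ)+1)^(2*a+1) * (1/(40*((a:ℝ)+1)^2*2^(a+1)))^a * 2^(a^2+a+1) * 40^a
        = (8*((a:ℝ)+1)) * (40^a*(((a:ℝ)+1)^2)^a*(2^(a+1))^a * (1/(40*((a:ℝ)+1)^2*2^(a+1)))^a) := by
          rw [e1, e2]
          ring
    _ = (8*((a:ℝ)+1)) * ((40*((a:ℝ)+1)^2*2^(a+1))^a * (1/(40*((a:ℝ)+1)^2*2^(a+1)))^a) := by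
          rw [e5]
    _ = 8*((a:ℝ)+1) := by rw [e4, mul_one]
  have hbern : (k:ℝ)^(a^2) ≤ 2*((k:ℝ)-1)^(a^2) := by
    have h1 := bern (a^2) k (by nlinarith)
    have h2 : ((k - 1 : ℕ):ℝ) = (k:ℝ) - 1 := by
      push_cast [Nat.cast_sub (show 1 ≤ k by omega)]
      ring
    calc (k:ℝ)^(a^2) = (((k^(a^2) : ℕ)):ℝ) := by push_cast; ring
    _ ≤ ((2*(k-1)^(a^2) : ℕ) : ℝ) := by exact_mod_cast h1
    _ = 2*((k:ℝ)-1)^(a^2) := by push_cast [h2]; ring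
  have hsixteen : (16:ℝ)*((a:ℝ)+1) ≤ 40^a := by
    have h1 := sixteen_le (a+1) (by omega)
    rw [Nat.add_sub_cancel] at h1
    exact_mod_cast h1
  have hMID : (4:ℝ) * ((a:ℝ)+1)^(2*a+1) *
      ((1/(40*((a:ℝ)+1)^2*2^(a+1)))^a * (k:ℝ)^(a^2+a+1 : ℕ))
      ≤ ((k:ℝ)/2)^(a+1) * (((k:ℝ)-1)/2)^(a^2) := by
    have hR : ((k:ℝ)/2)^(a+1) * (((k:ℝ)-1)/2)^(a^2) =
        (k:ℝ)^(a+1)*((k:ℝ)-1)^(a^2) / 2^(a^2+a+1) := by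
      rw [div_pow, div_pow, div_mul_div_comm, ← pow_add]
      congr 2
      omega
    rw [hR, le_div_iff₀ (by positivity)]
    rw [← mul_le_mul_iff_of_pos_right (show (0:ℝ) < 40^a by positivity)]
    have hL : (4:ℝ) * ((a:ℝ)+1)^(2*a+1) *
        ((1/(40*((a:ℝ)+1)^2*2^(a+1)))^a * (k:ℝ)^(a^2+a+1 : ℕ)) * 2^(a^2+a+1) * 40^a
        = 8*((a:ℝ)+1)*((k:ℝ)^(a+1)*(k:ℝ)^(a^2)) := by
      have hsplit : (k:ℝ)^(a^2+a+1 : ℕ) = (k:ℝ)^(a+1)*(k:ℝ)^(a^2) := by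
        rw [← pow_add]
        congr 1
        omega
      calc (4:ℝ) * ((a:ℝ)+1)^(2*a+1) *
          ((1/(40*((a:ℝ)+1)^2*2^(a+1)))^a * (k:ℝ)^(a^2+a+1 : ℕ)) * 2^(a^2+a+1) * 40^a
          = ((4:ℝ) * ((a:ℝ)+1)^(2*a+1) * (1/(40*((a:ℝ)+1)^2*2^(a+1)))^a
            * 2^(a^2+a+1) * 40^a) * (k:ℝ)^(a^2+a+1 : ℕ) := by ring
      _ = 8*((a:ℝ)+1) * (k:ℝ)^(a^2+a+1 : ℕ) := by rw [coeff]
      _ = 8*((a:ℝ)+1)*((k:ℝ)^(a+1)*(k:ℝ)^(a^2)) := by rw [hsplit]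
    rw [hL]
    have p1 : (0:ℝ) ≤ (k:ℝ)^(a+1) := by positivity
    have p2 : (0:ℝ) ≤ ((k:ℝ)-1)^(a^2) := by
      apply pow_nonneg
      linarith
    have s1 : 8*((a:ℝ)+1)*((k:ℝ)^(a+1)*(k:ℝ)^(a^2)) ≤
        8*((a:ℝ)+1)*((k:ℝ)^(a+1)*(2*((k:ℝ)-1)^(a^2))) := by
      apply mul_le_mul_of_nonneg_left _ (by positivity)
      exact mul_le_mul_of_nonneg_left hbern p1
    have s2 : 8*((a:ℝ)+1)*((k:ℝ)^(a+1)*(2*((k:ℝ)-1)^(a^2))) =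
        (16*((a:ℝ)+1))*((k:ℝ)^(a+1)*((k:ℝ)-1)^(a^2)) := by ring
    have s3 : (16*((a:ℝ)+1))*((k:ℝ)^(a+1)*((k:ℝ)-1)^(a^2)) ≤
        40^a*((k:ℝ)^(a+1)*((k:ℝ)-1)^(a^2)) :=
      mul_le_mul_of_nonneg_right hsixteen (mul_nonneg p1 p2)
    have s4 : (40:ℝ)^a*((k:ℝ)^(a+1)*((k:ℝ)-1)^(a^2)) =
        (k:ℝ)^(a+1)*((k:ℝ)-1)^(a^2)*40^a := by ring
    linarith
  -- final chain
  calc (4:ℝ) * ((a:ℝ)+1)^(2*a+1) * (m:ℝ)^a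
      ≤ (4:ℝ) * ((a:ℝ)+1)^(2*a+1) *
        ((1/(40*((a:ℝ)+1)^2*2^(a+1)))^a * (k:ℝ)^(a^2+a+1 : ℕ)) := by
        apply mul_le_mul_of_nonneg_left hA (by positivity)
  _ ≤ ((k:ℝ)/2)^(a+1) * (((k:ℝ)-1)/2)^(a^2) := hMID
  _ ≤ (K₂:ℝ)^(a+1) * (K₁:ℝ)^(a^2) := by
      apply mul_le_mul (pow_le_pow_left₀ hK2nn hK2R _) (pow_le_pow_left₀ hK1nn hK1R _)
        (by positivity) (by positivity)


/-- **Theorem (lower bound for independent neighborhoods).** Fix `r ≥ 3`. For all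
sufficiently large `k`, every `r`-graph with independent neighborhoods and at most
`k^(r + 1/(r-1)) / (40 r² 2^r)` edges has chromatic number at most `k`. -/
theorem indep_neighborhoods_lower_bound (r : ℕ) (hr : 3 ≤ r) :
    ∃ k₀ : ℕ, ∀ k : ℕ, k₀ ≤ k →
      ∀ (n : ℕ) (E : Finset (Finset (Fin n))), IsRGraph r E → ¬ HasFr r E →
        (E.card : ℝ) ≤ (1 / (40 * (r : ℝ) ^ 2 * 2 ^ r)) *
          (k : ℝ) ^ ((r : ℝ) + 1 / ((r : ℝ) - 1)) →
        HypColorable E k := by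
  classical
  refine ⟨2*r^2, fun k hk n E hE hFr hcard => ?_⟩
  have hr9 : 3^2 ≤ r^2 := Nat.pow_le_pow_left hr 2
  have hk18 : 18 ≤ k := by omega
  set K₁ := k / 2 with hK1def
  set K₂ := k - k / 2 with hK2def
  have hkK : K₁ + K₂ = k := by omega
  have hK₁1 : 1 ≤ K₁ := by omega
  obtain ⟨f₁, hf₁⟩ := exists_good_coloring hr hE K₁ hK₁1
  set M := E.filter (fun e => ∀ x ∈ e, ∀ y ∈ e, f₁ x = f₁ y) with hMdef
  set R := M.biUnion (fun e => e) with hRdef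
  have hRcard : R.card ≤ r * M.card := by
    calc R.card ≤ ∑ e ∈ M, e.card := Finset.card_biUnion_le
    _ = ∑ _e ∈ M, r := Finset.sum_congr rfl
        (fun e he => hE e (Finset.mem_filter.mp he).1)
    _ = M.card * r := by rw [Finset.sum_const, smul_eq_mul]
    _ = r * M.card := Nat.mul_comm _ _
  have harith : 4 * r^(2*r-1) * E.card^(r-1) ≤ K₂^r * K₁^((r-1)^2) :=
    main_arith r k E.card hr hk hcard
  have hRK : R.card * K₁^(r-1) ≤ r * E.card := by
    calc R.card * K₁^(r-1) ≤ (r * M.card) * K₁^(r-1) := Nat.mul_le_mul_right _ hRcard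
    _ = r * (K₁^(r-1) * M.card) := by ring
    _ ≤ r * E.card := Nat.mul_le_mul_left _ hf₁
  have hpeelhyp : 4 * r^r * R.card^(r-1) ≤ K₂^r := by
    have p1 : (R.card * K₁^(r-1))^(r-1) ≤ (r * E.card)^(r-1) :=
      Nat.pow_le_pow_left hRK _
    have p2 : (R.card * K₁^(r-1))^(r-1) = R.card^(r-1) * K₁^((r-1)^2) := by
      rw [mul_pow, ← pow_mul, show (r-1)*(r-1) = (r-1)^2 from (pow_two (r-1)).symm]
    have p3 : (r*E.card)^(r-1) = r^(r-1) * E.card^(r-1) := mul_pow _ _ _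
    have p4 : 4*r^r*(R.card^(r-1) * K₁^((r-1)^2)) ≤ 4*r^r*(r^(r-1) * E.card^(r-1)) := by
      apply Nat.mul_le_mul_left
      rw [← p2, ← p3]
      exact p1
    have p5 : 4*r^r*(r^(r-1) * E.card^(r-1)) = 4*r^(2*r-1)*E.card^(r-1) := by
      have e1 : r^r * r^(r-1) = r^(2*r-1) := by
        rw [← pow_add]
        congr 1
        omega
      calc 4*r^r*(r^(r-1) * E.card^(r-1)) = 4*(r^r * r^(r-1))*E.card^(r-1) := by ring
      _ = 4*r^(2*r-1)*E.card^(r-1) := by rw [e1]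
    have p6 : (4*r^r*R.card^(r-1)) * K₁^((r-1)^2) ≤ K₂^r * K₁^((r-1)^2) := by
      calc (4*r^r*R.card^(r-1)) * K₁^((r-1)^2)
          = 4*r^r*(R.card^(r-1) * K₁^((r-1)^2)) := by ring
      _ ≤ 4*r^r*(r^(r-1) * E.card^(r-1)) := p4
      _ = 4*r^(2*r-1)*E.card^(r-1) := p5
      _ ≤ K₂^r * K₁^((r-1)^2) := harith
    have hpos : 0 < K₁^((r-1)^2) := Nat.pow_pos (by omega)
    exact Nat.le_of_mul_le_mul_right p6 hpos
  obtain ⟨g, hg1, hg2⟩ := peel hr hE hFr K₂ R hpeelhyp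
  refine ⟨fun v => if hv : v ∈ R then
      ⟨K₁ + g v, by have := hg1 v hv; omega⟩
    else ⟨(f₁ v : ℕ), by have := (f₁ v).isLt; omega⟩, ?_⟩
  intro e heE hecard2
  by_cases hsub : e ⊆ R
  · obtain ⟨u, hu, v, hv, huv⟩ := hg2 e heE hsub
    refine ⟨u, hu, v, hv, ?_⟩
    simp only [dif_pos (hsub hu), dif_pos (hsub hv)]
    intro hEq
    apply huv
    have hval := congrArg Fin.val hEq
    simp only at hval
    omega
  · have hex : ∃ u ∈ e, u ∉ R := by
      by_contra hcon
      push_neg at hcon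
      exact hsub (fun u hu => hcon u hu)
    obtain ⟨u, hue, huR⟩ := hex
    by_cases hint : ∃ w ∈ e, w ∈ R
    · obtain ⟨w, hwe, hwR⟩ := hint
      refine ⟨u, hue, w, hwe, ?_⟩
      simp only [dif_neg huR, dif_pos hwR]
      intro hEq
      have hval := congrArg Fin.val hEq
      simp only at hval
      have := (f₁ u).isLt
      omega
    · push_neg at hint
      have hnm : ¬(∀ x ∈ e, ∀ y ∈ e, f₁ x = f₁ y) := by
        intro hmono
        have heM : e ∈ M := Finset.mem_filter.mpr ⟨heE, hmono⟩
        have hne : e.Nonempty := by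
          rw [← Finset.card_pos, hE e heE]
          omega
        obtain ⟨z, hz⟩ := hne
        have hzR : z ∈ R := Finset.mem_biUnion.mpr ⟨e, heM, hz⟩
        exact hint z hz hzR
      push_neg at hnm
      obtain ⟨x, hx, y, hy, hxy⟩ := hnm
      refine ⟨x, hx, y, hy, ?_⟩
      simp only [dif_neg (hint x hx), dif_neg (hint y hy)]
      intro hEq
      apply hxy
      have hval := congrArg Fin.val hEq
      simp only at hval
      exact Fin.val_injective hval
end

section
/- Let r ≥ 2 and let T be an r-tree with (r−1)t + 1 vertices (equivalently, with t edges). If G is an r-graph containing no (not necessarily induced) copy of T, then the chromatic number of G is at most 2(r−1)(t−1) + 1. -/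
/-- The hypergraph `E` contains a cycle: `t ≥ 2` distinct vertices `x₁, …, x_t` and `t`
distinct edges `E₁, …, E_t` with `{xᵢ, xᵢ₊₁} ⊆ Eᵢ` for each `i` (indices mod `t`). -/
def HasHypCycle {V : Type*} (E : Finset (Finset V)) : Prop :=
  ∃ t : ℕ, 2 ≤ t ∧ ∃ x : ZMod t → V, Function.Injective x ∧
    ∃ Ed : ZMod t → Finset V, Function.Injective Ed ∧
      ∀ i : ZMod t, Ed i ∈ E ∧ x i ∈ Ed i ∧ x (i + 1) ∈ Ed i

/-- The hypergraph `E` is connected: any two vertices are joined by a sequence of edges,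
consecutive ones intersecting. -/
def HypConnected {V : Type*} [DecidableEq V] (E : Finset (Finset V)) : Prop :=
  ∀ x y : V, ∃ (l : ℕ) (P : Fin (l + 1) → Finset V),
    (∀ i, P i ∈ E) ∧ x ∈ P 0 ∧ y ∈ P (Fin.last l) ∧
    ∀ i : Fin l, (P i.castSucc ∩ P i.succ).Nonempty

/-- `EG` contains a (not necessarily induced) copy of the hypergraph `EH`. -/
def HasCopy {W V : Type*} [DecidableEq V]
    (EH : Finset (Finset W)) (EG : Finset (Finset V)) : Prop :=
  ∃ g : W → V, Function.Injective g ∧ ∀ e ∈ EH, e.image g ∈ EG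


namespace TreeFreeAux

section PartW

variable {W : Type} [DecidableEq W]

set_option linter.unusedSectionVars false

def lunion (L : List (Finset W)) : Finset W := L.foldr (· ∪ ·) ∅

@[simp] lemma lunion_nil : lunion ([] : List (Finset W)) = ∅ := rfl

@[simp] lemma lunion_cons (E : Finset W) (L : List (Finset W)) :
    lunion (E :: L) = E ∪ lunion L := rfl

lemma mem_lunion {L : List (Finset W)} {a : W} :
    a ∈ lunion L ↔ ∃ E ∈ L, a ∈ E := by
  induction L with
  | nil => simp
  | cons E L ih => simp [ih]

def Linked (D : List (Finset W)) (u v : W) (p : ℕ) : Prop :=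
  ∃ (z : ℕ → W) (F : ℕ → Finset W), z 0 = u ∧ z p = v ∧
    ∀ j < p, F j ∈ D ∧ z j ∈ F j ∧ z (j + 1) ∈ F j

lemma linked_mono {D D' : List (Finset W)} (h : ∀ e ∈ D, e ∈ D') {u v : W} {p : ℕ}
    (hl : Linked D u v p) : Linked D' u v p := by
  obtain ⟨z, F, h0, hp, hs⟩ := hl
  exact ⟨z, F, h0, hp, fun j hj => ⟨h _ (hs j hj).1, (hs j hj).2.1, (hs j hj).2.2⟩⟩

lemma linked_symm {D : List (Finset W)} {u v : W} {p : ℕ}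
    (hl : Linked D u v p) : Linked D v u p := by
  obtain ⟨z, F, h0, hp, hs⟩ := hl
  refine ⟨fun j => z (p - j), fun j => F (p - 1 - j), by simp [hp], by simp [h0], ?_⟩
  intro j hj
  have h1 : p - 1 - j < p := by omega
  have h2 : p - j = (p - 1 - j) + 1 := by omega
  have h3 : p - (j + 1) = p - 1 - j := by omega
  refine ⟨(hs _ h1).1, ?_, ?_⟩
  · show z (p - j) ∈ F (p - 1 - j); rw [h2]; exact (hs _ h1).2.2
  · show z (p - (j+1)) ∈ F (p - 1 - j); rw [h3]; exact (hs _ h1).2.1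

lemma linked_prepend {D : List (Finset W)} {e : Finset W} {u w v : W} {p : ℕ}
    (he : e ∈ D) (hu : u ∈ e) (hw : w ∈ e) (hl : Linked D w v p) :
    Linked D u v (p + 1) := by
  obtain ⟨z, F, h0, hp, hs⟩ := hl
  refine ⟨fun j => if j = 0 then u else z (j - 1), fun j => if j = 0 then e else F (j - 1),
    by simp, by simp [hp], ?_⟩
  intro j hj
  rcases Nat.eq_zero_or_pos j with rfl | hjpos
  · simpa [h0] using ⟨he, hu, hw⟩
  · have hj1 : j - 1 < p := by omega
    have e1 : j ≠ 0 := by omega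
    have e2 : j + 1 ≠ 0 := by omega
    have e3 : j + 1 - 1 = (j - 1) + 1 := by omega
    simp only [e1, e2, if_false, e3]
    exact hs _ hj1

/-- In a "connectedly ordered" list of edges, any two covered vertices are linked. -/
lemma linked_exists {L : List (Finset W)}
    (hpre : ∀ pre E suf, L = pre ++ E :: suf → suf ≠ [] → (E ∩ lunion suf).Nonempty)
    {u v : W} (hu : u ∈ lunion L) (hv : v ∈ lunion L) :
    ∃ p, Linked L u v p := by
  induction L generalizing u v with
  | nil => simp at hu
  | cons E L ih =>
    have hpre' : ∀ pre E' suf, L = pre ++ E' :: suf → suf ≠ [] →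
        (E' ∩ lunion suf).Nonempty := by
      intro pre E' suf h hs
      exact hpre (E :: pre) E' suf (by simp [h]) hs
    have hmono : ∀ e ∈ L, e ∈ E :: L := fun e he => List.mem_cons_of_mem _ he
    have key : ∀ a, a ∈ E → ∀ b, b ∈ lunion L → ∃ p, Linked (E :: L) a b p := by
      intro a ha b hb
      have hLne : L ≠ [] := by
        rintro rfl; simp at hb
      obtain ⟨w, hw⟩ := hpre [] E L rfl hLne
      obtain ⟨p, hp⟩ := ih hpre' (Finset.mem_of_mem_inter_right hw) hb
      exact ⟨p + 1, linked_prepend (List.mem_cons_self) ha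
        (Finset.mem_of_mem_inter_left hw) (linked_mono hmono hp)⟩
    simp only [lunion_cons, Finset.mem_union] at hu hv
    rcases hu with hu | hu <;> rcases hv with hv | hv
    · refine ⟨1, fun j => if j = 0 then u else v, fun _ => E, by simp, by simp, ?_⟩
      intro j hj
      have hj0 : j = 0 := by omega
      subst hj0
      exact ⟨List.mem_cons_self, by simpa using hu, by simpa using hv⟩
    · exact key u hu v hv
    · obtain ⟨p, hp⟩ := key v hv u hu
      exact ⟨p, linked_symm hp⟩
    · obtain ⟨p, hp⟩ := ih hpre' hu hv
      exact ⟨p, linked_mono hmono hp⟩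

/-- A minimal linkage has distinct vertices and distinct edges. -/
lemma exists_simple_linked {D : List (Finset W)} {u v : W} (hne : u ≠ v)
    (h : ∃ p, Linked D u v p) :
    ∃ p : ℕ, ∃ z : ℕ → W, ∃ F : ℕ → Finset W, 1 ≤ p ∧ z 0 = u ∧ z p = v ∧
      (∀ j < p, F j ∈ D ∧ z j ∈ F j ∧ z (j + 1) ∈ F j) ∧
      (∀ a ≤ p, ∀ b ≤ p, z a = z b → a = b) ∧
      (∀ a < p, ∀ b < p, F a = F b → a = b) := by
  classical
  let p := Nat.find h
  obtain ⟨z, F, h0, hp, hs⟩ : Linked D u v p := Nat.find_spec h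
  have hmin : ∀ q < p, ¬ Linked D u v q := fun q hq => Nat.find_min h hq
  have hp1 : 1 ≤ p := by
    rcases Nat.eq_zero_or_pos p with h0' | h' 
    · exfalso; apply hne; rw [← h0, ← hp, h0']
    · exact h'
  refine ⟨p, z, F, hp1, h0, hp, hs, ?_, ?_⟩
  · -- distinct vertices
    intro a ha b hb hab
    by_contra hne'
    -- wlog a < b
    rcases Nat.lt_or_ge a b with hlt | hge
    · -- construct shorter linkage
      rcases Nat.eq_or_lt_of_le hb with rfl | hbp
      · -- b = p : truncate at a
        exact hmin a hlt ⟨z, F, h0, by rw [hab, hp], fun j hj => hs j (by omega)⟩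
      · set d := b - a with hd
        have hd1 : 1 ≤ d := by omega
        apply hmin (p - d) (by omega)
        refine ⟨fun j => if j ≤ a then z j else z (j + d), fun j => if j < a then F j
          else F (j + d), by simp [h0], ?_, ?_⟩
        · have : ¬ (p - d ≤ a) := by omega
          simp only [this, if_false]
          have : p - d + d = p := by omega
          rw [this, hp]
        · intro j hj
          rcases Nat.lt_trichotomy j a with hja | rfl | hja
          · have e1 : j ≤ a := by omega
            have e2 : j + 1 ≤ a := by omega
            simp only [hja, if_pos, e1, e2, if_true]
            exact hs j (by omega)
          · have e1 : ¬ (j < j) := by omega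
            have e2 : ¬ (j + 1 ≤ j) := by omega
            have e3 : j + d = b := by omega
            have e4 : j + 1 + d = b + 1 := by omega
            simp only [e1, if_false, le_refl, if_true, e2, e3, e4]
            rw [hab]
            exact hs b (by omega)
          · have e1 : ¬ (j < a) := by omega
            have e2 : ¬ (j ≤ a) := by omega
            have e3 : ¬ (j + 1 ≤ a) := by omega
            have e4 : j + 1 + d = j + d + 1 := by omega
            simp only [e1, e2, e3, if_false, e4]
            exact hs (j + d) (by omega)
    · -- symmetric: b < a
      have hlt : b < a := by omega
      rcases Nat.eq_or_lt_of_le ha with rfl | hbp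
      · exact hmin b hlt ⟨z, F, h0, by rw [← hab, hp], fun j hj => hs j (by omega)⟩
      · set d := a - b with hd
        have hd1 : 1 ≤ d := by omega
        apply hmin (p - d) (by omega)
        refine ⟨fun j => if j ≤ b then z j else z (j + d), fun j => if j < b then F j
          else F (j + d), by simp [h0], ?_, ?_⟩
        · have : ¬ (p - d ≤ b) := by omega
          simp only [this, if_false]
          have : p - d + d = p := by omega
          rw [this, hp]
        · intro j hj
          rcases Nat.lt_trichotomy j b with hja | rfl | hja
          · have e1 : j ≤ b := by omega
            have e2 : j + 1 ≤ b := by omega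
            simp only [hja, if_pos, e1, e2, if_true]
            exact hs j (by omega)
          · have e1 : ¬ (j < j) := by omega
            have e2 : ¬ (j + 1 ≤ j) := by omega
            have e3 : j + d = a := by omega
            have e4 : j + 1 + d = a + 1 := by omega
            simp only [e1, if_false, le_refl, if_true, e2, e3, e4]
            rw [← hab]
            exact hs a (by omega)
          · have e1 : ¬ (j < b) := by omega
            have e2 : ¬ (j ≤ b) := by omega
            have e3 : ¬ (j + 1 ≤ b) := by omega
            have e4 : j + 1 + d = j + d + 1 := by omega
            simp only [e1, e2, e3, if_false, e4]
            exact hs (j + d) (by omega)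
  · -- distinct edges
    intro a ha b hb hab
    by_contra hne'
    have hwlog : ∀ a b, a < p → b < p → F a = F b → a < b → False := by
      intro a b ha hb hab hlt
      set d := b - a with hd
      have hd1 : 1 ≤ d := by omega
      apply hmin (p - d) (by omega)
      refine ⟨fun j => if j ≤ a then z j else z (j + d), fun j => if j ≤ a then F j
        else F (j + d), by simp [h0], ?_, ?_⟩
      · have h5 : ¬ (p - d ≤ a) := by omega
        simp only [h5, if_false]
        have : p - d + d = p := by omega
        rw [this, hp]
      · intro j hj
        rcases Nat.lt_trichotomy j a with hja | rfl | hja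
        · have e1 : j ≤ a := by omega
          have e2 : j + 1 ≤ a := by omega
          simp only [e1, e2, if_true]
          exact hs j (by omega)
        · have e2 : ¬ (j + 1 ≤ j) := by omega
          have e4 : j + 1 + d = b + 1 := by omega
          simp only [le_refl, if_true, e2, if_false, e4]
          refine ⟨(hs j (by omega)).1, (hs j (by omega)).2.1, ?_⟩
          rw [hab]
          exact (hs b hb).2.2
        · have e2 : ¬ (j ≤ a) := by omega
          have e3 : ¬ (j + 1 ≤ a) := by omega
          have e4 : j + 1 + d = j + d + 1 := by omega
          simp only [e2, e3, if_false, e4]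
          exact hs (j + d) (by omega)
    rcases Nat.lt_trichotomy a b with hlt | rfl | hlt
    · exact hwlog a b ha hb hab hlt
    · exact hne' rfl
    · exact hwlog b a hb ha hab.symm hlt


lemma cycle_of_double {ET : Finset (Finset W)} {L : List (Finset W)}
    (hsub : ∀ F ∈ L, F ∈ ET) {E : Finset W} (hE : E ∈ ET) (hEnot : E ∉ L)
    {x y : W} (hxy : x ≠ y) (hx : x ∈ E) (hy : y ∈ E)
    (hlink : ∃ p, Linked L x y p) : HasHypCycle ET := by
  obtain ⟨p, z, F, hp1, h0, hp, hs, hzinj, hFinj⟩ := exists_simple_linked hxy hlink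
  have hn : 2 ≤ p + 1 := by omega
  haveI : NeZero (p + 1) := ⟨p.succ_ne_zero⟩
  refine ⟨p + 1, hn, fun i => z i.val, ?_, fun i => if i.val < p then F i.val else E, ?_, ?_⟩
  · intro i j hij
    have hi : i.val ≤ p := by have := ZMod.val_lt i; omega
    have hj : j.val ≤ p := by have := ZMod.val_lt j; omega
    exact ZMod.val_injective _ (hzinj _ hi _ hj hij)
  · intro i j hij
    have hi : i.val ≤ p := by have := ZMod.val_lt i; omega
    have hj : j.val ≤ p := by have := ZMod.val_lt j; omega
    simp only at hij
    rcases Nat.lt_or_ge i.val p with h1 | h1 <;> rcases Nat.lt_or_ge j.val p with h2 | h2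
    · rw [if_pos h1, if_pos h2] at hij
      exact ZMod.val_injective _ (hFinj _ h1 _ h2 hij)
    · rw [if_pos h1, if_neg (by omega)] at hij
      exact absurd (hij ▸ (hs _ h1).1) hEnot
    · rw [if_neg (by omega), if_pos h2] at hij
      refine absurd ?_ hEnot
      rw [hij]
      exact (hs _ h2).1
    · have : i.val = j.val := by omega
      exact ZMod.val_injective _ this
  · intro i
    have hi : i.val ≤ p := by have := ZMod.val_lt i; omega
    rcases Nat.lt_or_ge i.val p with h1 | h1
    · have hv : (i + 1).val = i.val + 1 := by
        have : i + 1 = ((i.val + 1 : ℕ) : ZMod (p + 1)) := by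
          push_cast [ZMod.natCast_zmod_val]; ring
        rw [this, ZMod.val_cast_of_lt (by omega)]
      simp only [if_pos h1, hv]
      exact ⟨hsub _ (hs _ h1).1, (hs _ h1).2.1, (hs _ h1).2.2⟩
    · have hip : i.val = p := by omega
      have hi0 : i + 1 = 0 := by
        have h2 : ((i.val : ℕ) : ZMod (p + 1)) = ((p : ℕ) : ZMod (p + 1)) := by rw [hip]
        have h3 : i = ((p : ℕ) : ZMod (p + 1)) := (ZMod.natCast_zmod_val i).symm.trans h2
        rw [h3, ← Nat.cast_add_one, ZMod.natCast_self]
      have e1 : (if i.val < p then F i.val else E) = E := if_neg (by omega)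
      refine ⟨?_, ?_, ?_⟩
      · show (if i.val < p then F i.val else E) ∈ ET
        rw [e1]; exact hE
      · show z i.val ∈ (if i.val < p then F i.val else E)
        rw [e1, hip, hp]; exact hy
      · show z (i + 1).val ∈ (if i.val < p then F i.val else E)
        rw [e1, hi0, ZMod.val_zero, h0]; exact hx


/-- connectivity step: a new edge touching the current union can be found. -/
lemma conn_step {ET : Finset (Finset W)} (hconn : HypConnected ET)
    (hEne : ∀ E ∈ ET, E.Nonempty)
    {L : List (Finset W)} (hmem : ∀ E ∈ L, E ∈ ET) (hLne : L ≠ [])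
    {E' : Finset W} (hE' : E' ∈ ET) (hE'not : E' ∉ L) :
    ∃ E ∈ ET, E ∉ L ∧ (E ∩ lunion L).Nonempty := by
  by_contra hcon
  push_neg at hcon
  have habs : ∀ Q ∈ ET, (Q ∩ lunion L).Nonempty → Q ⊆ lunion L := by
    intro Q hQ hQne
    by_cases hQL : Q ∈ L
    · intro a ha; exact mem_lunion.2 ⟨Q, hQL, ha⟩
    · exact absurd hQne (Finset.not_nonempty_iff_eq_empty.2 (hcon Q hQ hQL))
  -- pick x in lunion L
  obtain ⟨Eh, L', rfl⟩ := List.exists_cons_of_ne_nil hLne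
  obtain ⟨x, hx⟩ := hEne Eh (hmem Eh (List.mem_cons_self))
  have hxL : x ∈ lunion (Eh :: L') := mem_lunion.2 ⟨Eh, List.mem_cons_self, hx⟩
  obtain ⟨y, hy⟩ := hEne E' hE'
  have hyL : y ∉ lunion (Eh :: L') := by
    intro hyl
    exact Finset.not_nonempty_iff_eq_empty.2 (hcon E' hE' hE'not) ⟨y, Finset.mem_inter.2 ⟨hy, hyl⟩⟩
  obtain ⟨l, P, hPmem, hP0, hPl, hPadj⟩ := hconn x y
  have key : ∀ i : ℕ, ∀ h : i < l + 1, P ⟨i, h⟩ ⊆ lunion (Eh :: L') := by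
    intro i
    induction i with
    | zero =>
      intro h
      exact habs _ (hPmem _) ⟨x, Finset.mem_inter.2 ⟨hP0, hxL⟩⟩
    | succ i ih =>
      intro h
      have hi : i < l + 1 := by omega
      have hil : i < l := by omega
      obtain ⟨w, hw⟩ := hPadj ⟨i, hil⟩
      have hcs : (⟨i, hil⟩ : Fin l).castSucc = (⟨i, hi⟩ : Fin (l + 1)) := rfl
      have hsc : (⟨i, hil⟩ : Fin l).succ = (⟨i + 1, h⟩ : Fin (l + 1)) := rfl
      rw [hcs, hsc] at hw
      have hw1 : w ∈ P ⟨i, hi⟩ := Finset.mem_of_mem_inter_left hw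
      have hw2 : w ∈ P ⟨i + 1, h⟩ := Finset.mem_of_mem_inter_right hw
      exact habs _ (hPmem _) ⟨w, Finset.mem_inter.2 ⟨hw2, ih hi hw1⟩⟩
  have : y ∈ lunion (Eh :: L') := key l (by omega) (by
    have : Fin.last l = ⟨l, by omega⟩ := rfl
    rw [← this]; exact hPl)
  exact hyL this

lemma build_order {r : ℕ} {ET : Finset (Finset W)} (hr : 2 ≤ r) (hTr : IsRGraph r ET)
    (hconn : HypConnected ET) (hforest : ¬ HasHypCycle ET) (hne : ET.Nonempty) :
    ∃ L : List (Finset W), L ≠ [] ∧ L.Nodup ∧ (∀ E, E ∈ L ↔ E ∈ ET) ∧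
      (∀ pre E suf, L = pre ++ E :: suf → suf ≠ [] → (E ∩ lunion suf).card = 1) := by
  have hEne : ∀ E ∈ ET, E.Nonempty := by
    intro E hE
    rw [← Finset.card_pos, hTr E hE]
    omega
  have main : ∀ n : ℕ, ∀ L : List (Finset W), L ≠ [] → L.Nodup → (∀ E ∈ L, E ∈ ET) →
      (∀ pre E suf, L = pre ++ E :: suf → suf ≠ [] → (E ∩ lunion suf).card = 1) →
      ET.card ≤ L.length + n →
      ∃ L' : List (Finset W), L' ≠ [] ∧ L'.Nodup ∧ (∀ E, E ∈ L' ↔ E ∈ ET) ∧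
        (∀ pre E suf, L' = pre ++ E :: suf → suf ≠ [] → (E ∩ lunion suf).card = 1) := by
    intro n
    induction n with
    | zero =>
      intro L hLne hNd hmem hR1 hcard
      refine ⟨L, hLne, hNd, fun E => ⟨fun h => hmem E h, fun h => ?_⟩, hR1⟩
      have hsub : L.toFinset ⊆ ET := fun E hE => hmem E (List.mem_toFinset.1 hE)
      have hcard2 : ET.card ≤ L.toFinset.card := by
        rw [List.toFinset_card_of_nodup hNd]; omega
      have := Finset.eq_of_subset_of_card_le hsub hcard2
      rw [← this] at h
      exact List.mem_toFinset.1 h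
    | succ n ih =>
      intro L hLne hNd hmem hR1 hcard
      by_cases hall : ∃ E' ∈ ET, E' ∉ L
      · obtain ⟨E', hE', hE'not⟩ := hall
        obtain ⟨E, hE, hEnot, hEint⟩ := conn_step hconn hEne hmem hLne hE' hE'not
        -- the intersection has exactly one element, else a cycle
        have hpre : ∀ pre E₀ suf, L = pre ++ E₀ :: suf → suf ≠ [] →
            (E₀ ∩ lunion suf).Nonempty := by
          intro pre E₀ suf h hs
          rw [← Finset.card_pos, hR1 pre E₀ suf h hs]
          omega
        have hcard1 : (E ∩ lunion L).card = 1 := by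
          rcases Nat.lt_or_ge (E ∩ lunion L).card 2 with h2 | h2
          · have := Finset.card_pos.2 hEint; omega
          · exfalso
            obtain ⟨a, ha, b, hb, hab⟩ := Finset.one_lt_card.1 h2
            refine hforest (cycle_of_double hmem hE hEnot hab
              (Finset.mem_of_mem_inter_left ha) (Finset.mem_of_mem_inter_left hb)
              (linked_exists hpre (Finset.mem_of_mem_inter_right ha)
                (Finset.mem_of_mem_inter_right hb)))
        -- extend
        refine ih (E :: L) (by simp) (List.nodup_cons.2 ⟨hEnot, hNd⟩)
          (by intro F hF; rcases List.mem_cons.1 hF with rfl | h; exact hE; exact hmem F h)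
          ?_ ?_
        · intro pre E₀ suf h hs
          cases pre with
          | nil =>
            simp only [List.nil_append, List.cons.injEq] at h
            obtain ⟨rfl, rfl⟩ := h
            exact hcard1
          | cons a pre' =>
            simp only [List.cons_append, List.cons.injEq] at h
            exact hR1 pre' E₀ suf h.2 hs
        · simp only [List.length_cons]; omega
      · push_neg at hall
        refine ⟨L, hLne, hNd, fun E => ⟨fun h => hmem E h, fun h => hall E h⟩, hR1⟩
  obtain ⟨E0, hE0⟩ := hne
  refine main ET.card [E0] (by simp) (by simp) (by simpa using hE0) ?_ (by simp)
  intro pre E suf h hs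
  cases pre with
  | nil =>
    simp only [List.nil_append, List.cons.injEq] at h
    exact absurd h.2.symm hs
  | cons a pre' =>
    simp only [List.cons_append, List.cons.injEq] at h
    exact absurd h.2 (by simp)


lemma card_lunion {r : ℕ} (hr : 1 ≤ r) :
    ∀ L : List (Finset W), (∀ E ∈ L, E.card = r) →
    (∀ pre E suf, L = pre ++ E :: suf → suf ≠ [] → (E ∩ lunion suf).card = 1) →
    L ≠ [] → (lunion L).card = (r - 1) * L.length + 1 := by
  intro L
  induction L with
  | nil => intro _ _ h; exact absurd rfl h
  | cons E L' ih =>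
    intro hcards hR1 _
    rcases eq_or_ne L' [] with rfl | hL'
    · simp only [lunion_cons, lunion_nil, Finset.union_empty, List.length_cons,
        List.length_nil]
      rw [hcards E (List.mem_cons_self)]
      omega
    · have h1 : (E ∩ lunion L').card = 1 := hR1 [] E L' rfl hL'
      have h2 : (lunion L').card = (r - 1) * L'.length + 1 :=
        ih (fun F hF => hcards F (List.mem_cons_of_mem _ hF))
          (fun pre E₀ suf h hs => hR1 (E :: pre) E₀ suf (by simp [h]) hs) hL'
      have h3 : (E ∪ lunion L').card + (E ∩ lunion L').card = E.card + (lunion L').card :=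
        Finset.card_union_add_card_inter _ _
      rw [h1, h2, hcards E (List.mem_cons_self)] at h3
      simp only [lunion_cons, List.length_cons]
      have : (r - 1) * (L'.length + 1) = (r - 1) * L'.length + (r - 1) := by ring
      omega


end PartW

section PartWV

variable {W V : Type} [Fintype W] [DecidableEq W] [DecidableEq V]

set_option linter.unusedSectionVars false

lemma degeneracy (r t : ℕ) (hr : 2 ≤ r) (ht : 1 ≤ t)
    (ET : Finset (Finset W)) (hTr : IsRGraph r ET)
    (hWcard : Fintype.card W = (r - 1) * t + 1)
    (hconn : HypConnected ET) (hforest : ¬ HasHypCycle ET)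
    (EG : Finset (Finset V)) (hGr : IsRGraph r EG)
    (hfree : ¬ HasCopy ET EG) (U : Finset V) (hUne : U.Nonempty) :
    ∃ x ∈ U, ∃ C : Finset V, C ⊆ U ∧ x ∉ C ∧ C.card ≤ (r - 1) * (t - 1) ∧
      ∀ e ∈ EG, e ⊆ U → x ∈ e → (e ∩ C).Nonempty := by
  by_contra hcon
  push_neg at hcon
  -- extension property
  have hext : ∀ x ∈ U, ∀ C : Finset V, C ⊆ U → x ∉ C → C.card ≤ (r - 1) * (t - 1) →
      ∃ e ∈ EG, e ⊆ U ∧ x ∈ e ∧ e ∩ C = ∅ := by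
    intro x hx C h1 h2 h3
    obtain ⟨e, he, h4, h5, h6⟩ := hcon x hx C h1 h2 h3
    exact ⟨e, he, h4, h5, h6⟩
  -- W is nonempty, ET is nonempty
  have hWne : Nonempty W := by
    rw [← Fintype.card_pos_iff, hWcard]; omega
  obtain ⟨w0⟩ := hWne
  have hTne : ET.Nonempty := by
    obtain ⟨l, P, hP, h0, -⟩ := hconn w0 w0
    exact ⟨P 0, hP 0⟩
  obtain ⟨L, hLne, hNd, hmemiff, hR1⟩ := build_order hr hTr hconn hforest hTne
  have hcover : lunion L = (Finset.univ : Finset W) := by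
    apply Finset.eq_univ_of_forall
    intro w
    obtain ⟨l, P, hP, h0, -⟩ := hconn w w
    exact mem_lunion.2 ⟨P 0, (hmemiff (P 0)).2 (hP 0), h0⟩
  have hLcards : ∀ E ∈ L, E.card = r := fun E hE => hTr E ((hmemiff E).1 hE)
  have hLcard : (lunion L).card = (r - 1) * L.length + 1 :=
    card_lunion (by omega) L hLcards hR1 hLne
  have hLlen : L.length = t := by
    rw [hcover] at hLcard
    rw [← Finset.card_univ] at hWcard
    have h1 : (r - 1) * L.length = (r - 1) * t := by omega
    have hr1 : r - 1 ≠ 0 := by omega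
    exact Nat.eq_of_mul_eq_mul_left (by omega) h1
  -- the embedding, by induction on suffixes of L
  have emb : ∀ S : List (Finset W), S ≠ [] → (∃ pre, L = pre ++ S) →
      ∃ g : W → V, Set.InjOn g ↑(lunion S) ∧ (∀ E ∈ S, E.image g ∈ EG) ∧
        ∀ w ∈ lunion S, g w ∈ U := by
    intro S
    induction S with
    | nil => intro h; exact absurd rfl h
    | cons E S' ih =>
      intro _ hsuf
      obtain ⟨pre, hpre⟩ := hsuf
      have hEL : E ∈ L := by rw [hpre]; simp
      have hEcard : E.card = r := hLcards E hEL
      rcases eq_or_ne S' [] with rfl | hS'ne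
      · -- base case : embed a single edge
        obtain ⟨x0, hx0⟩ := hUne
        obtain ⟨e, he, heU, -, -⟩ := hext x0 hx0 ∅ (Finset.empty_subset _)
          (Finset.notMem_empty _) (by simp)
        have hecard : E.card = e.card := by rw [hEcard, hGr e he]
        set eqv := Finset.equivOfCardEq hecard with heqv
        set gb : W → V := fun w => if hw : w ∈ E then (eqv ⟨w, hw⟩ : V) else x0 with hgb
        have hgbE : ∀ a (ha : a ∈ E), gb a = (eqv ⟨a, ha⟩ : V) := by
          intro a ha
          simp only [hgb, dif_pos ha]
        have hinj : Set.InjOn gb ↑E := by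
          intro a ha b hb hab
          rw [Finset.mem_coe] at ha hb
          rw [hgbE a ha, hgbE b hb] at hab
          have := eqv.injective (Subtype.ext hab)
          exact congrArg Subtype.val this
        refine ⟨gb, ?_, ?_, ?_⟩
        · intro a ha b hb hab
          simp only [lunion_cons, lunion_nil, Finset.union_empty] at ha hb
          exact hinj ha hb hab
        · intro F hF
          simp only [List.mem_singleton] at hF
          subst hF
          have hsub : F.image gb ⊆ e := by
            intro v hv
            obtain ⟨a, ha, rfl⟩ := Finset.mem_image.1 hv
            rw [hgbE a ha]
            exact (eqv ⟨a, ha⟩).2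
          have hcard : (F.image gb).card = e.card := by
            rw [Finset.card_image_of_injOn hinj, ← hecard]
          exact (Finset.eq_of_subset_of_card_le hsub (le_of_eq hcard.symm)) ▸ he
        · intro w hw
          simp only [lunion_cons, lunion_nil, Finset.union_empty] at hw
          rw [hgbE w hw]
          exact heU (eqv ⟨w, hw⟩).2
      · -- inductive step
        obtain ⟨g, hginj, hgedges, hgU⟩ := ih hS'ne ⟨pre ++ [E], by rw [hpre]; simp⟩
        have hcard1 : (E ∩ lunion S').card = 1 := hR1 pre E S' hpre hS'ne
        obtain ⟨w, hw⟩ := Finset.card_eq_one.1 hcard1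
        have hwE : w ∈ E := by
          have : w ∈ E ∩ lunion S' := hw ▸ Finset.mem_singleton_self w
          exact Finset.mem_of_mem_inter_left this
        have hwS' : w ∈ lunion S' := by
          have : w ∈ E ∩ lunion S' := hw ▸ Finset.mem_singleton_self w
          exact Finset.mem_of_mem_inter_right this
        set x := g w with hx
        have hxU : x ∈ U := hgU w hwS'
        set Img := (lunion S').image g with hImg
        have hImgU : Img ⊆ U := by
          intro v hv
          obtain ⟨a, ha, rfl⟩ := Finset.mem_image.1 hv
          exact hgU a ha
        have hxImg : x ∈ Img := Finset.mem_image_of_mem g hwS'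
        set C := Img.erase x with hC
        have hCcard : C.card ≤ (r - 1) * (t - 1) := by
          have h1 : Img.card = (lunion S').card := Finset.card_image_of_injOn hginj
          have h2 : (lunion S').card = (r - 1) * S'.length + 1 :=
            card_lunion (by omega) S' (fun F hF => hLcards F (by rw [hpre]; simp [hF]))
              (fun pre₀ E₀ suf₀ h hs => hR1 (pre ++ E :: pre₀) E₀ suf₀
                (by rw [hpre, h]; simp) hs) hS'ne
          have h3 : S'.length ≤ t - 1 := by
            have : L.length = pre.length + 1 + S'.length := by rw [hpre]; simp; omega
            omega
          have h4 : C.card = Img.card - 1 := Finset.card_erase_of_mem hxImg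
          have h5 : (r - 1) * S'.length ≤ (r - 1) * (t - 1) := Nat.mul_le_mul_left _ h3
          omega
        obtain ⟨e, he, heU, hxe, hint⟩ := hext x hxU C (fun v hv =>
          hImgU (Finset.mem_of_mem_erase hv)) (Finset.notMem_erase _ _) hCcard
        have hkey : ∀ y ∈ e, y ∈ Img → y = x := by
          intro y hy hyImg
          by_contra hyx
          have : y ∈ e ∩ C := Finset.mem_inter.2 ⟨hy, Finset.mem_erase.2 ⟨hyx, hyImg⟩⟩
          rw [hint] at this
          exact absurd this (Finset.notMem_empty _)
        have hc2 : (E.erase w).card = (e.erase x).card := by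
          rw [Finset.card_erase_of_mem hwE, Finset.card_erase_of_mem hxe, hEcard, hGr e he]
        set eqv := Finset.equivOfCardEq hc2 with heqv
        set g' : W → V := fun a => if ha : a ∈ E.erase w then (eqv ⟨a, ha⟩ : V) else g a
          with hg'
        have hdisj : ∀ a ∈ E.erase w, a ∉ lunion S' := by
          intro a ha hal
          have haE : a ∈ E := Finset.mem_of_mem_erase ha
          have : a ∈ E ∩ lunion S' := Finset.mem_inter.2 ⟨haE, hal⟩
          rw [hw] at this
          exact absurd (Finset.mem_singleton.1 this) (Finset.ne_of_mem_erase ha)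
        have k1 : ∀ a ∈ lunion S', g' a = g a := by
          intro a ha
          have : a ∉ E.erase w := fun h => hdisj a h ha
          simp only [hg', dif_neg this]
        have k2 : ∀ a (ha : a ∈ E.erase w), g' a ∈ e.erase x := by
          intro a ha
          simp only [hg', dif_pos ha]
          exact (eqv ⟨a, ha⟩).2
        have k3 : g' w = x := by
          have : w ∉ E.erase w := Finset.notMem_erase _ _
          simp only [hg', dif_neg this, hx]
        have zone : ∀ a ∈ E ∪ lunion S', a ∈ E.erase w ∨ a ∈ lunion S' := by
          intro a ha
          rcases Finset.mem_union.1 ha with ha | ha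
          · rcases eq_or_ne a w with rfl | haw
            · exact Or.inr hwS'
            · exact Or.inl (Finset.mem_erase.2 ⟨haw, ha⟩)
          · exact Or.inr ha
        have hinj' : Set.InjOn g' ↑(lunion (E :: S')) := by
          intro a ha b hb hab
          rw [lunion_cons, Finset.coe_union] at ha hb
          have ha' : a ∈ E ∪ lunion S' := by
            rcases ha with h | h
            · exact Finset.mem_union_left _ (by exact_mod_cast h)
            · exact Finset.mem_union_right _ (by exact_mod_cast h)
          have hb' : b ∈ E ∪ lunion S' := by
            rcases hb with h | h
            · exact Finset.mem_union_left _ (by exact_mod_cast h)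
            · exact Finset.mem_union_right _ (by exact_mod_cast h)
          rcases zone a ha' with hza | hza <;> rcases zone b hb' with hzb | hzb
          · have : eqv ⟨a, hza⟩ = eqv ⟨b, hzb⟩ := by
              apply Subtype.ext
              simpa only [hg', dif_pos hza, dif_pos hzb] using hab
            have := eqv.injective this
            exact congrArg Subtype.val this
          · exfalso
            have h1 : g' a ∈ e.erase x := k2 a hza
            have h2 : g' b ∈ Img := by
              rw [k1 b hzb]
              exact Finset.mem_image_of_mem g hzb
            rw [hab] at h1
            have := hkey (g' b) (Finset.mem_of_mem_erase h1) h2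
            exact Finset.ne_of_mem_erase h1 this
          · exfalso
            have h1 : g' b ∈ e.erase x := k2 b hzb
            have h2 : g' a ∈ Img := by
              rw [k1 a hza]
              exact Finset.mem_image_of_mem g hza
            rw [← hab] at h1
            have := hkey (g' a) (Finset.mem_of_mem_erase h1) h2
            exact Finset.ne_of_mem_erase h1 this
          · rw [k1 a hza, k1 b hzb] at hab
            exact hginj (Finset.mem_coe.2 hza) (Finset.mem_coe.2 hzb) hab
        refine ⟨g', hinj', ?_, ?_⟩
        · intro F hF
          rcases List.mem_cons.1 hF with rfl | hF'
          · -- F = E maps to e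
            have himg : (F.erase w).image g' = e.erase x := by
              apply Finset.eq_of_subset_of_card_le
              · intro v hv
                obtain ⟨a, ha, rfl⟩ := Finset.mem_image.1 hv
                exact k2 a ha
              · have hinjE : Set.InjOn g' ↑(F.erase w) := by
                  intro a ha b hb hab
                  rw [Finset.mem_coe] at ha hb
                  have : eqv ⟨a, ha⟩ = eqv ⟨b, hb⟩ := by
                    apply Subtype.ext
                    simpa only [hg', dif_pos ha, dif_pos hb] using hab
                  exact congrArg Subtype.val (eqv.injective this)
                rw [Finset.card_image_of_injOn hinjE, hc2]
            have : F = insert w (F.erase w) := (Finset.insert_erase hwE).symm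
            rw [this, Finset.image_insert, himg, k3, Finset.insert_erase hxe]
            exact he
          · have : F.image g' = F.image g := by
              apply Finset.image_congr
              intro a ha
              rw [Finset.mem_coe] at ha
              exact k1 a (mem_lunion.2 ⟨F, hF', ha⟩)
            rw [this]
            exact hgedges F hF'
        · intro a ha
          rw [lunion_cons] at ha
          rcases zone a ha with hza | hza
          · exact heU (Finset.mem_of_mem_erase (k2 a hza))
          · rw [k1 a hza]
            exact hgU a hza
  -- conclude : a copy of T in G
  obtain ⟨g, hginj, hgedges, -⟩ := emb L hLne ⟨[], rfl⟩
  apply hfree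
  refine ⟨g, ?_, fun E hE => hgedges E ((hmemiff E).2 hE)⟩
  rw [hcover] at hginj
  intro a b hab
  exact hginj (by simp) (by simp) hab


end PartWV

section PartV

variable {V : Type} [DecidableEq V]

set_option linter.unusedSectionVars false

lemma coloring_of_degenerate (EG : Finset (Finset V)) (k : ℕ)
    (hdeg : ∀ U : Finset V, U.Nonempty → ∃ x ∈ U, ∃ C : Finset V, C ⊆ U ∧ x ∉ C ∧
      C.card ≤ k ∧ ∀ e ∈ EG, e ⊆ U → x ∈ e → (e ∩ C).Nonempty) :
    ∀ U : Finset V, ∃ f : V → Fin (k + 1),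
      ∀ e ∈ EG, e ⊆ U → e.Nonempty → ∃ u ∈ e, ∃ v ∈ e, f u ≠ f v := by
  have main : ∀ n : ℕ, ∀ U : Finset V, U.card ≤ n → ∃ f : V → Fin (k + 1),
      ∀ e ∈ EG, e ⊆ U → e.Nonempty → ∃ u ∈ e, ∃ v ∈ e, f u ≠ f v := by
    intro n
    induction n with
    | zero =>
      intro U hU
      refine ⟨fun _ => 0, fun e he hsub hne => ?_⟩
      have : U = ∅ := Finset.card_eq_zero.1 (by omega)
      subst this
      obtain ⟨a, ha⟩ := hne
      exact absurd (hsub ha) (Finset.notMem_empty a)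
    | succ n ih =>
      intro U hU
      rcases eq_or_ne U ∅ with rfl | hUne
      · refine ⟨fun _ => 0, fun e he hsub hne => ?_⟩
        obtain ⟨a, ha⟩ := hne
        exact absurd (hsub ha) (Finset.notMem_empty a)
      · obtain ⟨x, hx, C, hCU, hxC, hCk, hcov⟩ := hdeg U (Finset.nonempty_iff_ne_empty.2 hUne)
        obtain ⟨f0, hf0⟩ := ih (U.erase x) (by
          have := Finset.card_erase_of_mem hx
          have := Finset.card_pos.2 ⟨x, hx⟩
          omega)
        -- pick a color not used on C
        have hfresh : ∃ b : Fin (k + 1), b ∉ C.image f0 := by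
          by_contra hb
          push_neg at hb
          have h1 : (Finset.univ : Finset (Fin (k + 1))) ⊆ C.image f0 :=
            fun b _ => hb b
          have h2 := Finset.card_le_card h1
          have h3 := Finset.card_image_le (f := f0) (s := C)
          simp only [Finset.card_univ, Fintype.card_fin] at h2
          omega
        obtain ⟨b, hb⟩ := hfresh
        refine ⟨Function.update f0 x b, fun e he hsub hne => ?_⟩
        by_cases hxe : x ∈ e
        · obtain ⟨c, hc⟩ := hcov e he hsub hxe
          have hce : c ∈ e := Finset.mem_of_mem_inter_left hc
          have hcC : c ∈ C := Finset.mem_of_mem_inter_right hc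
          have hcx : c ≠ x := fun h => hxC (h ▸ hcC)
          refine ⟨x, hxe, c, hce, ?_⟩
          rw [Function.update_self, Function.update_of_ne hcx]
          intro h
          exact hb (h ▸ Finset.mem_image_of_mem f0 hcC)
        · have hesub : e ⊆ U.erase x := Finset.subset_erase.2 ⟨hsub, hxe⟩
          obtain ⟨u, hu, v, hv, huv⟩ := hf0 e he hesub hne
          refine ⟨u, hu, v, hv, ?_⟩
          have hune : u ≠ x := fun h => hxe (h ▸ hu)
          have hvne : v ≠ x := fun h => hxe (h ▸ hv)
          rw [Function.update_of_ne hune, Function.update_of_ne hvne]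
          exact huv
  intro U
  exact main U.card U le_rfl


end PartV

end TreeFreeAux

/-- **Theorem.** Let `T` be an `r`-tree (a connected `r`-graph with no cycle) with
`(r-1)t + 1` vertices. Every `T`-free `r`-graph has chromatic number at most
`2(r-1)(t-1) + 1`. -/
theorem tree_free_chromatic {W V : Type} [Fintype W] [DecidableEq W] [DecidableEq V]
    (r t : ℕ) (hr : 2 ≤ r)
    (ET : Finset (Finset W)) (hTr : IsRGraph r ET)
    (hWcard : Fintype.card W = (r - 1) * t + 1)
    (hconn : HypConnected ET) (hforest : ¬ HasHypCycle ET)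
    (EG : Finset (Finset V)) (hGr : IsRGraph r EG)
    (hfree : ¬ HasCopy ET EG) :
    HypColorable EG (2 * (r - 1) * (t - 1) + 1) := by
  rcases Nat.eq_zero_or_pos t with rfl | ht
  · -- t = 0 : V must be empty
    have hW1 : Fintype.card W = 1 := by simpa using hWcard
    obtain ⟨w0, hw0⟩ := Fintype.card_eq_one_iff.1 hW1
    have hVfalse : ∀ v : V, False := by
      intro v
      apply hfree
      refine ⟨fun _ => v, fun a b _ => (hw0 a).trans (hw0 b).symm, fun e he => ?_⟩
      exfalso
      have h1 : e.card = r := hTr e he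
      have h2 : e.card ≤ Fintype.card W := Finset.card_le_univ e
      omega
    refine ⟨fun v => (hVfalse v).elim, fun e he h2 => ?_⟩
    have : e.Nonempty := Finset.card_pos.1 (by omega)
    obtain ⟨v, hv⟩ := this
    exact (hVfalse v).elim
  · set k := (r - 1) * (t - 1) with hk
    have hdeg := TreeFreeAux.degeneracy r t hr ht ET hTr hWcard hconn hforest EG hGr hfree
    obtain ⟨f, hf⟩ := TreeFreeAux.coloring_of_degenerate EG k hdeg (EG.sup id)
    have hle : k + 1 ≤ 2 * (r - 1) * (t - 1) + 1 := by
      have : 2 * (r - 1) * (t - 1) = 2 * k := by rw [hk]; ring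
      omega
    refine ⟨fun v => Fin.castLE hle (f v), fun e he h2 => ?_⟩
    have hsub : e ⊆ EG.sup id := Finset.le_sup (f := id) he
    obtain ⟨u, hu, v, hv, huv⟩ := hf e he hsub (Finset.card_pos.1 (by omega))
    refine ⟨u, hu, v, hv, fun h => huv ?_⟩
    exact Fin.castLE_injective hle h
end

section
/- Fix r ≥ 3. For all sufficiently large k, there exists an r-graph containing no copy of K_{r+1}^r, with chromatic number greater than k, and with fewer than d_r · (k log k)^r edges, where d_r = 5^r r^r/(r−1)^{r−1}. In particular m_k(K_{r+1}^r) < d_r (k log k)^r. -/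
open Finset

/-- The `r`-graph `E` contains a copy of the complete `r`-graph `K_t^r`:
some `t` vertices have all their `r`-element subsets as edges. -/
def HasCompleteR (r t : ℕ) {V : Type*} (E : Finset (Finset V)) : Prop :=
  ∃ S : Finset V, S.card = t ∧ ∀ e ⊆ S, e.card = r → e ∈ E

namespace CFUB


set_option linter.unusedSectionVars false
variable {V : Type*} [Fintype V] [LinearOrder V]

/-- The triple `a < b < c` is a cyclic triangle in the tournament encoded by `T`
(`T {x,y} = true` means the smaller vertex beats the larger one). -/
def cyc (T : Finset V → Bool) (a b c : V) : Prop :=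
  T {a, b} = T {b, c} ∧ T {a, c} ≠ T {a, b}

/-- `A` contains a cyclic triangle. -/
def hasCycTriple (T : Finset V → Bool) (A : Finset V) : Prop :=
  ∃ a ∈ A, ∃ b ∈ A, ∃ c ∈ A, a < b ∧ b < c ∧ cyc T a b c

/-- `x` beats `y` in the tournament encoded by `T`. -/
def prec (T : Finset V → Bool) (x y : V) : Prop :=
  (x < y ∧ T {x, y} = true) ∨ (y < x ∧ T {x, y} = false)

lemma prec_irrefl (T : Finset V → Bool) (x : V) : ¬ prec T x x := by
  simp [prec]

lemma prec_asymm {T : Finset V → Bool} {x y : V} (h1 : prec T x y) (h2 : prec T y x) : False := by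
  rcases h1 with ⟨h, hb⟩ | ⟨h, hb⟩ <;> rcases h2 with ⟨h', hb'⟩ | ⟨h', hb'⟩ <;>
    rw [Finset.pair_comm y x] at hb' <;>
    first
      | exact absurd h' (lt_asymm h)
      | (rw [hb] at hb'; exact Bool.noConfusion hb')

lemma prec_total {T : Finset V → Bool} {x y : V} (h : x ≠ y) : prec T x y ∨ prec T y x := by
  rcases h.lt_or_gt with h | h
  · cases hb : T {x, y}
    · exact Or.inr (Or.inr ⟨h, by rw [Finset.pair_comm y x]; exact hb⟩)
    · exact Or.inl (Or.inl ⟨h, hb⟩)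
  · cases hb : T {y, x}
    · exact Or.inl (Or.inr ⟨h, by rw [Finset.pair_comm x y]; exact hb⟩)
    · exact Or.inr (Or.inl ⟨h, hb⟩)

lemma prec_of_lt {T : Finset V → Bool} {x y : V} (h : x < y) :
    prec T x y ↔ T {x, y} = true := by
  constructor
  · rintro (⟨_, hb⟩ | ⟨h', _⟩)
    · exact hb
    · exact absurd h' (lt_asymm h)
  · intro hb; exact Or.inl ⟨h, hb⟩

lemma noCyc {T : Finset V → Bool} {A : Finset V} (hA : ¬ hasCycTriple T A) {a b c : V}
    (ha : a ∈ A) (hb : b ∈ A) (hc : c ∈ A) (h1 : a < b) (h2 : b < c)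
    (hPQ : T {a, b} = T {b, c}) : T {a, c} = T {a, b} := by
  by_contra h
  exact hA ⟨a, ha, b, hb, c, hc, h1, h2, hPQ, h⟩

lemma prec_trans {T : Finset V → Bool} {A : Finset V} (hA : ¬ hasCycTriple T A)
    {x y z : V} (hx : x ∈ A) (hy : y ∈ A) (hz : z ∈ A)
    (h1 : prec T x y) (h2 : prec T y z) : prec T x z := by
  have hxy : x ≠ y := fun h => prec_irrefl T x (h ▸ h1)
  have hyz : y ≠ z := fun h => prec_irrefl T y (h ▸ h2)
  have hxz : x ≠ z := by
    rintro rfl; exact prec_asymm h1 h2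
  have hfalse : ∀ u v : V, v < u → prec T u v → T {v, u} = false := by
    intro u v huv h
    rcases h with ⟨h', _⟩ | ⟨_, hb⟩
    · exact absurd h' (lt_asymm huv)
    · rwa [Finset.pair_comm u v] at hb
  rcases hxy.lt_or_gt with hxy' | hxy' <;> rcases hyz.lt_or_gt with hyz' | hyz' <;>
      rcases hxz.lt_or_gt with hxz' | hxz'
  · -- x < y < z
    rw [prec_of_lt hxy'] at h1
    rw [prec_of_lt hyz'] at h2
    rw [prec_of_lt hxz']
    exact (noCyc hA hx hy hz hxy' hyz' (h1.trans h2.symm)).trans h1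
  · exact absurd (hxy'.trans hyz') (lt_asymm hxz')
  · -- x < z < y
    rw [prec_of_lt hxy'] at h1
    have h2' : T {z, y} = false := hfalse y z hyz' h2
    rw [prec_of_lt hxz']
    by_contra hb
    have hb' : T {x, z} = false := by
      cases hbb : T {x, z}
      · rfl
      · exact absurd hbb hb
    have := noCyc hA hx hz hy hxz' hyz' (by rw [hb', h2'])
    rw [hb'] at this
    rw [this] at h1
    exact Bool.noConfusion h1
  · -- z < x < y
    rw [prec_of_lt hxy'] at h1
    have h2' : T {z, y} = false := hfalse y z hyz' h2
    refine Or.inr ⟨hxz', ?_⟩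
    rw [Finset.pair_comm x z]
    by_contra hb
    have hb' : T {z, x} = true := by
      cases hbb : T {z, x}
      · exact absurd hbb hb
      · rfl
    have := noCyc hA hz hx hy hxz' hxy' (by rw [hb', h1])
    rw [hb'] at this
    rw [this] at h2'
    exact Bool.noConfusion h2'
  · -- y < x < z
    have h1' : T {y, x} = false := hfalse x y hxy' h1
    rw [prec_of_lt hyz'] at h2
    rw [prec_of_lt hxz']
    by_contra hb
    have hb' : T {x, z} = false := by
      cases hbb : T {x, z}
      · rfl
      · exact absurd hbb hb
    have := noCyc hA hy hx hz hxy' hxz' (by rw [h1', hb'])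
    rw [h1'] at this
    rw [this] at h2
    exact Bool.noConfusion h2
  · -- y < z < x
    have h1' : T {y, x} = false := hfalse x y hxy' h1
    rw [prec_of_lt hyz'] at h2
    refine Or.inr ⟨hxz', ?_⟩
    rw [Finset.pair_comm x z]
    by_contra hb
    have hb' : T {z, x} = true := by
      cases hbb : T {z, x}
      · exact absurd hbb hb
      · rfl
    have := noCyc hA hy hz hx hyz' hxz' (h2.trans hb'.symm)
    rw [h2] at this
    rw [this] at h1'
    exact Bool.noConfusion h1'
  · exact absurd (hyz'.trans hxy') (lt_asymm ((hxz')))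
  · -- z < y < x
    have h1' : T {y, x} = false := hfalse x y hxy' h1
    have h2' : T {z, y} = false := hfalse y z hyz' h2
    refine Or.inr ⟨hxz', ?_⟩
    rw [Finset.pair_comm x z]
    exact (noCyc hA hz hy hx hyz' hxy' (by rw [h1', h2'])).trans h2'

open scoped Classical in
noncomputable def rank (T : Finset V → Bool) (A : Finset V) (x : V) : ℕ :=
  (A.filter (fun y => prec T y x)).card

lemma rank_lt {T : Finset V → Bool} {A : Finset V} {x : V} (hx : x ∈ A) :
    rank T A x < A.card := by
  classical
  have hsub : A.filter (fun y => prec T y x) ⊆ A.erase x := by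
    intro y hy
    rcases mem_filter.1 hy with ⟨hyA, hp⟩
    exact mem_erase.2 ⟨fun h => prec_irrefl T x (h ▸ hp), hyA⟩
  calc rank T A x ≤ (A.erase x).card := by
        rw [rank]; exact card_le_card hsub
    _ < A.card := card_erase_lt_of_mem hx

lemma rank_lt_rank {T : Finset V → Bool} {A : Finset V} (hA : ¬ hasCycTriple T A)
    {x y : V} (hx : x ∈ A) (hy : y ∈ A) (h : prec T x y) :
    rank T A x < rank T A y := by
  classical
  apply card_lt_card
  rw [Finset.ssubset_iff_of_subset]
  · exact ⟨x, mem_filter.2 ⟨hx, h⟩, fun hmem => prec_irrefl T x (mem_filter.1 hmem).2⟩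
  · intro z hz
    rcases mem_filter.1 hz with ⟨hzA, hp⟩
    exact mem_filter.2 ⟨hzA, prec_trans hA hzA hx hy hp h⟩

lemma prec_iff_rank {T : Finset V → Bool} {A : Finset V} (hA : ¬ hasCycTriple T A)
    {x y : V} (hx : x ∈ A) (hy : y ∈ A) (hxy : x ≠ y) :
    prec T x y ↔ rank T A x < rank T A y := by
  constructor
  · exact rank_lt_rank hA hx hy
  · intro hlt
    rcases prec_total (T := T) hxy with h | h
    · exact h
    · exact absurd (rank_lt_rank hA hy hx h) (by omega)

open scoped Classical in
lemma card_noCyc_le (s' : ℕ) (hs' : 0 < s') (A : Finset V) (hA : A.card = s') :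
    (univ.filter fun T : Finset V → Bool => ¬ hasCycTriple T A).card
      ≤ s' ^ s' * 2 ^ (2 ^ Fintype.card V - s'.choose 2) := by
  set F : Finset (Finset V) := (univ : Finset (Finset V)) \ Finset.powersetCard 2 A with hF
  have hrank : ∀ (T : Finset V → Bool) (a : V), a ∈ A → rank T A a < s' := by
    intro T a ha
    rw [← hA]; exact rank_lt ha
  set Φ : (Finset V → Bool) → ((A → Fin s') × (F → Bool)) := fun T =>
    (fun a => ⟨rank T A a, hrank T a a.2⟩, fun e => T e.1) with hΦ
  have hmaps : ∀ T ∈ (univ.filter fun T : Finset V → Bool => ¬ hasCycTriple T A),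
      Φ T ∈ (univ : Finset ((A → Fin s') × (F → Bool))) := fun _ _ => mem_univ _
  have hinj : Set.InjOn Φ ↑(univ.filter fun T : Finset V → Bool => ¬ hasCycTriple T A) := by
    intro T1 hT1 T2 hT2 heq
    have h1 : ¬ hasCycTriple T1 A := (mem_filter.1 (Finset.mem_coe.1 hT1)).2
    have h2 : ¬ hasCycTriple T2 A := (mem_filter.1 (Finset.mem_coe.1 hT2)).2
    have hrk : ∀ a (ha : a ∈ A), rank T1 A a = rank T2 A a := by
      intro a ha
      have := congrFun (congrArg Prod.fst heq) ⟨a, ha⟩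
      exact congrArg Fin.val this
    have hout : ∀ e (he : e ∈ F), T1 e = T2 e := by
      intro e he
      exact congrFun (congrArg Prod.snd heq) ⟨e, he⟩
    funext e
    by_cases hP : e ∈ Finset.powersetCard 2 A
    · rcases Finset.mem_powersetCard.1 hP with ⟨hsub, hcard⟩
      rcases Finset.card_eq_two.1 hcard with ⟨a, b, hab, rfl⟩
      have key : ∀ a b : V, a < b → a ∈ A → b ∈ A → T1 {a, b} = T2 {a, b} := by
        intro a b hlt ha hb
        have hiff : T1 {a, b} = true ↔ T2 {a, b} = true := by
          rw [← prec_of_lt hlt, ← prec_of_lt hlt,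
            prec_iff_rank h1 ha hb hlt.ne, prec_iff_rank h2 ha hb hlt.ne,
            hrk a ha, hrk b hb]
        cases hb1 : T1 {a, b} <;> cases hb2 : T2 {a, b}
        · rfl
        · exact absurd (hiff.2 hb2) (by rw [hb1]; simp)
        · exact absurd (hiff.1 hb1) (by rw [hb2]; simp)
        · rfl
      have ha : a ∈ A := hsub (by simp)
      have hb : b ∈ A := hsub (by simp)
      rcases hab.lt_or_gt with h | h
      · exact key a b h ha hb
      · rw [Finset.pair_comm]; exact key b a h hb ha
    · exact hout e (mem_sdiff.2 ⟨mem_univ _, hP⟩)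
  have hcard := Finset.card_le_card_of_injOn Φ hmaps hinj
  have htarget : (univ : Finset ((A → Fin s') × (F → Bool))).card
      = s' ^ s' * 2 ^ (2 ^ Fintype.card V - s'.choose 2) := by
    rw [card_univ, Fintype.card_prod, Fintype.card_fun, Fintype.card_fun]
    have hAcard : Fintype.card A = s' := by rw [Fintype.card_coe, hA]
    have hFcard : Fintype.card F = 2 ^ Fintype.card V - s'.choose 2 := by
      rw [Fintype.card_coe, hF, card_sdiff_of_subset (subset_univ _), Finset.card_powersetCard, hA,
        card_univ, Fintype.card_finset]
    rw [hAcard, hFcard, Fintype.card_fin, Fintype.card_bool]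
  rw [htarget] at hcard
  exact hcard

open scoped Classical in
lemma exists_good (s' : ℕ) (hs' : 0 < s')
    (h1 : (Fintype.card V).choose s' * s' ^ s' < 2 ^ s'.choose 2)
    (h2 : s'.choose 2 ≤ 2 ^ Fintype.card V) :
    ∃ T : Finset V → Bool, ∀ A : Finset V, A.card = s' → hasCycTriple T A := by
  by_contra hcon
  push_neg at hcon
  have hsub : (univ : Finset (Finset V → Bool)) ⊆
      (Finset.powersetCard s' (univ : Finset V)).biUnion
        (fun A => univ.filter fun T => ¬ hasCycTriple T A) := by
    intro T _
    obtain ⟨A, hA, hnc⟩ := hcon T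
    exact Finset.mem_biUnion.2
      ⟨A, Finset.mem_powersetCard_univ.2 hA, mem_filter.2 ⟨mem_univ _, hnc⟩⟩
  have hle := (Finset.card_le_card hsub).trans (Finset.card_biUnion_le)
  have hbound : ∑ A ∈ Finset.powersetCard s' (univ : Finset V),
      (univ.filter fun T : Finset V → Bool => ¬ hasCycTriple T A).card
      ≤ (Fintype.card V).choose s' * (s' ^ s' * 2 ^ (2 ^ Fintype.card V - s'.choose 2)) := by
    calc _ ≤ (Finset.powersetCard s' (univ : Finset V)).card
          * (s' ^ s' * 2 ^ (2 ^ Fintype.card V - s'.choose 2)) := by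
          rw [← smul_eq_mul]
          apply Finset.sum_le_card_nsmul
          intro A hA
          exact card_noCyc_le s' hs' A (Finset.mem_powersetCard_univ.1 hA)
      _ = _ := by rw [Finset.card_powersetCard, card_univ]
  have hΩ : (univ : Finset (Finset V → Bool)).card = 2 ^ 2 ^ Fintype.card V := by
    rw [card_univ, Fintype.card_fun, Fintype.card_finset, Fintype.card_bool]
  have h3 : (Fintype.card V).choose s' * (s' ^ s' * 2 ^ (2 ^ Fintype.card V - s'.choose 2))
      < 2 ^ 2 ^ Fintype.card V := by
    rw [← mul_assoc]
    calc (Fintype.card V).choose s' * s' ^ s' * 2 ^ (2 ^ Fintype.card V - s'.choose 2)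
        < 2 ^ s'.choose 2 * 2 ^ (2 ^ Fintype.card V - s'.choose 2) :=
          mul_lt_mul_of_pos_right h1 (by positivity)
      _ = 2 ^ 2 ^ Fintype.card V := by rw [← pow_add, Nat.add_sub_cancel' h2]
  omega

def bot (j : ℕ) (e : Finset V) : Finset V := ((e.sort (· ≤ ·)).take j).toFinset

lemma bot_subset (j : ℕ) (e : Finset V) : bot j e ⊆ e := by
  intro x hx
  rw [bot, List.mem_toFinset] at hx
  exact (Finset.mem_sort _).1 (List.mem_of_mem_take hx)

lemma card_bot {j : ℕ} {e : Finset V} (h : j ≤ e.card) : (bot j e).card = j := by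
  rw [bot, List.toFinset_card_of_nodup (List.Nodup.sublist (List.take_sublist _ _) (e.sort_nodup _)),
    List.length_take, Finset.length_sort, min_eq_left h]

lemma bot_lt {j : ℕ} {e : Finset V} {x y : V} (hy : y ∈ bot j e) (hx : x ∈ e)
    (hx' : x ∉ bot j e) : y < x := by
  have hs := e.sortedLT_sort.pairwise
  rw [bot, List.mem_toFinset] at hy hx'
  have hxl : x ∈ e.sort (· ≤ ·) := (Finset.mem_sort _).2 hx
  rw [← List.take_append_drop j (e.sort (· ≤ ·))] at hxl hs
  have hxd : x ∈ (e.sort (· ≤ ·)).drop j := by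
    rcases List.mem_append.1 hxl with h | h
    · exact absurd h hx'
    · exact h
  exact (List.pairwise_append.1 hs).2.2 y hy x hxd

/-- The three smallest elements of a set are determined. -/
lemma triple_eq {e : Finset V} {a b c a' b' c' : V}
    (ha : a ∈ e) (hb : b ∈ e) (hc : c ∈ e) (hab : a < b) (hbc : b < c)
    (htop : ∀ x ∈ e, x ≠ a → x ≠ b → x ≠ c → c < x)
    (ha' : a' ∈ e) (hb' : b' ∈ e) (hc' : c' ∈ e) (hab' : a' < b') (hbc' : b' < c')
    (htop' : ∀ x ∈ e, x ≠ a' → x ≠ b' → x ≠ c' → c' < x) :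
    a = a' ∧ b = b' ∧ c = c' := by
  have min1 : ∀ x ∈ e, a ≤ x := by
    intro x hx
    by_cases h1 : x = a; · exact h1.ge
    by_cases h2 : x = b; · exact h2 ▸ hab.le
    by_cases h3 : x = c; · exact h3 ▸ (hab.trans hbc).le
    exact ((hab.trans hbc).trans (htop x hx h1 h2 h3)).le
  have min1' : ∀ x ∈ e, a' ≤ x := by
    intro x hx
    by_cases h1 : x = a'; · exact h1.ge
    by_cases h2 : x = b'; · exact h2 ▸ hab'.le
    by_cases h3 : x = c'; · exact h3 ▸ (hab'.trans hbc').le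
    exact ((hab'.trans hbc').trans (htop' x hx h1 h2 h3)).le
  have haa : a = a' := le_antisymm (min1 a' ha') (min1' a ha)
  have min2 : ∀ x ∈ e, x ≠ a → b ≤ x := by
    intro x hx h1
    by_cases h2 : x = b; · exact h2.ge
    by_cases h3 : x = c; · exact h3 ▸ hbc.le
    exact (hbc.trans (htop x hx h1 h2 h3)).le
  have min2' : ∀ x ∈ e, x ≠ a' → b' ≤ x := by
    intro x hx h1
    by_cases h2 : x = b'; · exact h2.ge
    by_cases h3 : x = c'; · exact h3 ▸ hbc'.le
    exact (hbc'.trans (htop' x hx h1 h2 h3)).le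
  have hab2 : a < b' := haa.symm ▸ hab'
  have hbb : b = b' := le_antisymm (min2 b' hb' hab2.ne') (min2' b hb ((haa ▸ hab).ne'))
  have hbc2 : b < c' := hbb.symm ▸ hbc'
  have min3 : ∀ x ∈ e, x ≠ a → x ≠ b → c ≤ x := by
    intro x hx h1 h2
    by_cases h3 : x = c; · exact h3.ge
    exact (htop x hx h1 h2 h3).le
  have min3' : ∀ x ∈ e, x ≠ a' → x ≠ b' → c' ≤ x := by
    intro x hx h1 h2
    by_cases h3 : x = c'; · exact h3.ge
    exact (htop' x hx h1 h2 h3).le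
  have hcc : c = c' := le_antisymm
      (min3 c' hc' ((hab.trans hbc2).ne') hbc2.ne')
      (min3' c hc ((haa ▸ (hab.trans hbc)).ne') ((hbb ▸ hbc).ne'))
  exact ⟨haa, hbb, hcc⟩

/-- Extract the four smallest elements of a set of size ≥ 4. -/
lemma exists_quad {S : Finset V} (h : 4 ≤ S.card) :
    ∃ a b c d, a ∈ S ∧ b ∈ S ∧ c ∈ S ∧ d ∈ S ∧ a < b ∧ b < c ∧ c < d ∧
      ∀ x ∈ S, x ≠ a → x ≠ b → x ≠ c → x ≠ d → d < x := by
  have hlen : (S.sort (· ≤ ·)).length = S.card := Finset.length_sort _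
  have h0 : (0:ℕ) < (S.sort (· ≤ ·)).length := by omega
  have h1 : (1:ℕ) < (S.sort (· ≤ ·)).length := by omega
  have h2 : (2:ℕ) < (S.sort (· ≤ ·)).length := by omega
  have h3 : (3:ℕ) < (S.sort (· ≤ ·)).length := by omega
  have hmono := (S.sortedLT_sort).strictMono_get
  have hmem : ∀ m : Fin ((S.sort (· ≤ ·)).length), (S.sort (· ≤ ·)).get m ∈ S := by
    intro m
    exact (Finset.mem_sort _).1 (List.get_mem _ m)
  refine ⟨(S.sort (· ≤ ·)).get ⟨0, h0⟩, (S.sort (· ≤ ·)).get ⟨1, h1⟩,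
    (S.sort (· ≤ ·)).get ⟨2, h2⟩, (S.sort (· ≤ ·)).get ⟨3, h3⟩,
    hmem _, hmem _, hmem _, hmem _,
    hmono (Fin.mk_lt_mk.2 (by omega)), hmono (Fin.mk_lt_mk.2 (by omega)),
    hmono (Fin.mk_lt_mk.2 (by omega)), ?_⟩
  intro x hx hne0 hne1 hne2 hne3
  have hxl : x ∈ S.sort (· ≤ ·) := (Finset.mem_sort _).2 hx
  rcases List.mem_iff_get.1 hxl with ⟨m, hm⟩
  have hm4 : 4 ≤ m.1 := by
    by_contra hcon
    push_neg at hcon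
    have : m.1 = 0 ∨ m.1 = 1 ∨ m.1 = 2 ∨ m.1 = 3 := by omega
    rcases this with hh | hh | hh | hh
    · exact hne0 (by rw [← hm]; congr 1; exact Fin.ext hh)
    · exact hne1 (by rw [← hm]; congr 1; exact Fin.ext hh)
    · exact hne2 (by rw [← hm]; congr 1; exact Fin.ext hh)
    · exact hne3 (by rw [← hm]; congr 1; exact Fin.ext hh)
  calc (S.sort (· ≤ ·)).get ⟨3, h3⟩ < (S.sort (· ≤ ·)).get m :=
        hmono (Fin.lt_def.2 (show (3:ℕ) < m.1 by omega))
    _ = x := hm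

lemma sq_le_two_pow {m : ℕ} (h : 4 ≤ m) : m ^ 2 ≤ 2 ^ m := by
  induction m, h using Nat.le_induction with
  | base => norm_num
  | succ n hn ih =>
      have h1 : (n + 1) ^ 2 ≤ 2 * n ^ 2 := by nlinarith
      calc (n + 1) ^ 2 ≤ 2 * n ^ 2 := h1
        _ ≤ 2 * 2 ^ n := by omega
        _ = 2 ^ (n + 1) := by ring

lemma nine_pow_lt {r : ℕ} (hr : 3 ≤ r) : 9 ^ r < 5 ^ r * 6 * r * Nat.factorial (r - 3) := by
  rcases Nat.lt_or_ge r 4 with h4 | h4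
  · have : r = 3 := by omega
    subst this
    norm_num
  · clear hr
    induction r, h4 using Nat.le_induction with
    | base => norm_num [Nat.factorial]
    | succ n hn ih =>
        have hfac : Nat.factorial (n + 1 - 3) = (n - 2) * Nat.factorial (n - 3) := by
          have h1 : n + 1 - 3 = (n - 3) + 1 := by omega
          rw [h1, Nat.factorial_succ]
          congr 1
          omega
        have hstep : 9 * (5 ^ n * 6 * n * Nat.factorial (n - 3)) ≤ 5 ^ (n+1) * 6 * (n+1) * Nat.factorial (n + 1 - 3) := by
          rw [hfac]
          have key : 9 * n ≤ 5 * ((n + 1) * (n - 2)) := by nlinarith [Nat.sub_add_cancel (show 2 ≤ n by omega)]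
          calc 9 * (5 ^ n * 6 * n * Nat.factorial (n - 3)) = (9 * n) * (5 ^ n * 6 * Nat.factorial (n-3)) := by ring
            _ ≤ (5 * ((n+1) * (n-2))) * (5 ^ n * 6 * Nat.factorial (n-3)) := Nat.mul_le_mul_right _ key
            _ = 5 ^ (n + 1) * 6 * (n + 1) * ((n - 2) * Nat.factorial (n - 3)) := by ring
        calc 9 ^ (n + 1) = 9 * 9 ^ n := by ring
          _ < 9 * (5 ^ n * 6 * n * Nat.factorial (n - 3)) := by
              have := ih
              omega
          _ ≤ _ := hstep

lemma choose_mul_factorial_le_pow (n j : ℕ) : n.choose j * Nat.factorial j ≤ n ^ j := by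
  rw [mul_comm, ← Nat.descFactorial_eq_factorial_mul_choose]
  exact Nat.descFactorial_le_pow _ _

lemma cube_lt_two_pow {m : ℕ} (h : 10 ≤ m) : m ^ 3 ≤ 2 ^ m := by
  induction m, h using Nat.le_induction with
  | base => norm_num
  | succ n hn ih =>
      have hnn : 10 * n ≤ n * n := Nat.mul_le_mul_right n hn
      have hnnn : 10 * (n * n) ≤ n * (n * n) := Nat.mul_le_mul_right (n * n) hn
      have h1 : (n + 1) ^ 3 ≤ 2 * n ^ 3 := by nlinarith
      calc (n + 1) ^ 3 ≤ 2 * n ^ 3 := h1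
        _ ≤ 2 * 2 ^ n := by omega
        _ = 2 ^ (n + 1) := by ring

end CFUB

lemma r_le_ratio {r : ℕ} (hr : 3 ≤ r) : (r:ℝ) * ((r:ℝ) - 1) ^ (r - 1) ≤ (r:ℝ) ^ r := by
  obtain ⟨m, rfl⟩ : ∃ m, r = m + 1 := ⟨r - 1, by omega⟩
  have hm : 2 ≤ m := by omega
  have hmR : (2:ℝ) ≤ (m:ℝ) := by exact_mod_cast hm
  rw [Nat.add_sub_cancel]
  have h1 : ((m:ℕ) : ℝ) + 1 - 1 = (m:ℝ) := by ring
  push_cast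
  rw [h1, pow_succ, mul_comm ((m:ℝ) + 1)]
  apply mul_le_mul_of_nonneg_right _ (by linarith)
  exact pow_le_pow_left₀ (by linarith) (by linarith) m

set_option maxHeartbeats 1600000 in
open CFUB in
/-- **Theorem.** Fix `r ≥ 3`. For all sufficiently large `k` there exists a
`K_{r+1}^r`-free `r`-graph with chromatic number greater than `k` and fewer than
`d_r (k log k)^r` edges, where `d_r = 5^r r^r / (r-1)^(r-1)`. -/
theorem clique_free_upper_bound (r : ℕ) (hr : 3 ≤ r) :
    ∃ k₀ : ℕ, ∀ k : ℕ, k₀ ≤ k →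
      ∃ (n : ℕ) (E : Finset (Finset (Fin n))),
        IsRGraph r E ∧ ¬ HasCompleteR r (r + 1) E ∧ ¬ HypColorable E k ∧
        (E.card : ℝ) < ((5 : ℝ) ^ r * (r : ℝ) ^ r / ((r : ℝ) - 1) ^ (r - 1)) *
          ((k : ℝ) * Real.log k) ^ r := by
  classical
  refine ⟨max (2 ^ (r + 6)) (⌈Real.exp (3 * ((r:ℝ) + 9))⌉₊ + 1), ?_⟩
  intro k hk
  have hk1 : 2 ^ (r + 6) ≤ k := le_trans (le_max_left _ _) hk
  have hk2 : (⌈Real.exp (3 * ((r:ℝ) + 9))⌉₊ + 1 : ℕ) ≤ k := le_trans (le_max_right _ _) hk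
  have hk512 : 512 ≤ k := by
    calc (512:ℕ) = 2 ^ 9 := by norm_num
      _ ≤ 2 ^ (r + 6) := Nat.pow_le_pow_right (by norm_num) (by omega)
      _ ≤ k := hk1
  have hk2' : 2 ≤ k := by omega
  have hk0 : 0 < k := by omega
  set L := Nat.clog 2 k with hL_def
  have hL : r + 6 ≤ L := by
    by_contra hcon
    push_neg at hcon
    have h1 : k ≤ 2 ^ (r + 5) := (Nat.clog_le_iff_le_pow (by norm_num)).1 (by omega)
    have h2 : (2:ℕ) ^ (r + 5) < 2 ^ (r + 6) := Nat.pow_lt_pow_right (by norm_num) (by omega)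
    omega
  set s' := 6 * (L + 1) with hs'_def
  set s := s' + (r - 3) with hs_def
  set n := k * s with hn_def
  have hs'pos : 0 < s' := by omega
  have hs'le : s' ≤ s := by omega
  have hsn : s ≤ n := Nat.le_mul_of_pos_left s hk0
  have hk2L : k ≤ 2 ^ L := Nat.le_pow_clog (by norm_num) k
  have hL4 : 4 ≤ L := by omega
  -- the counting conditions for the tournament
  have hsq : L ^ 2 ≤ 2 ^ L := sq_le_two_pow hL4
  have hss' : s * s' < 2 ^ (2 * L + 2) := by
    have e1 : s ≤ 7 * L := by omega
    have e2 : s' ≤ 7 * L := by omega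
    calc s * s' ≤ (7 * L) * (7 * L) := Nat.mul_le_mul e1 e2
      _ = 49 * L ^ 2 := by ring
      _ ≤ 49 * 2 ^ L := by omega
      _ < 64 * 2 ^ L := by
          have : 0 < 2 ^ L := Nat.pow_pos (by norm_num)
          omega
      _ = 2 ^ (L + 6) := by rw [pow_add]; ring
      _ ≤ 2 ^ (2 * L + 2) := Nat.pow_le_pow_right (by norm_num) (by omega)
  have hns' : n * s' < 2 ^ (3 * L + 2) := by
    calc n * s' = k * (s * s') := by rw [hn_def]; ring
      _ ≤ 2 ^ L * (s * s') := Nat.mul_le_mul_right _ hk2L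
      _ < 2 ^ L * 2 ^ (2 * L + 2) := mul_lt_mul_of_pos_left hss' (Nat.pow_pos (by norm_num))
      _ = 2 ^ (3 * L + 2) := by rw [← pow_add]; ring_nf
  have hchoose2 : s'.choose 2 = 3 * (L + 1) * (6 * L + 5) := by
    rw [Nat.choose_two_right]
    have h6 : s' - 1 = 6 * L + 5 := by omega
    rw [h6, hs'_def]
    have h7 : 6 * (L + 1) * (6 * L + 5) = 2 * (3 * (L + 1) * (6 * L + 5)) := by ring
    rw [h7, Nat.mul_div_cancel_left _ (by norm_num)]
  have hN1 : n.choose s' * s' ^ s' < 2 ^ (s'.choose 2) := by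
    calc n.choose s' * s' ^ s' ≤ n ^ s' * s' ^ s' :=
          Nat.mul_le_mul_right _ (Nat.choose_le_pow _ _)
      _ = (n * s') ^ s' := (mul_pow n s' s').symm
      _ < (2 ^ (3 * L + 2)) ^ s' := Nat.pow_lt_pow_left hns' (by omega)
      _ = 2 ^ ((3 * L + 2) * s') := by rw [← pow_mul]
      _ ≤ 2 ^ (s'.choose 2) := by
          apply Nat.pow_le_pow_right (by norm_num)
          rw [hchoose2, hs'_def]
          nlinarith [hL4]
  have hN2 : s'.choose 2 ≤ 2 ^ n := by
    calc s'.choose 2 ≤ s' ^ 2 := Nat.choose_le_pow _ _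
      _ ≤ 2 ^ s' := sq_le_two_pow (by omega)
      _ ≤ 2 ^ n := Nat.pow_le_pow_right (by norm_num) (le_trans hs'le hsn)
  obtain ⟨T, hT⟩ := exists_good (V := Fin n) s' hs'pos (by simpa using hN1) (by simpa using hN2)
  set E : Finset (Finset (Fin n)) := univ.filter (fun e =>
    e.card = r ∧ ∃ a ∈ e, ∃ b ∈ e, ∃ c ∈ e, a < b ∧ b < c ∧
      (∀ x ∈ e, x ≠ a → x ≠ b → x ≠ c → c < x) ∧ cyc T a b c) with hE_def
  refine ⟨n, E, ?_, ?_, ?_, ?_⟩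
  · -- r-graph
    intro e he
    rw [hE_def, Finset.mem_filter] at he
    exact he.2.1
  · -- K_{r+1}-free
    rintro ⟨S, hScard, hSall⟩
    obtain ⟨a, b, c, d, haS, hbS, hcS, hdS, hab, hbc, hcd, htop⟩ :=
      exists_quad (show 4 ≤ S.card by omega)
    have had : a ≠ d := (hab.trans (hbc.trans hcd)).ne
    have hbd : b ≠ d := (hbc.trans hcd).ne
    have hErase : ∀ x, x ∈ S → S.erase x ∈ E := by
      intro x hx
      apply hSall _ (Finset.erase_subset _ _)
      rw [Finset.card_erase_of_mem hx, hScard]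
      omega
    -- cyc T a b c
    have h1 : cyc T a b c := by
      have hmem := hErase d hdS
      rw [hE_def, Finset.mem_filter] at hmem
      obtain ⟨-, -, a₁, ha₁, b₁, hb₁, c₁, hc₁, h₁ab, h₁bc, h₁top, h₁cyc⟩ := hmem
      obtain ⟨ea, eb, ec⟩ := triple_eq ha₁ hb₁ hc₁ h₁ab h₁bc h₁top
        (Finset.mem_erase.2 ⟨had, haS⟩)
        (Finset.mem_erase.2 ⟨hbd, hbS⟩)
        (Finset.mem_erase.2 ⟨hcd.ne, hcS⟩) hab hbc
        (by
          intro x hx hxa hxb hxc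
          rcases Finset.mem_erase.1 hx with ⟨hxd, hxS⟩
          exact hcd.trans (htop x hxS hxa hxb hxc hxd))
      rw [ea, eb, ec] at h₁cyc
      exact h₁cyc
    -- cyc T a b d
    have h2 : cyc T a b d := by
      have hmem := hErase c hcS
      rw [hE_def, Finset.mem_filter] at hmem
      obtain ⟨-, -, a₁, ha₁, b₁, hb₁, c₁, hc₁, h₁ab, h₁bc, h₁top, h₁cyc⟩ := hmem
      obtain ⟨ea, eb, ec⟩ := triple_eq ha₁ hb₁ hc₁ h₁ab h₁bc h₁top
        (Finset.mem_erase.2 ⟨(hab.trans hbc).ne, haS⟩)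
        (Finset.mem_erase.2 ⟨hbc.ne, hbS⟩)
        (Finset.mem_erase.2 ⟨hcd.ne', hdS⟩) hab (hbc.trans hcd)
        (by
          intro x hx hxa hxb hxd
          rcases Finset.mem_erase.1 hx with ⟨hxc, hxS⟩
          exact htop x hxS hxa hxb hxc hxd)
      rw [ea, eb, ec] at h₁cyc
      exact h₁cyc
    -- cyc T a c d
    have h3 : cyc T a c d := by
      have hmem := hErase b hbS
      rw [hE_def, Finset.mem_filter] at hmem
      obtain ⟨-, -, a₁, ha₁, b₁, hb₁, c₁, hc₁, h₁ab, h₁bc, h₁top, h₁cyc⟩ := hmem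
      obtain ⟨ea, eb, ec⟩ := triple_eq ha₁ hb₁ hc₁ h₁ab h₁bc h₁top
        (Finset.mem_erase.2 ⟨hab.ne, haS⟩)
        (Finset.mem_erase.2 ⟨hbc.ne', hcS⟩)
        (Finset.mem_erase.2 ⟨(hbc.trans hcd).ne', hdS⟩) (hab.trans hbc) hcd
        (by
          intro x hx hxa hxc hxd
          rcases Finset.mem_erase.1 hx with ⟨hxb, hxS⟩
          exact htop x hxS hxa hxb hxc hxd)
      rw [ea, eb, ec] at h₁cyc
      exact h₁cyc
    rcases h1 with ⟨-, e2⟩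
    rcases h2 with ⟨-, f2⟩
    rcases h3 with ⟨-, g2⟩
    have boolem : ∀ p q t : Bool, q ≠ p → t ≠ p → t ≠ q → False := by decide
    exact boolem _ _ _ e2 f2 g2
  · -- not k-colorable
    rintro ⟨f, hf⟩
    have hmaps : ∀ a ∈ (univ : Finset (Fin n)), f a ∈ (univ : Finset (Fin k)) :=
      fun a _ => Finset.mem_univ _
    have hcard_lt : (univ : Finset (Fin k)).card • (s - 1) < (univ : Finset (Fin n)).card := by
      rw [Finset.card_univ, Finset.card_univ, Fintype.card_fin, Fintype.card_fin, smul_eq_mul,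
        hn_def]
      exact mul_lt_mul_of_pos_left (by omega) hk0
    obtain ⟨i, -, hi⟩ := Finset.exists_lt_card_fiber_of_mul_lt_card_of_maps_to hmaps hcard_lt
    obtain ⟨C', hC'sub, hC'card⟩ := Finset.exists_subset_card_eq
      (show s ≤ ((univ : Finset (Fin n)).filter fun x => f x = i).card by omega)
    have hBsub : bot s' C' ⊆ C' := bot_subset _ _
    have hBcard : (bot s' C').card = s' := card_bot (by rw [hC'card]; exact hs'le)
    obtain ⟨a, haB, b, hbB, c, hcB, hab, hbc, hcyc⟩ := hT (bot s' C') hBcard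
    have htrisub : ({a, b, c} : Finset (Fin n)) ⊆ bot s' C' := by
      intro x hx
      rcases Finset.mem_insert.1 hx with rfl | hx
      · exact haB
      rcases Finset.mem_insert.1 hx with rfl | hx
      · exact hbB
      rw [Finset.mem_singleton] at hx
      subst hx; exact hcB
    set e : Finset (Fin n) := {a, b, c} ∪ (C' \ bot s' C') with he_def
    have hesub : e ⊆ C' := Finset.union_subset (htrisub.trans hBsub) Finset.sdiff_subset
    have hdisj : Disjoint ({a, b, c} : Finset (Fin n)) (C' \ bot s' C') :=
      Finset.disjoint_sdiff.mono_left htrisub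
    have htricard : ({a, b, c} : Finset (Fin n)).card = 3 := by
      rw [Finset.card_insert_of_notMem (by simp [hab.ne, (hab.trans hbc).ne]),
        Finset.card_insert_of_notMem (by simp [hbc.ne]), Finset.card_singleton]
    have hecard : e.card = r := by
      rw [he_def, Finset.card_union_of_disjoint hdisj, htricard, Finset.card_sdiff_of_subset hBsub,
        hC'card, hBcard]
      omega
    have heE : e ∈ E := by
      rw [hE_def, Finset.mem_filter]
      refine ⟨Finset.mem_univ _, hecard, a, ?_, b, ?_, c, ?_, hab, hbc, ?_, hcyc⟩
      · exact Finset.mem_union_left _ (by simp)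
      · exact Finset.mem_union_left _ (by simp)
      · exact Finset.mem_union_left _ (by simp)
      · intro x hx hxa hxb hxc
        rcases Finset.mem_union.1 hx with hx' | hx'
        · simp only [Finset.mem_insert, Finset.mem_singleton] at hx'
          tauto
        · rcases Finset.mem_sdiff.1 hx' with ⟨hxC, hxB⟩
          exact bot_lt hcB hxC hxB
    obtain ⟨u, hu, v, hv, huv⟩ := hf e heE (by rw [hecard]; omega)
    have hfu : f u = i := (Finset.mem_filter.1 (hC'sub (hesub hu))).2
    have hfv : f v = i := (Finset.mem_filter.1 (hC'sub (hesub hv))).2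
    exact huv (hfu.trans hfv.symm)
  · -- edge count
    have hEle : E.card ≤ n.choose 3 * n.choose (r - 3) := by
      have hmaps2 : ∀ e ∈ E, (bot 3 e, e \ bot 3 e) ∈
          (Finset.powersetCard 3 (univ : Finset (Fin n))) ×ˢ
            (Finset.powersetCard (r - 3) (univ : Finset (Fin n))) := by
        intro e he
        rw [hE_def, Finset.mem_filter] at he
        have hcard := he.2.1
        rw [Finset.mem_product]
        constructor
        · exact Finset.mem_powersetCard_univ.2 (card_bot (by omega))
        · exact Finset.mem_powersetCard_univ.2
            (by rw [Finset.card_sdiff_of_subset (bot_subset _ _), hcard, card_bot (by omega)])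
      have hinj2 : Set.InjOn (fun e : Finset (Fin n) => (bot 3 e, e \ bot 3 e)) (E : Set (Finset (Fin n))) := by
        intro e1 h1 e2 h2 heq
        simp only [Prod.mk.injEq] at heq
        obtain ⟨q1, q2⟩ := heq
        calc e1 = bot 3 e1 ∪ (e1 \ bot 3 e1) := (Finset.union_sdiff_of_subset (bot_subset _ _)).symm
          _ = bot 3 e2 ∪ (e2 \ bot 3 e2) := by rw [q2, q1]
          _ = e2 := Finset.union_sdiff_of_subset (bot_subset _ _)
      calc E.card ≤ _ := Finset.card_le_card_of_injOn _ hmaps2 hinj2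
        _ = n.choose 3 * n.choose (r - 3) := by
            rw [Finset.card_product, Finset.card_powersetCard, Finset.card_powersetCard,
              Finset.card_univ, Fintype.card_fin]
    have hEn : E.card * (6 * Nat.factorial (r - 3)) ≤ n ^ r := by
      have c3 : n.choose 3 * 6 ≤ n ^ 3 := by
        have := choose_mul_factorial_le_pow n 3
        norm_num [Nat.factorial] at this
        omega
      have cr : n.choose (r - 3) * Nat.factorial (r - 3) ≤ n ^ (r - 3) :=
        choose_mul_factorial_le_pow n (r - 3)
      calc E.card * (6 * Nat.factorial (r - 3))
          ≤ (n.choose 3 * n.choose (r - 3)) * (6 * Nat.factorial (r - 3)) :=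
            Nat.mul_le_mul_right _ hEle
        _ = (n.choose 3 * 6) * (n.choose (r - 3) * Nat.factorial (r - 3)) := by ring
        _ ≤ n ^ 3 * n ^ (r - 3) := Nat.mul_le_mul c3 cr
        _ = n ^ r := by rw [← pow_add]; congr 1; omega
    have hkpos : (0:ℝ) < (k:ℝ) := by exact_mod_cast hk0
    have hrR : (3:ℝ) ≤ (r:ℝ) := by exact_mod_cast hr
    have hlogk : 3 * ((r:ℝ) + 9) ≤ Real.log k := by
      have hexp : Real.exp (3 * ((r:ℝ) + 9)) ≤ (k:ℝ) := by
        calc Real.exp (3 * ((r:ℝ) + 9)) ≤ (⌈Real.exp (3 * ((r:ℝ) + 9))⌉₊ : ℝ) := Nat.le_ceil _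
          _ ≤ ((⌈Real.exp (3 * ((r:ℝ) + 9))⌉₊ + 1 : ℕ) : ℝ) := by push_cast; linarith
          _ ≤ (k:ℝ) := by exact_mod_cast hk2
      calc 3 * ((r:ℝ) + 9) = Real.log (Real.exp (3 * ((r:ℝ) + 9))) := (Real.log_exp _).symm
        _ ≤ Real.log k := Real.log_le_log (Real.exp_pos _) hexp
    have hlogk_pos : (0:ℝ) < Real.log k := by nlinarith
    have hlog2 : (0.6931471803:ℝ) < Real.log 2 := Real.log_two_gt_d9
    have hL1 : ((L:ℝ) - 1) * Real.log 2 ≤ Real.log k := by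
      have hpow : (2:ℝ) ^ (L - 1 : ℕ) ≤ (k:ℝ) := by
        have h := Nat.pow_pred_clog_lt_self (b := 2) (by norm_num) (show 1 < k by omega)
        exact_mod_cast h.le
      have h := Real.log_le_log (by positivity) hpow
      rw [Real.log_pow] at h
      have hcast : (((L - 1 : ℕ)) : ℝ) = (L:ℝ) - 1 := by
        have h1 : 1 ≤ L := by omega
        push_cast [Nat.cast_sub h1]
        ring
      rw [hcast] at h
      exact h
    have hLle : (L:ℝ) ≤ Real.log k / Real.log 2 + 1 := by
      have h2pos : (0:ℝ) < Real.log 2 := by linarith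
      have := (le_div_iff₀ h2pos).2 hL1
      linarith
    have hdiv : Real.log k / Real.log 2 ≤ Real.log k * 1.443 := by
      rw [div_le_iff₀ (show (0:ℝ) < Real.log 2 by linarith [hlog2])]
      nlinarith [hlogk_pos, hlog2]
    have hsR : (s:ℝ) ≤ 9 * Real.log k := by
      have hseq : s = 6 * L + r + 3 := by omega
      rw [hseq]
      push_cast
      linarith
    have hnR : (n:ℝ) ≤ 9 * ((k:ℝ) * Real.log k) := by
      have hneq : (n:ℝ) = (k:ℝ) * (s:ℝ) := by rw [hn_def]; push_cast; ring
      rw [hneq]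
      calc (k:ℝ) * (s:ℝ) ≤ (k:ℝ) * (9 * Real.log k) :=
            mul_le_mul_of_nonneg_left hsR (le_of_lt hkpos)
        _ = 9 * ((k:ℝ) * Real.log k) := by ring
    have hX : (0:ℝ) < ((k:ℝ) * Real.log k) ^ r := pow_pos (mul_pos hkpos hlogk_pos) r
    have hfacpos : (0:ℝ) < 6 * (Nat.factorial (r - 3) : ℝ) := by positivity
    have hmain : (E.card : ℝ) < 5 ^ r * (r:ℝ) * ((k:ℝ) * Real.log k) ^ r := by
      have h1 : (E.card : ℝ) * (6 * (Nat.factorial (r - 3) : ℝ)) ≤ ((n:ℝ)) ^ r := by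
        exact_mod_cast hEn
      have h2 : ((n:ℝ)) ^ r ≤ (9 * ((k:ℝ) * Real.log k)) ^ r :=
        pow_le_pow_left₀ (by positivity) hnR r
      have h4 : (9:ℝ) ^ r < 5 ^ r * 6 * (r:ℝ) * (Nat.factorial (r - 3) : ℝ) := by
        exact_mod_cast nine_pow_lt hr
      have h5 : (E.card : ℝ) * (6 * (Nat.factorial (r - 3) : ℝ))
          < (5 ^ r * (r:ℝ) * ((k:ℝ) * Real.log k) ^ r) * (6 * (Nat.factorial (r - 3) : ℝ)) := by
        calc (E.card : ℝ) * (6 * (Nat.factorial (r - 3) : ℝ)) ≤ ((n:ℝ)) ^ r := h1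
          _ ≤ (9 * ((k:ℝ) * Real.log k)) ^ r := h2
          _ = 9 ^ r * ((k:ℝ) * Real.log k) ^ r := mul_pow _ _ _
          _ < (5 ^ r * 6 * (r:ℝ) * (Nat.factorial (r - 3) : ℝ)) * ((k:ℝ) * Real.log k) ^ r :=
              mul_lt_mul_of_pos_right h4 hX
          _ = (5 ^ r * (r:ℝ) * ((k:ℝ) * Real.log k) ^ r) * (6 * (Nat.factorial (r - 3) : ℝ)) := by
              ring
      exact lt_of_mul_lt_mul_right h5 (le_of_lt hfacpos)
    have hrm1pos : (0:ℝ) < ((r:ℝ) - 1) ^ (r - 1) := by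
      have : (2:ℝ) ≤ (r:ℝ) - 1 := by linarith
      positivity
    have hfinal : 5 ^ r * (r:ℝ) * ((k:ℝ) * Real.log k) ^ r
        ≤ ((5:ℝ) ^ r * (r:ℝ) ^ r / ((r:ℝ) - 1) ^ (r - 1)) * ((k:ℝ) * Real.log k) ^ r := by
      apply mul_le_mul_of_nonneg_right _ (le_of_lt hX)
      rw [mul_div_assoc]
      apply mul_le_mul_of_nonneg_left _ (by positivity)
      rw [le_div_iff₀ hrm1pos]
      exact r_le_ratio hr
    exact lt_of_lt_of_le hmain hfinal
end

section
/- Fix t > r ≥ 3. For every ε > 0 and all sufficiently large k, there exists an r-graph containing no copy of K_t^r, with chromatic number greater than k, and with at most k^{r+ε} edges; that is, m_k(K_t^r) ≤ k^{r+ε}. -/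
namespace CFGUB
open Finset

variable {N : ℕ}

/-- tournament datum: arbitrary boolean function on ordered pairs (junk off the diagonal order). -/
abbrev Tour (N : ℕ) := (Fin N × Fin N) → Bool

/-- cyclic predicate for a *sorted* triple `a < b < c`. -/
def Cyc (f : Tour N) (a b c : Fin N) : Prop :=
  f (a, b) = f (b, c) ∧ f (a, c) = !f (a, b)

def beats (f : Tour N) (a b : Fin N) : Bool :=
  if a < b then f (a, b) else if b < a then !f (b, a) else false

def NoCyc (f : Tour N) (S : Finset (Fin N)) : Prop :=
  ∀ a ∈ S, ∀ b ∈ S, ∀ c ∈ S, a < b → b < c → ¬Cyc f a b c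

lemma beats_irrefl (f : Tour N) (a : Fin N) : beats f a a = false := by
  simp [beats]

lemma beats_cases {f : Tour N} {a b : Fin N} (h : beats f a b = true) :
    (a < b ∧ f (a, b) = true) ∨ (b < a ∧ f (b, a) = false) := by
  by_cases hab : a < b
  · exact Or.inl ⟨hab, by simpa [beats, hab] using h⟩
  · by_cases hba : b < a
    · refine Or.inr ⟨hba, ?_⟩
      simp only [beats, hab, if_false, hba, if_true] at h
      simpa using h
    · simp [beats, hab, hba] at h

lemma beats_total {f : Tour N} {a b : Fin N} (hne : a ≠ b) :
    beats f a b = true ∨ beats f b a = true := by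
  rcases lt_or_gt_of_ne hne with h | h
  · by_cases hv : f (a, b) = true
    · exact Or.inl (by simp [beats, h, hv])
    · right
      simp only [beats, if_neg (asymm h), if_pos h]
      simp [Bool.not_eq_true] at hv
      simp [hv]
  · by_cases hv : f (b, a) = true
    · exact Or.inr (by simp [beats, h, hv])
    · left
      simp only [beats, if_neg (asymm h), if_pos h]
      simp [Bool.not_eq_true] at hv
      simp [hv]

lemma beats_asymm {f : Tour N} {a b : Fin N} (h : beats f a b = true) :
    beats f b a = false := by
  rcases beats_cases h with ⟨hab, hv⟩ | ⟨hba, hv⟩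
  · simp [beats, hab, asymm hab, hv]
  · simp [beats, hba, asymm hba, hv]

lemma beats_ne {f : Tour N} {a b : Fin N} (h : beats f a b = true) : a ≠ b := by
  rintro rfl; simp [beats_irrefl] at h

/-- no directed 3-cycle inside `S`. -/
lemma noCyc_no3 {f : Tour N} {S : Finset (Fin N)} (h : NoCyc f S) {a b c : Fin N}
    (ha : a ∈ S) (hb : b ∈ S) (hc : c ∈ S)
    (h1 : beats f a b = true) (h2 : beats f b c = true) (h3 : beats f c a = true) : False := by
  rcases beats_cases h1 with ⟨o1, v1⟩ | ⟨o1, v1⟩ <;>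
  rcases beats_cases h2 with ⟨o2, v2⟩ | ⟨o2, v2⟩ <;>
  rcases beats_cases h3 with ⟨o3, v3⟩ | ⟨o3, v3⟩
  · exact absurd (lt_trans o1 o2) (asymm o3)
  · -- a<b, b<c, a<c : cycle a→b→c→a
    exact h a ha b hb c hc o1 o2 ⟨by simp [v1, v2, v3], by simp [v1, v2, v3]⟩
  · -- a<b, c<b, c<a : order c<a<b : triple (c,a,b): f(c,a)=false?, need Cyc f c a b
    exact h c hc a ha b hb o3 o1 ⟨by simp [v1, v2, v3], by simp [v1, v2, v3]⟩
  · -- a<b, c<b, a<c : order a<c<b : Cyc f a c b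
    exact h a ha c hc b hb o3 o2 ⟨by simp [v1, v2, v3], by simp [v1, v2, v3]⟩
  · -- b<a, b<c, c<a : order b<c<a : Cyc f b c a
    exact h b hb c hc a ha o2 o3 ⟨by simp [v1, v2, v3], by simp [v1, v2, v3]⟩
  · -- b<a, b<c, a<c : impossible? b<a<c: triple (b,a,c): edges: a→b (f(b,a)=false), b→c (f(b,c)=true), c→a (f(a,c)=false)
    exact h b hb a ha c hc o1 o3 ⟨by simp [v1, v2, v3], by simp [v1, v2, v3]⟩
  · -- b<a, c<b, c<a : order c<b<a
    exact h c hc b hb a ha o2 o1 ⟨by simp [v1, v2, v3], by simp [v1, v2, v3]⟩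
  · exact absurd (lt_trans o2 o1) (asymm o3)

lemma beats_trans {f : Tour N} {S : Finset (Fin N)} (h : NoCyc f S) {a b c : Fin N}
    (ha : a ∈ S) (hb : b ∈ S) (hc : c ∈ S)
    (h1 : beats f a b = true) (h2 : beats f b c = true) : beats f a c = true := by
  rcases eq_or_ne a c with rfl | hne
  · exact absurd (beats_asymm h1) (by simp [h2])
  rcases beats_total (f := f) hne with h3 | h3
  · exact h3
  · exact absurd (noCyc_no3 h ha hb hc h1 h2 h3) not_false

def rank (f : Tour N) (S : Finset (Fin N)) (x : Fin N) : ℕ :=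
  #(S.filter fun y => beats f x y)

lemma rank_lt_card {f : Tour N} {S : Finset (Fin N)} {x : Fin N} (hx : x ∈ S) :
    rank f S x < S.card := by
  have hsub : S.filter (fun y => beats f x y) ⊆ S.erase x := by
    intro y hy
    rw [mem_filter] at hy
    exact mem_erase.2 ⟨(beats_ne hy.2).symm, hy.1⟩
  calc rank f S x ≤ (S.erase x).card := card_le_card hsub
    _ < S.card := card_erase_lt_of_mem hx

lemma rank_lt_rank {f : Tour N} {S : Finset (Fin N)} (h : NoCyc f S) {a b : Fin N}
    (ha : a ∈ S) (hb : b ∈ S) (hab : beats f a b = true) :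
    rank f S b < rank f S a := by
  apply card_lt_card
  constructor
  · intro y hy
    rw [mem_filter] at hy ⊢
    refine ⟨hy.1, ?_⟩
    have hby := hy.2
    have hay : a ≠ y := by
      rintro rfl
      exact absurd (beats_asymm hby) (by simp [hab])
    rcases beats_total (f := f) hay with h' | h'
    · exact h'
    · exact absurd (noCyc_no3 h ha hb hy.1 hab hby h') not_false
  · intro hsub
    have : b ∈ S.filter (fun y => beats f b y) := hsub (mem_filter.2 ⟨hb, hab⟩)
    rw [mem_filter] at this
    simp [beats_irrefl] at this

/-- key determination: for `a b ∈ S`, `a < b`, under NoCyc, the raw value `f (a,b)`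
is determined by the ranks. -/
lemma value_eq_decide {f : Tour N} {S : Finset (Fin N)} (h : NoCyc f S) {a b : Fin N}
    (ha : a ∈ S) (hb : b ∈ S) (hab : a < b) :
    f (a, b) = decide (rank f S b < rank f S a) := by
  by_cases hv : f (a, b) = true
  · have : beats f a b = true := by simp [beats, hab, hv]
    simp [hv, rank_lt_rank h ha hb this]
  · have hvf : f (a, b) = false := by simpa [Bool.not_eq_true] using hv
    have : beats f b a = true := by
      simp [beats, hab, asymm hab, hvf]
    have hlt := rank_lt_rank h hb ha this
    simp [hvf, decide_eq_false_iff_not]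
    omega

/-- number of boolean functions vanishing on a prescribed finset of coordinates -/
lemma card_vanishing (D : Finset (Fin N × Fin N)) :
    #({g ∈ (univ : Finset (Tour N)) | ∀ p ∈ D, g p = false}) = 2 ^ (N * N - #D) := by
  classical
  rw [← Fintype.card_subtype]
  have e : {g : Tour N // ∀ p ∈ D, g p = false} ≃ ({p : Fin N × Fin N // p ∉ D} → Bool) :=
    { toFun := fun g q => g.1 q.1
      invFun := fun h => ⟨fun p => if hp : p ∈ D then false else h ⟨p, hp⟩,
        fun p hp => by simp [hp]⟩
      left_inv := by
        rintro ⟨g, hg⟩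
        ext p
        by_cases hp : p ∈ D
        · simp [hp, hg p hp]
        · simp [hp]
      right_inv := by
        intro h
        funext q
        simp [q.2] }
  rw [Fintype.card_congr e, Fintype.card_fun]
  simp only [Fintype.card_bool]
  congr 1
  rw [Fintype.card_subtype_compl, Fintype.card_coe]
  congr 1
  simp

lemma card_sorted_pairs (S : Finset (Fin N)) :
    #({p ∈ S ×ˢ S | p.1 < p.2}) = (#S).choose 2 := by
  classical
  rw [← card_powersetCard 2 S]
  apply card_bij (fun p _ => ({p.1, p.2} : Finset (Fin N)))
  · rintro ⟨a, b⟩ hp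
    rw [mem_filter, mem_product] at hp
    rw [mem_powersetCard]
    refine ⟨?_, card_pair (ne_of_lt hp.2)⟩
    intro x hx
    rcases mem_insert.1 hx with rfl | hx
    · exact hp.1.1
    · rw [mem_singleton] at hx; subst hx; exact hp.1.2
  · rintro ⟨a, b⟩ hp ⟨c, d⟩ hq h
    rw [mem_filter, mem_product] at hp hq
    have h' : ({a, b} : Set (Fin N)) = {c, d} := by
      have := congrArg (fun (s : Finset (Fin N)) => (s : Set (Fin N))) h
      simpa using this
    rcases Set.pair_eq_pair_iff.1 h' with ⟨rfl, rfl⟩ | ⟨rfl, rfl⟩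
    · rfl
    · exact absurd (lt_trans hp.2 hq.2) (lt_irrefl _)
  · intro t ht
    rw [mem_powersetCard] at ht
    obtain ⟨x, y, hxy, rfl⟩ := card_eq_two.1 ht.2
    have hx : x ∈ S := ht.1 (by simp)
    have hy : y ∈ S := ht.1 (by simp)
    rcases lt_or_gt_of_ne hxy with h | h
    · exact ⟨(x, y), mem_filter.2 ⟨mem_product.2 ⟨hx, hy⟩, h⟩, rfl⟩
    · exact ⟨(y, x), mem_filter.2 ⟨mem_product.2 ⟨hy, hx⟩, h⟩, by
        simp [Finset.pair_comm]⟩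

open Classical in
noncomputable def keyFun (N m : ℕ) (hN : 0 < N) (hm : 0 < m) (f : Tour N) :
    (Fin m → Fin N) × (Fin m → Fin m) :=
  if hf : ∃ S : Finset (Fin N), S.card = m ∧ NoCyc f S then
    ((fun i => (hf.choose.orderIsoOfFin hf.choose_spec.1 i : Fin N)),
     (fun i => ⟨rank f hf.choose ((hf.choose.orderIsoOfFin hf.choose_spec.1 i : Fin N)),
        by
          have := rank_lt_card (f := f) (S := hf.choose)
            (x := ((hf.choose.orderIsoOfFin hf.choose_spec.1 i : Fin N))) (Finset.coe_mem _)
          exact lt_of_lt_of_le this (le_of_eq hf.choose_spec.1)⟩))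
  else (fun _ => ⟨0, hN⟩, fun _ => ⟨0, hm⟩)

lemma key_spec {N m : ℕ} (hN : 0 < N) (hm : 0 < m) (f : Tour N)
    (κ0 : (Fin m → Fin N) × (Fin m → Fin m))
    (hf : ∃ S : Finset (Fin N), S.card = m ∧ NoCyc f S)
    (hkey : keyFun N m hN hm f = κ0) :
    Function.Injective κ0.1 ∧ hf.choose = univ.image κ0.1 ∧
      ∀ i j : Fin m, κ0.1 i < κ0.1 j →
        f (κ0.1 i, κ0.1 j) = decide ((κ0.2 j : ℕ) < (κ0.2 i : ℕ)) := by
  classical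
  rw [keyFun, dif_pos hf] at hkey
  set S := hf.choose with hSdef
  set u : Fin m → Fin N := fun i => (S.orderIsoOfFin hf.choose_spec.1 i : Fin N) with hu
  have h1 : u = κ0.1 := congrArg Prod.fst hkey
  have h2 := congrArg Prod.snd hkey
  have huinj : Function.Injective u := fun i j hij =>
    (S.orderIsoOfFin hf.choose_spec.1).injective (Subtype.coe_injective hij)
  have hinj : Function.Injective κ0.1 := h1 ▸ huinj
  have humem : ∀ i, u i ∈ S := fun i => Finset.coe_mem _
  have hSeq : S = univ.image κ0.1 := by
    rw [← h1]
    apply Finset.eq_of_subset_of_card_le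
    · intro x hx
      -- x ∈ S means x is in the range of the order iso
      obtain ⟨i, hi⟩ := (S.orderIsoOfFin hf.choose_spec.1).surjective ⟨x, hx⟩
      rw [mem_image]
      exact ⟨i, mem_univ _, congrArg Subtype.val hi⟩
    · apply card_le_card
      intro x hx
      rw [mem_image] at hx
      obtain ⟨i, -, rfl⟩ := hx
      exact humem i
  have hrank : ∀ i, rank f S (u i) = (κ0.2 i : ℕ) := by
    intro i
    exact congrArg Fin.val (congrFun h2 i)
  refine ⟨hinj, hSeq, ?_⟩
  intro i j hlt
  have hmi : κ0.1 i ∈ S := h1 ▸ humem i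
  have hmj : κ0.1 j ∈ S := h1 ▸ humem j
  have := value_eq_decide hf.choose_spec.2 hmi hmj hlt
  rw [this]
  have hri : rank f S (κ0.1 i) = (κ0.2 i : ℕ) := by rw [← congrFun h1 i]; exact hrank i
  have hrj : rank f S (κ0.1 j) = (κ0.2 j : ℕ) := by rw [← congrFun h1 j]; exact hrank j
  rw [hri, hrj]

lemma exists_good (N m : ℕ) (hm2 : 2 ≤ m) (hmN : m ≤ N)
    (hcnt : N ^ m * m ^ m < 2 ^ (m.choose 2)) :
    ∃ f : Tour N, ∀ S : Finset (Fin N), S.card = m →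
      ∃ a b c, a ∈ S ∧ b ∈ S ∧ c ∈ S ∧ a < b ∧ b < c ∧ Cyc f a b c := by
  classical
  have hN : 0 < N := lt_of_lt_of_le (by omega) hmN
  have hm : 0 < m := by omega
  set Bad := ({f ∈ (univ : Finset (Tour N)) |
      ∃ S : Finset (Fin N), S.card = m ∧ NoCyc f S}) with hBadDef
  have hfiber : ∀ κ0 : (Fin m → Fin N) × (Fin m → Fin m),
      #({f ∈ Bad | keyFun N m hN hm f = κ0}) ≤ 2 ^ (N * N - m.choose 2) := by
    intro κ0
    rcases eq_empty_or_nonempty ({f ∈ Bad | keyFun N m hN hm f = κ0}) with hE | hNE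
    · rw [hE]; simp
    set σ : Fin m → Fin N := κ0.1 with hσ
    set Simg : Finset (Fin N) := univ.image σ with hSimgdef
    have hspec : ∀ f ∈ ({f ∈ Bad | keyFun N m hN hm f = κ0}),
        Function.Injective σ ∧ ∀ i j : Fin m, σ i < σ j →
          f (σ i, σ j) = decide ((κ0.2 j : ℕ) < (κ0.2 i : ℕ)) := by
      intro f hfm
      rw [mem_filter] at hfm
      obtain ⟨hfb, hkey⟩ := hfm
      rw [hBadDef, mem_filter] at hfb
      obtain ⟨hi, -, h3⟩ := key_spec hN hm f κ0 hfb.2 hkey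
      exact ⟨hi, h3⟩
    obtain ⟨f₀, hf₀⟩ := hNE
    have hσinj : Function.Injective σ := (hspec f₀ hf₀).1
    have hScard : #Simg = m := by
      rw [hSimgdef, Finset.card_image_of_injective _ hσinj, card_univ, Fintype.card_fin]
    set D : Finset (Fin N × Fin N) := {p ∈ Simg ×ˢ Simg | p.1 < p.2} with hDdef
    have hDcard : #D = m.choose 2 := by rw [hDdef, card_sorted_pairs, hScard]
    calc #({f ∈ Bad | keyFun N m hN hm f = κ0})
        ≤ #({g ∈ (univ : Finset (Tour N)) | ∀ p ∈ D, g p = false}) := by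
          apply card_le_card_of_injOn
            (fun f p => if p.1 ∈ Simg ∧ p.2 ∈ Simg ∧ p.1 < p.2 then false else f p)
          · intro f hfm
            rw [Finset.mem_coe, mem_filter]
            refine ⟨mem_univ _, ?_⟩
            intro p hp
            rw [hDdef, mem_filter, mem_product] at hp
            simp only [hp.1.1, hp.1.2, hp.2, and_self, if_true]
          · intro f₁ h₁ f₂ h₂ heq
            rw [Finset.mem_coe] at h₁ h₂
            funext p
            by_cases hc : p.1 ∈ Simg ∧ p.2 ∈ Simg ∧ p.1 < p.2
            · obtain ⟨ha, hb, hab⟩ := hc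
              rw [hSimgdef, mem_image] at ha hb
              obtain ⟨i, -, hi⟩ := ha
              obtain ⟨j, -, hj⟩ := hb
              have e₁ := ((hspec f₁ h₁).2 i j (by rw [hi, hj]; exact hab))
              have e₂ := ((hspec f₂ h₂).2 i j (by rw [hi, hj]; exact hab))
              rw [hi, hj] at e₁ e₂
              rw [show p = (p.1, p.2) from rfl, e₁, e₂]
            · have e1 := congrFun heq p
              simp only [hc, if_false] at e1
              exact e1
      _ = 2 ^ (N * N - m.choose 2) := by rw [card_vanishing, hDcard]
  have hBadCard : #Bad ≤ 2 ^ (N * N - m.choose 2) * (N ^ m * m ^ m) := by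
    have := card_le_mul_card_image_of_maps_to
      (f := keyFun N m hN hm) (s := Bad)
      (t := (univ : Finset ((Fin m → Fin N) × (Fin m → Fin m))))
      (fun a _ => mem_univ _) (2 ^ (N * N - m.choose 2)) (fun b _ => hfiber b)
    apply this.trans
    apply Nat.mul_le_mul_left
    rw [card_univ]
    simp [Fintype.card_prod, Fintype.card_fun, Fintype.card_fin]
  have hlt : #Bad < 2 ^ (N * N) := by
    have hc2 : m.choose 2 ≤ N * N := by
      calc m.choose 2 ≤ m ^ 2 := Nat.choose_le_pow m 2
        _ = m * m := by ring
        _ ≤ N * N := Nat.mul_le_mul hmN hmN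
    calc #Bad ≤ 2 ^ (N * N - m.choose 2) * (N ^ m * m ^ m) := hBadCard
      _ < 2 ^ (N * N - m.choose 2) * 2 ^ (m.choose 2) := by
          apply Nat.mul_lt_mul_left (Nat.two_pow_pos _) |>.mpr
          · exact hcnt
      _ = 2 ^ (N * N) := by rw [← pow_add, Nat.sub_add_cancel hc2]
  -- extract a good tournament
  have : ∃ f : Tour N, f ∉ Bad := by
    by_contra hno
    push_neg at hno
    have : (univ : Finset (Tour N)) ⊆ Bad := fun f _ => hno f
    have hcard := card_le_card this
    rw [card_univ] at hcard
    have : Fintype.card (Tour N) = 2 ^ (N * N) := by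
      simp [Fintype.card_fun, Fintype.card_prod, Fintype.card_fin]
    omega
  obtain ⟨f, hf⟩ := this
  refine ⟨f, ?_⟩
  intro S hS
  rw [hBadDef, mem_filter] at hf
  push_neg at hf
  have hnc := hf (mem_univ f) S hS
  rw [NoCyc] at hnc
  push_neg at hnc
  obtain ⟨a, ha, b, hb, c, hc, hab, hbc, hcyc⟩ := hnc
  exact ⟨a, b, c, ha, hb, hc, hab, hbc, hcyc⟩

/-- the edge predicate: the three smallest vertices of `e` form a cyclic triangle. -/
def EdgeP (f : Tour N) (e : Finset (Fin N)) : Prop :=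
  ∃ a b c : Fin N, a ∈ e ∧ b ∈ e ∧ c ∈ e ∧ a < b ∧ b < c ∧ Cyc f a b c ∧
    ∀ x ∈ e, x = a ∨ x = b ∨ x = c ∨ c < x

section OrderLemmas
variable {α : Type*} [LinearOrder α]

lemma bottom_unique {e : Finset α} {a b c a' b' c' : α}
    (hab : a < b) (hbc : b < c) (ha : a ∈ e) (hb : b ∈ e) (hc : c ∈ e)
    (hbot : ∀ x ∈ e, x = a ∨ x = b ∨ x = c ∨ c < x)
    (hab' : a' < b') (hbc' : b' < c') (ha' : a' ∈ e) (hb' : b' ∈ e) (hc' : c' ∈ e)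
    (hbot' : ∀ x ∈ e, x = a' ∨ x = b' ∨ x = c' ∨ c' < x) :
    a = a' ∧ b = b' ∧ c = c' := by
  have key : ∀ (p q s p' q' s' : α), p < q → q < s → p ∈ e → q ∈ e → s ∈ e →
      (∀ x ∈ e, x = p' ∨ x = q' ∨ x = s' ∨ s' < x) → p' < q' → q' < s' →
      ¬ s < s' := by
    intro p q s p' q' s' hpq hqs hp hq hs hbot'' hpq' hqs' hss'
    -- p,q,s are three distinct elements all in {p', q', s'}
    have hmem : ∀ x ∈ e, x < s' → x = p' ∨ x = q' ∨ x = s' := by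
      intro x hx hlt
      rcases hbot'' x hx with h | h | h | h
      · exact Or.inl h
      · exact Or.inr (Or.inl h)
      · exact Or.inr (Or.inr h)
      · exact absurd hlt (asymm h)
    have hsub : ({p, q, s} : Finset α) ⊆ {p', q', s'} := by
      intro x hx
      simp only [mem_insert, mem_singleton] at hx ⊢
      rcases hx with rfl | rfl | rfl
      · exact hmem x hp (lt_trans (lt_trans hpq hqs) hss')
      · exact hmem x hq (lt_trans hqs hss')
      · exact hmem x hs hss'
    have hcard : ({p, q, s} : Finset α).card = 3 := by
      rw [card_insert_of_notMem, card_insert_of_notMem, card_singleton]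
      · simp only [mem_singleton]; exact ne_of_lt hqs
      · simp only [mem_insert, mem_singleton]
        push_neg
        exact ⟨ne_of_lt hpq, ne_of_lt (lt_trans hpq hqs)⟩
    have hcard' : ({p', q', s'} : Finset α).card ≤ 3 := by
      apply le_trans (card_insert_le _ _)
      apply Nat.succ_le_succ
      apply le_trans (card_insert_le _ _)
      simp
    have heq : ({p, q, s} : Finset α) = {p', q', s'} :=
      eq_of_subset_of_card_le hsub (by omega)
    have : s' ∈ ({p, q, s} : Finset α) := by rw [heq]; simp
    simp only [mem_insert, mem_singleton] at this
    rcases this with rfl | rfl | rfl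
    · exact absurd (lt_trans (lt_trans hpq hqs) hss') (lt_irrefl _)
    · exact absurd (lt_trans hqs hss') (lt_irrefl _)
    · exact absurd hss' (lt_irrefl _)
  have hcc1 : ¬ c < c' := key a b c a' b' c' hab hbc ha hb hc hbot' hab' hbc'
  have hcc2 : ¬ c' < c := key a' b' c' a b c hab' hbc' ha' hb' hc' hbot hab hbc
  have hcc : c = c' := le_antisymm (not_lt.1 hcc2) (not_lt.1 hcc1)
  subst hcc
  have hbb : b = b' := by
    rcases hbot' b hb with h | h | h | h
    · exfalso
      subst h
      rcases hbot b' hb' with h2 | h2 | h2 | h2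
      · subst h2
        exact absurd (hab.trans hab') (lt_irrefl _)
      · subst h2
        exact absurd hab' (lt_irrefl _)
      · subst h2
        exact absurd hbc' (lt_irrefl _)
      · exact absurd (h2.trans hbc') (lt_irrefl _)
    · exact h
    · subst h
      exact absurd hbc (lt_irrefl _)
    · exact absurd (hbc.trans h) (lt_irrefl _)
  subst hbb
  have haa : a = a' := by
    rcases hbot' a ha with h | h | h | h
    · exact h
    · exact absurd hab (h ▸ lt_irrefl _)
    · exact absurd (h ▸ hab.trans hbc) (lt_irrefl _)
    · exact absurd ((hab.trans hbc).trans h) (lt_irrefl _)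
  exact ⟨haa, rfl, rfl⟩

lemma four_smallest {V : Finset α} (h4 : 4 ≤ V.card) :
    ∃ u₁ u₂ u₃ u₄ : α, u₁ ∈ V ∧ u₂ ∈ V ∧ u₃ ∈ V ∧ u₄ ∈ V ∧
      u₁ < u₂ ∧ u₂ < u₃ ∧ u₃ < u₄ ∧
      ∀ x ∈ V, x = u₁ ∨ x = u₂ ∨ x = u₃ ∨ x = u₄ ∨ u₄ < x := by
  have hne1 : V.Nonempty := card_pos.1 (by omega)
  set u₁ := V.min' hne1 with hu₁
  set V₂ := V.erase u₁ with hV₂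
  have hc2 : V₂.card = V.card - 1 := card_erase_of_mem (min'_mem _ _)
  have hne2 : V₂.Nonempty := card_pos.1 (by omega)
  set u₂ := V₂.min' hne2 with hu₂
  set V₃ := V₂.erase u₂ with hV₃
  have hc3 : V₃.card = V₂.card - 1 := card_erase_of_mem (min'_mem _ _)
  have hne3 : V₃.Nonempty := card_pos.1 (by omega)
  set u₃ := V₃.min' hne3 with hu₃
  set V₄ := V₃.erase u₃ with hV₄
  have hc4 : V₄.card = V₃.card - 1 := card_erase_of_mem (min'_mem _ _)
  have hne4 : V₄.Nonempty := card_pos.1 (by omega)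
  set u₄ := V₄.min' hne4 with hu₄
  have hm2 : u₂ ∈ V₂ := min'_mem _ _
  have hm3 : u₃ ∈ V₃ := min'_mem _ _
  have hm4 : u₄ ∈ V₄ := min'_mem _ _
  have hm2V : u₂ ∈ V := mem_of_mem_erase hm2
  have hm3V₂ : u₃ ∈ V₂ := mem_of_mem_erase hm3
  have hm3V : u₃ ∈ V := mem_of_mem_erase hm3V₂
  have hm4V₃ : u₄ ∈ V₃ := mem_of_mem_erase hm4
  have hm4V₂ : u₄ ∈ V₂ := mem_of_mem_erase hm4V₃
  have hm4V : u₄ ∈ V := mem_of_mem_erase hm4V₂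
  have h12 : u₁ < u₂ := lt_of_le_of_ne (min'_le _ _ hm2V) (Ne.symm (ne_of_mem_erase hm2))
  have h23 : u₂ < u₃ := lt_of_le_of_ne (min'_le _ _ hm3V₂) (Ne.symm (ne_of_mem_erase hm3))
  have h34 : u₃ < u₄ := lt_of_le_of_ne (min'_le _ _ hm4V₃) (Ne.symm (ne_of_mem_erase hm4))
  refine ⟨u₁, u₂, u₃, u₄, min'_mem _ _, hm2V, hm3V, hm4V, h12, h23, h34, ?_⟩
  intro x hx
  by_cases e1 : x = u₁
  · exact Or.inl e1
  by_cases e2 : x = u₂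
  · exact Or.inr (Or.inl e2)
  by_cases e3 : x = u₃
  · exact Or.inr (Or.inr (Or.inl e3))
  by_cases e4 : x = u₄
  · exact Or.inr (Or.inr (Or.inr (Or.inl e4)))
  have hx4 : x ∈ V₄ := by
    rw [hV₄, mem_erase]
    refine ⟨e3, ?_⟩
    rw [hV₃, mem_erase]
    refine ⟨e2, ?_⟩
    rw [hV₂, mem_erase]
    exact ⟨e1, hx⟩
  exact Or.inr (Or.inr (Or.inr (Or.inr (lt_of_le_of_ne (min'_le _ _ hx4) (Ne.symm e4)))))

lemma exists_bottom_split (S : Finset α) (j : ℕ) (hj : j ≤ S.card) :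
    ∃ A ⊆ S, A.card + j = S.card ∧ ∀ x ∈ A, ∀ y ∈ S, y ∉ A → x < y := by
  induction j with
  | zero => exact ⟨S, Finset.Subset.refl S, by omega, fun x _ y hy hny => absurd hy hny⟩
  | succ j ih =>
    obtain ⟨A, hAS, hAcard, hAbot⟩ := ih (by omega)
    have hAne : A.Nonempty := card_pos.1 (by omega)
    set M := A.max' hAne with hM
    refine ⟨A.erase M, (erase_subset _ _).trans hAS, ?_, ?_⟩
    · rw [card_erase_of_mem (max'_mem _ _)]
      omega
    · intro x hx y hy hny
      by_cases hyA : y ∈ A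
      · have hyM : y = M := by
          by_contra hne
          exact hny (mem_erase.2 ⟨hne, hyA⟩)
        subst hyM
        exact lt_of_le_of_ne (le_max' _ _ (mem_of_mem_erase hx)) (ne_of_mem_erase hx)
      · exact hAbot x (mem_of_mem_erase hx) y hy hyA

end OrderLemmas

lemma no_four_cyc (x12 x13 x14 x23 x24 x34 : Bool) :
    ¬((x12 = x23 ∧ x13 = !x12) ∧ (x12 = x24 ∧ x14 = !x12) ∧
      (x13 = x34 ∧ x14 = !x13) ∧ (x23 = x34 ∧ x24 = !x23)) := by
  revert x12 x13 x14 x23 x24 x34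
  decide


lemma count_arith {r k L h m N : ℕ} (hr : 3 ≤ r) (hk1 : 1 ≤ k)
    (hkL : k < 2 ^ (L + 1)) (hh : h = 4 * L + 4 * r + 35) (hm : m = 2 * h + 2)
    (hN : N = k * (m + r - 3) + 1) : N ^ m * m ^ m < 2 ^ m.choose 2 := by
  have hNm : N * m ≤ 2 ^ h := by
    have h1 : N ≤ k * (m + r - 2) := by
      calc N = k * (m + r - 3) + 1 := hN
        _ ≤ k * (m + r - 3) + k := by omega
        _ = k * (m + r - 3 + 1) := by rw [Nat.mul_succ]
        _ = k * (m + r - 2) := by congr 1; omega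
    have h2 : N * m ≤ k * ((m + r) * (m + r)) := by
      calc N * m ≤ (k * (m + r - 2)) * m := Nat.mul_le_mul_right _ h1
        _ = k * ((m + r - 2) * m) := by ring
        _ ≤ k * ((m + r) * (m + r)) :=
            Nat.mul_le_mul_left _ (Nat.mul_le_mul (by omega) (by omega))
    have e1 : L + 1 ≤ 2 ^ L := Nat.lt_two_pow_self
    have e2 : r + 1 ≤ 2 ^ r := Nat.lt_two_pow_self
    have h4 : m + r ≤ 2 ^ (L + r + 17) := by
      calc m + r = 8 * L + 9 * r + 72 := by omega
        _ ≤ 131072 * ((L + 1) * (r + 1)) := by nlinarith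
        _ ≤ 131072 * (2 ^ L * 2 ^ r) := Nat.mul_le_mul_left _ (Nat.mul_le_mul e1 e2)
        _ = 2 ^ (L + r + 17) := by
            rw [pow_add, pow_add]
            norm_num
            ring
    have h5 : (m + r) * (m + r) ≤ 2 ^ (2 * L + 2 * r + 34) := by
      calc (m + r) * (m + r) ≤ 2 ^ (L + r + 17) * 2 ^ (L + r + 17) := Nat.mul_le_mul h4 h4
        _ = 2 ^ (2 * L + 2 * r + 34) := by rw [← pow_add]; congr 1; omega
    calc N * m ≤ k * ((m + r) * (m + r)) := h2
      _ ≤ 2 ^ (L + 1) * 2 ^ (2 * L + 2 * r + 34) :=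
          Nat.mul_le_mul (le_of_lt hkL) h5
      _ = 2 ^ (3 * L + 2 * r + 35) := by rw [← pow_add]; congr 1; omega
      _ ≤ 2 ^ h := Nat.pow_le_pow_right (by norm_num) (by omega)
  have hc : m.choose 2 = (h + 1) * (2 * h + 1) := by
    rw [Nat.choose_two_right, hm]
    rw [show 2 * h + 2 - 1 = 2 * h + 1 by omega]
    rw [show (2 * h + 2) * (2 * h + 1) = 2 * ((h + 1) * (2 * h + 1)) by ring]
    rw [Nat.mul_div_cancel_left _ (by norm_num : 0 < 2)]
  have hexp : h * m < (h + 1) * (2 * h + 1) := by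
    rw [hm]; nlinarith
  calc N ^ m * m ^ m = (N * m) ^ m := (mul_pow N m m).symm
    _ ≤ (2 ^ h) ^ m := Nat.pow_le_pow_left hNm m
    _ = 2 ^ (h * m) := by rw [← pow_mul]
    _ < 2 ^ m.choose 2 := by
        rw [hc]
        exact Nat.pow_lt_pow_right (by norm_num) hexp

open Filter Asymptotics in
lemma eventual_bound (r : ℕ) (hr : 3 ≤ r) (ε : ℝ) (hε : 0 < ε) :
    ∀ᶠ k : ℕ in atTop, ((8 * Nat.log 2 k + 9 * r + 72 : ℕ) : ℝ) ≤ (k : ℝ) ^ (ε / (r : ℝ)) := by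
  have hrpos : (0:ℝ) < (r : ℝ) := by exact_mod_cast Nat.pos_of_ne_zero (by omega)
  set δ := ε / (r : ℝ) with hδdef
  have hδ : 0 < δ := div_pos hε hrpos
  have hlog : ∀ᶠ x : ℝ in atTop, Real.log x ≤ (1 / 32) * x ^ δ := by
    have h1 := isLittleO_iff.mp (isLittleO_log_rpow_atTop hδ)
      (show (0:ℝ) < 1 / 32 by norm_num)
    filter_upwards [h1, eventually_ge_atTop (1:ℝ)] with x hx hx1
    rw [Real.norm_eq_abs, Real.norm_eq_abs, abs_of_nonneg (Real.log_nonneg hx1),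
      abs_of_nonneg (Real.rpow_nonneg (by linarith) _)] at hx
    exact hx
  have hconst : ∀ᶠ x : ℝ in atTop, ((9 * r + 72 : ℕ) : ℝ) ≤ (1 / 2) * x ^ δ := by
    have h2 := (tendsto_rpow_atTop hδ).eventually_ge_atTop (2 * ((9 * r + 72 : ℕ) : ℝ))
    filter_upwards [h2] with x hx
    linarith
  have hcomb := tendsto_natCast_atTop_atTop (R := ℝ) |>.eventually (hlog.and hconst)
  filter_upwards [hcomb, eventually_ge_atTop 1] with k hk hk1
  obtain ⟨hlogk, hconstk⟩ := hk
  have hk1R : (1:ℝ) ≤ (k : ℝ) := by exact_mod_cast hk1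
  have hnl : ((Nat.log 2 k : ℕ) : ℝ) * Real.log 2 ≤ Real.log k := by
    rw [← Real.log_pow]
    apply Real.log_le_log (by positivity)
    exact_mod_cast Nat.pow_log_le_self 2 (by omega)
  have hl2 : (0.6931:ℝ) ≤ Real.log 2 := by
    have := Real.log_two_gt_d9
    linarith
  have hlognn : (0:ℝ) ≤ Real.log k := Real.log_nonneg hk1R
  have hLnn : (0:ℝ) ≤ ((Nat.log 2 k : ℕ) : ℝ) := by positivity
  have hL : ((Nat.log 2 k : ℕ) : ℝ) ≤ 2 * Real.log k := by nlinarith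
  have expand : ((8 * Nat.log 2 k + 9 * r + 72 : ℕ) : ℝ)
      = 8 * ((Nat.log 2 k : ℕ) : ℝ) + ((9 * r + 72 : ℕ) : ℝ) := by push_cast; ring
  rw [expand]
  have h16 : 8 * ((Nat.log 2 k : ℕ) : ℝ) ≤ 16 * Real.log k := by linarith
  have hxδ := hlogk
  have hfin : 16 * Real.log k ≤ (1/2) * (k:ℝ) ^ δ := by linarith
  linarith

end CFGUB

lemma final_real {Ec N k M r : ℕ} {ε : ℝ} (hk1 : 1 ≤ k) (hr1 : 1 ≤ r)
    (hEc : Ec ≤ N ^ r) (hNM : N ≤ k * M)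
    (hM : (M : ℝ) ≤ (k : ℝ) ^ (ε / (r : ℝ))) :
    (Ec : ℝ) ≤ (k : ℝ) ^ ((r : ℝ) + ε) := by
  have hkpos : (0:ℝ) < (k : ℝ) := by exact_mod_cast hk1
  have hrne : ((r : ℕ) : ℝ) ≠ 0 := by
    have : (0:ℝ) < ((r : ℕ) : ℝ) := by exact_mod_cast hr1
    linarith
  have hMnn : (0:ℝ) ≤ (M : ℝ) := by positivity
  have step1 : (Ec : ℝ) ≤ ((N : ℝ)) ^ r := by
    calc (Ec : ℝ) ≤ ((N ^ r : ℕ) : ℝ) := by exact_mod_cast hEc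
      _ = (N : ℝ) ^ r := by push_cast; ring
  have step2 : ((N : ℝ)) ^ r ≤ ((k : ℝ) * (M : ℝ)) ^ r := by
    apply pow_le_pow_left₀ (by positivity)
    calc (N : ℝ) ≤ ((k * M : ℕ) : ℝ) := by exact_mod_cast hNM
      _ = (k : ℝ) * (M : ℝ) := by push_cast; ring
  have step3 : ((k : ℝ) * (M : ℝ)) ^ r = (k : ℝ) ^ r * (M : ℝ) ^ r := mul_pow _ _ _
  have step4 : (M : ℝ) ^ r ≤ ((k : ℝ) ^ (ε / (r : ℝ))) ^ r :=
    pow_le_pow_left₀ hMnn hM r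
  have step5 : ((k : ℝ) ^ (ε / (r : ℝ))) ^ r = (k : ℝ) ^ ε := by
    rw [← Real.rpow_natCast ((k : ℝ) ^ (ε / (r : ℝ))) r, ← Real.rpow_mul (le_of_lt hkpos),
      div_mul_cancel₀ _ hrne]
  have step6 : (k : ℝ) ^ ((r : ℝ) + ε) = (k : ℝ) ^ r * (k : ℝ) ^ ε := by
    rw [Real.rpow_add hkpos, Real.rpow_natCast]
  have hkr : (0:ℝ) ≤ (k : ℝ) ^ r := by positivity
  calc (Ec : ℝ) ≤ ((k : ℝ) * (M : ℝ)) ^ r := step1.trans step2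
    _ = (k : ℝ) ^ r * (M : ℝ) ^ r := step3
    _ ≤ (k : ℝ) ^ r * (k : ℝ) ^ ε := by
        rw [← step5]
        exact mul_le_mul_of_nonneg_left step4 hkr
    _ = (k : ℝ) ^ ((r : ℝ) + ε) := step6.symm

open Finset CFGUB in
set_option maxHeartbeats 1000000 in
/-- **Theorem.** Fix `t > r ≥ 3`. For every `ε > 0` and all sufficiently large `k` there
exists a `K_t^r`-free `r`-graph with chromatic number greater than `k` and at most
`k^(r+ε)` edges. -/
theorem clique_free_general_upper_bound (r t : ℕ) (hr : 3 ≤ r) (htr : r < t)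
    (ε : ℝ) (hε : 0 < ε) :
    ∃ k₀ : ℕ, ∀ k : ℕ, k₀ ≤ k →
      ∃ (n : ℕ) (E : Finset (Finset (Fin n))),
        IsRGraph r E ∧ ¬ HasCompleteR r t E ∧ ¬ HypColorable E k ∧
        (E.card : ℝ) ≤ (k : ℝ) ^ ((r : ℝ) + ε) := by
  classical
  obtain ⟨k₀, hk₀⟩ := Filter.eventually_atTop.mp
    ((CFGUB.eventual_bound r hr ε hε).and (Filter.eventually_ge_atTop 1))
  refine ⟨k₀, fun k hk => ?_⟩
  obtain ⟨hMk, hk1⟩ := hk₀ k hk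
  set L := Nat.log 2 k with hL
  set h : ℕ := 4 * L + 4 * r + 35 with hh
  set m : ℕ := 2 * h + 2 with hm
  set B : ℕ := m + r - 3 with hB
  set N : ℕ := k * B + 1 with hN
  have hm3 : 3 ≤ m := by omega
  have hBm : m ≤ B := by omega
  have hmN : m ≤ N := by
    calc m ≤ B := hBm
      _ = 1 * B := (one_mul B).symm
      _ ≤ k * B := Nat.mul_le_mul_right _ hk1
      _ ≤ N := by omega
  -- a good tournament on `Fin N`
  have hcnt : N ^ m * m ^ m < 2 ^ m.choose 2 :=
    count_arith hr hk1 (Nat.lt_pow_succ_log_self (by norm_num) k) hh hm (by rw [hN, hB])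
  obtain ⟨f, hf⟩ := exists_good N m (by omega) hmN hcnt
  set E : Finset (Finset (Fin N)) := {e ∈ (univ : Finset (Fin N)).powersetCard r | EdgeP f e}
    with hE
  have hmemE : ∀ e ∈ E, e.card = r ∧ EdgeP f e := by
    intro e he
    rw [hE, mem_filter, mem_powersetCard] at he
    exact ⟨he.1.2, he.2⟩
  refine ⟨N, E, fun e he => (hmemE e he).1, ?_, ?_, ?_⟩
  · -- K_t-free
    rintro ⟨S, hScard, hall⟩
    have hrt : r + 1 ≤ S.card := by omega
    obtain ⟨V, hVS, hVcard⟩ := S.exists_subset_card_eq hrt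
    obtain ⟨u₁, u₂, u₃, u₄, hw1, hw2, hw3, hw4, h12, h23, h34, hbot⟩ :=
      four_smallest (V := V) (by omega)
    have key : ∀ w a b c : Fin N, w ∈ V → a < b → b < c →
        a ∈ V.erase w → b ∈ V.erase w → c ∈ V.erase w →
        (∀ x ∈ V.erase w, x = a ∨ x = b ∨ x = c ∨ c < x) → Cyc f a b c := by
      intro w a b c hw hab hbc ha hb hc hbt
      have heE : V.erase w ∈ E := by
        apply hall
        · exact (erase_subset _ _).trans hVS
        · rw [card_erase_of_mem hw, hVcard]
          omega
      obtain ⟨-, a', b', c', ha', hb', hc', hab', hbc', hcyc', hbt'⟩ :=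
        (by rw [hE, mem_filter] at heE; exact heE :
          (V.erase w ∈ (univ : Finset (Fin N)).powersetCard r) ∧ EdgeP f (V.erase w))
      obtain ⟨e1, e2, e3⟩ := bottom_unique hab' hbc' ha' hb' hc' hbt' hab hbc ha hb hc hbt
      rw [← e1, ← e2, ← e3]
      exact hcyc'
    have hne14 : u₁ ≠ u₄ := ne_of_lt ((h12.trans h23).trans h34)
    have hne24 : u₂ ≠ u₄ := ne_of_lt (h23.trans h34)
    have hne34 : u₃ ≠ u₄ := ne_of_lt h34
    have hne13 : u₁ ≠ u₃ := ne_of_lt (h12.trans h23)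
    have hne23 : u₂ ≠ u₃ := ne_of_lt h23
    have hne12 : u₁ ≠ u₂ := ne_of_lt h12
    have c123 : Cyc f u₁ u₂ u₃ := by
      apply key u₄ u₁ u₂ u₃ hw4 h12 h23 (mem_erase.2 ⟨hne14, hw1⟩)
        (mem_erase.2 ⟨hne24, hw2⟩) (mem_erase.2 ⟨hne34, hw3⟩)
      intro x hx
      obtain ⟨hxne, hxV⟩ := mem_erase.1 hx
      rcases hbot x hxV with h' | h' | h' | h' | h'
      · exact Or.inl h'
      · exact Or.inr (Or.inl h')
      · exact Or.inr (Or.inr (Or.inl h'))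
      · exact absurd h' hxne
      · exact Or.inr (Or.inr (Or.inr (h34.trans h')))
    have c124 : Cyc f u₁ u₂ u₄ := by
      apply key u₃ u₁ u₂ u₄ hw3 h12 (h23.trans h34) (mem_erase.2 ⟨hne13, hw1⟩)
        (mem_erase.2 ⟨hne23, hw2⟩) (mem_erase.2 ⟨(ne_of_lt h34).symm, hw4⟩)
      intro x hx
      obtain ⟨hxne, hxV⟩ := mem_erase.1 hx
      rcases hbot x hxV with h' | h' | h' | h' | h'
      · exact Or.inl h'
      · exact Or.inr (Or.inl h')
      · exact absurd h' hxne
      · exact Or.inr (Or.inr (Or.inl h'))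
      · exact Or.inr (Or.inr (Or.inr h'))
    have c134 : Cyc f u₁ u₃ u₄ := by
      apply key u₂ u₁ u₃ u₄ hw2 (h12.trans h23) h34 (mem_erase.2 ⟨hne12, hw1⟩)
        (mem_erase.2 ⟨(ne_of_lt h23).symm, hw3⟩) (mem_erase.2 ⟨(ne_of_lt (h23.trans h34)).symm, hw4⟩)
      intro x hx
      obtain ⟨hxne, hxV⟩ := mem_erase.1 hx
      rcases hbot x hxV with h' | h' | h' | h' | h'
      · exact Or.inl h'
      · exact absurd h' hxne
      · exact Or.inr (Or.inl h')
      · exact Or.inr (Or.inr (Or.inl h'))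
      · exact Or.inr (Or.inr (Or.inr h'))
    have c234 : Cyc f u₂ u₃ u₄ := by
      apply key u₁ u₂ u₃ u₄ hw1 h23 h34 (mem_erase.2 ⟨(ne_of_lt h12).symm, hw2⟩)
        (mem_erase.2 ⟨(ne_of_lt (h12.trans h23)).symm, hw3⟩)
        (mem_erase.2 ⟨(ne_of_lt ((h12.trans h23).trans h34)).symm, hw4⟩)
      intro x hx
      obtain ⟨hxne, hxV⟩ := mem_erase.1 hx
      rcases hbot x hxV with h' | h' | h' | h' | h'
      · exact absurd h' hxne
      · exact Or.inl h'
      · exact Or.inr (Or.inl h')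
      · exact Or.inr (Or.inr (Or.inl h'))
      · exact Or.inr (Or.inr (Or.inr h'))
    unfold Cyc at c123 c124 c134 c234
    exact no_four_cyc (f (u₁, u₂)) (f (u₁, u₃)) (f (u₁, u₄)) (f (u₂, u₃)) (f (u₂, u₄))
      (f (u₃, u₄)) ⟨c123, c124, c134, c234⟩
  · -- not k-colorable
    rintro ⟨cf, hcol⟩
    have hpig : ∃ y ∈ (univ : Finset (Fin k)), B < #({x ∈ (univ : Finset (Fin N)) | cf x = y}) := by
      apply exists_lt_card_fiber_of_mul_lt_card_of_maps_to (fun a _ => mem_univ _)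
      rw [card_univ, card_univ, Fintype.card_fin, Fintype.card_fin]
      omega
    obtain ⟨y, -, hy⟩ := hpig
    set C : Finset (Fin N) := {x ∈ (univ : Finset (Fin N)) | cf x = y} with hC
    have hCcf : ∀ x ∈ C, cf x = y := fun x hx => (mem_filter.1 hx).2
    obtain ⟨A, hAC, hAcard, hAbot⟩ := exists_bottom_split C (r - 3) (by omega)
    obtain ⟨A₀, hA₀A, hA₀card⟩ := A.exists_subset_card_eq (n := m) (by omega)
    obtain ⟨a, b, c, ha, hb, hc, hab, hbc, hcyc⟩ := hf A₀ hA₀card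
    have haA : a ∈ A := hA₀A ha
    have hbA : b ∈ A := hA₀A hb
    have hcA : c ∈ A := hA₀A hc
    set D : Finset (Fin N) := C \ A with hD
    have hDcard : D.card = r - 3 := by rw [hD, card_sdiff_of_subset hAC]; omega
    have hDgt : ∀ x ∈ D, c < x := by
      intro x hx
      rw [hD, mem_sdiff] at hx
      exact hAbot c hcA x hx.1 hx.2
    have hanD : a ∉ D := by rw [hD, mem_sdiff]; push_neg; intro _; exact haA
    have hbnD : b ∉ D := by rw [hD, mem_sdiff]; push_neg; intro _; exact hbA
    have hcnD : c ∉ D := by rw [hD, mem_sdiff]; push_neg; intro _; exact hcA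
    set e : Finset (Fin N) := insert a (insert b (insert c D)) with he
    have hbni : b ∉ insert c D := by
      rw [mem_insert]; push_neg; exact ⟨ne_of_lt hbc, hbnD⟩
    have hani : a ∉ insert b (insert c D) := by
      rw [mem_insert, mem_insert]; push_neg
      exact ⟨ne_of_lt hab, ne_of_lt (hab.trans hbc), hanD⟩
    have hecard : e.card = r := by
      rw [he, card_insert_of_notMem hani, card_insert_of_notMem hbni,
        card_insert_of_notMem hcnD, hDcard]
      omega
    have heE : e ∈ E := by
      rw [hE, mem_filter, mem_powersetCard]
      refine ⟨⟨subset_univ _, hecard⟩, a, b, c, ?_, ?_, ?_, hab, hbc, hcyc, ?_⟩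
      · rw [he]; exact mem_insert_self _ _
      · rw [he]; exact mem_insert_of_mem (mem_insert_self _ _)
      · rw [he]; exact mem_insert_of_mem (mem_insert_of_mem (mem_insert_self _ _))
      · intro x hx
        rw [he, mem_insert, mem_insert, mem_insert] at hx
        rcases hx with rfl | rfl | rfl | hx
        · exact Or.inl rfl
        · exact Or.inr (Or.inl rfl)
        · exact Or.inr (Or.inr (Or.inl rfl))
        · exact Or.inr (Or.inr (Or.inr (hDgt x hx)))
    have hesub : ∀ x ∈ e, cf x = y := by
      intro x hx
      rw [he, mem_insert, mem_insert, mem_insert] at hx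
      rcases hx with rfl | rfl | rfl | hx
      · exact hCcf _ (hAC haA)
      · exact hCcf _ (hAC hbA)
      · exact hCcf _ (hAC hcA)
      · exact hCcf _ (sdiff_subset (hD ▸ hx))
    obtain ⟨u, hu, v, hv, huv⟩ := hcol e heE (by omega)
    exact huv ((hesub u hu).trans (hesub v hv).symm)
  · -- edge count
    have h1 : E.card ≤ N ^ r := by
      calc E.card ≤ #((univ : Finset (Fin N)).powersetCard r) := card_filter_le _ _
        _ = N.choose r := by rw [card_powersetCard, card_univ, Fintype.card_fin]
        _ ≤ N ^ r := Nat.choose_le_pow N r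
    have hnat : N ≤ k * (m + r) := by
      calc N = k * B + 1 := hN
        _ ≤ k * B + k := by omega
        _ = k * (B + 1) := by ring
        _ ≤ k * (m + r) := Nat.mul_le_mul_left _ (by omega)
    have hMk' : ((m + r : ℕ) : ℝ) ≤ (k : ℝ) ^ (ε / (r : ℝ)) := by
      have he' : (m + r : ℕ) = 8 * L + 9 * r + 72 := by omega
      rw [he']
      exact hMk
    exact final_real hk1 (by omega) h1 hnat hMk'
end

section
/- For each s ≥ 3 there exists ε = ε_s > 0 such that for all sufficiently large k, every K_s-free graph with at most k^{2+ε} edges has chromatic number at most k; that is, m_k(K_s) > k^{2+ε}. -/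
open Finset SimpleGraph

lemma my_exists_indep_card {V : Type} [Fintype V] [DecidableEq V] (G : SimpleGraph V)
    [DecidableRel G.Adj] :
    ∃ S : Finset V, (∀ x ∈ S, ∀ y ∈ S, ¬ G.Adj x y) ∧
      Fintype.card V ≤ S.card * (G.maxDegree + 1) := by
  classical
  set coll := Finset.univ.powerset.filter
    (fun S : Finset V => ∀ x ∈ S, ∀ y ∈ S, ¬ G.Adj x y) with hcoll
  have hne : coll.Nonempty := ⟨∅, by simp [hcoll]⟩
  obtain ⟨S, hS, hmax⟩ := coll.exists_max_image Finset.card hne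
  simp only [hcoll, Finset.mem_filter, Finset.mem_powerset] at hS
  refine ⟨S, hS.2, ?_⟩
  have hdom : ∀ v : V, v ∈ S ∨ ∃ w ∈ S, G.Adj w v := by
    intro v
    by_contra hv
    push_neg at hv
    obtain ⟨hv1, hv2⟩ := hv
    have hins : insert v S ∈ coll := by
      simp only [hcoll, Finset.mem_filter, Finset.mem_powerset]
      refine ⟨Finset.subset_univ _, ?_⟩
      intro x hx y hy
      rcases Finset.mem_insert.1 hx with hx' | hx' <;>
        rcases Finset.mem_insert.1 hy with hy' | hy'
      · subst hx'; subst hy'; exact fun h => G.loopless.irrefl _ h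
      · subst hx'; exact fun h => hv2 y hy' h.symm
      · subst hy'; exact fun h => hv2 x hx' h
      · exact hS.2 x hx' y hy'
    have h2 := hmax _ hins
    rw [Finset.card_insert_of_notMem hv1] at h2
    omega
  have hcover : (Finset.univ : Finset V) ⊆ S ∪ S.biUnion (fun w => G.neighborFinset w) := by
    intro v _
    rcases hdom v with h | ⟨w, hw, hadj⟩
    · exact Finset.mem_union_left _ h
    · exact Finset.mem_union_right _ (Finset.mem_biUnion.2 ⟨w, hw, (G.mem_neighborFinset w v).2 hadj⟩)
  calc Fintype.card V = (Finset.univ : Finset V).card := Finset.card_univ.symm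
    _ ≤ (S ∪ S.biUnion (fun w => G.neighborFinset w)).card := Finset.card_le_card hcover
    _ ≤ S.card + (S.biUnion (fun w => G.neighborFinset w)).card := Finset.card_union_le _ _
    _ ≤ S.card + ∑ w ∈ S, (G.neighborFinset w).card :=
        Nat.add_le_add_left (Finset.card_biUnion_le) _
    _ ≤ S.card + S.card * G.maxDegree := by
        refine Nat.add_le_add_left ?_ _
        have := Finset.sum_le_card_nsmul S (fun w => (G.neighborFinset w).card) G.maxDegree
          (fun w _ => G.degree_le_maxDegree w)
        simpa [smul_eq_mul] using this
    _ = S.card * (G.maxDegree + 1) := by ring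

lemma my_cliqueFree_nbhd {V : Type} (G : SimpleGraph V) {n : ℕ} (v : V)
    (h : G.CliqueFree (n + 1)) : (G.induce (G.neighborSet v)).CliqueFree n := by
  classical
  intro t ht
  have hvt : v ∉ t.map (Function.Embedding.subtype _) := by
    simp only [Finset.mem_map, Function.Embedding.coe_subtype]
    rintro ⟨⟨x, hx⟩, -, hxe⟩
    rw [Subtype.coe_mk] at hxe
    subst hxe
    exact G.loopless.irrefl _ hx
  apply h (insert v (t.map (Function.Embedding.subtype _)))
  constructor
  · intro a ha b hb hab
    simp only [Finset.coe_insert, Set.mem_insert_iff, Finset.mem_coe, Finset.mem_map,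
      Function.Embedding.coe_subtype] at ha hb
    rcases ha with ha | ⟨⟨a', ha'⟩, hat, haa⟩ <;> rcases hb with hb | ⟨⟨b', hb'⟩, hbt, hbb⟩
    · exact absurd (ha.trans hb.symm) hab
    · subst ha; subst hbb; exact hb'
    · subst hb; subst haa; exact (G.adj_symm ha')
    · subst haa; subst hbb
      have hne : (⟨a', ha'⟩ : G.neighborSet v) ≠ ⟨b', hb'⟩ := fun hc => hab (congrArg _ hc)
      exact ht.1 (Finset.mem_coe.2 hat) (Finset.mem_coe.2 hbt) hne
  · rw [Finset.card_insert_of_notMem hvt, Finset.card_map, ht.2]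

lemma my_colorable_of_indep {V : Type} [Fintype V] [DecidableEq V] (G : SimpleGraph V)
    (S : Finset V) (hS : ∀ x ∈ S, ∀ y ∈ S, ¬ G.Adj x y) {j : ℕ}
    (h : (G.induce ((↑S : Set V)ᶜ)).Colorable j) : G.Colorable (j + 1) := by
  classical
  obtain ⟨C⟩ := h
  refine ⟨SimpleGraph.Coloring.mk
    (fun v => if hv : v ∈ S then Fin.last j else (C ⟨v, by simpa using hv⟩).castSucc) ?_⟩
  intro a b hab
  split_ifs with ha hb hb
  · exact absurd hab (hS a ha b hb)
  · exact (Fin.castSucc_lt_last _).ne'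
  · exact (Fin.castSucc_lt_last _).ne
  · have hadj : (G.induce ((↑S : Set V)ᶜ)).Adj ⟨a, by simpa using ha⟩ ⟨b, by simpa using hb⟩ := hab
    have := C.valid hadj
    simpa [Fin.castSucc_inj] using this

lemma my_indep_lemma : ∀ r : ℕ, ∃ B : ℕ, 0 < B ∧
    ∀ (V : Type) [Fintype V] [DecidableEq V] (G : SimpleGraph V),
      G.CliqueFree (r + 2) →
      ∃ S : Finset V, (∀ x ∈ S, ∀ y ∈ S, ¬ G.Adj x y) ∧
        Fintype.card V ≤ B * S.card ^ (r + 1) := by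
  intro r
  induction r with
  | zero =>
    refine ⟨1, one_pos, ?_⟩
    intro V _ _ G hcf
    rw [SimpleGraph.cliqueFree_two] at hcf
    subst hcf
    exact ⟨Finset.univ, by simp, by simp⟩
  | succ r IHr =>
    obtain ⟨B, hB, IH⟩ := IHr
    refine ⟨B ^ 2 + 2 ^ (r + 4), by positivity, ?_⟩
    intro V _ _ G hcf
    classical
    by_cases hV : Fintype.card V = 0
    · exact ⟨∅, by simp, by simp [hV]⟩
    have hV1 : 1 ≤ Fintype.card V := Nat.pos_of_ne_zero hV
    haveI : Nonempty V := Fintype.card_pos_iff.mp hV1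
    haveI : DecidableRel G.Adj := Classical.decRel _
    by_cases hcase : (Fintype.card V) ^ (r + 1) ≤ (G.maxDegree) ^ (r + 2)
    · -- high degree case
      obtain ⟨v, hv⟩ := G.exists_maximal_degree_vertex
      have hcf' : (G.induce (G.neighborSet v)).CliqueFree (r + 2) :=
        my_cliqueFree_nbhd G v (by simpa using hcf)
      obtain ⟨T, hT, hTcard⟩ := IH _ (G.induce (G.neighborSet v)) hcf'
      have hΔ : G.maxDegree ≤ B * T.card ^ (r + 1) := by
        rw [hv, ← G.card_neighborSet_eq_degree v]
        convert hTcard using 2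
      refine ⟨T.map (Function.Embedding.subtype _), ?_, ?_⟩
      · intro x hx y hy
        simp only [Finset.mem_map, Function.Embedding.coe_subtype] at hx hy
        obtain ⟨⟨x', hx'⟩, hxT, hxe⟩ := hx
        obtain ⟨⟨y', hy'⟩, hyT, hye⟩ := hy
        subst hxe; subst hye
        exact hT _ hxT _ hyT
      · rw [Finset.card_map]
        set b := T.card
        set n := Fintype.card V
        have h1 : n ^ (r + 1) ≤ (B * b ^ (r + 1)) ^ (r + 2) :=
          le_trans hcase (Nat.pow_le_pow_left hΔ _)
        have hb1 : 1 ≤ b := by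
          by_contra hb
          have hb0 : b = 0 := by omega
          rw [hb0] at h1
          rw [Nat.zero_pow (by omega : 0 < r + 1), Nat.mul_zero,
            Nat.zero_pow (by omega : 0 < r + 2)] at h1
          have h1' : n ^ (r + 1) = 0 := Nat.le_zero.mp h1
          have := Nat.pow_eq_zero.mp h1'
          omega
        have h2 : (B * b ^ (r + 1)) ^ (r + 2) ≤ (B ^ 2 * b ^ (r + 2)) ^ (r + 1) := by
          rw [mul_pow, mul_pow, ← pow_mul, ← pow_mul, ← pow_mul]
          exact Nat.mul_le_mul (Nat.pow_le_pow_right hB (by omega))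
            (Nat.pow_le_pow_right hb1 (by nlinarith))
        have h3 : n ≤ B ^ 2 * b ^ (r + 2) :=
          (Nat.pow_le_pow_iff_left (n := r + 1) (by omega)).mp (le_trans h1 h2)
        calc n ≤ B ^ 2 * b ^ (r + 2) := h3
          _ ≤ (B ^ 2 + 2 ^ (r + 4)) * b ^ (r + 2) :=
              Nat.mul_le_mul_right _ (Nat.le_add_right _ _)
    · -- low degree case
      push_neg at hcase
      obtain ⟨S, hSind, hScard⟩ := my_exists_indep_card G
      refine ⟨S, hSind, ?_⟩
      set n := Fintype.card V
      set a := S.card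
      set Δ := G.maxDegree
      have ha1 : 1 ≤ a := by
        by_contra h
        have ha0 : a = 0 := by omega
        rw [ha0, zero_mul] at hScard
        omega
      by_cases hΔ0 : Δ = 0
      · have hna : n ≤ a := by simpa [hΔ0] using hScard
        calc n ≤ a := hna
          _ ≤ a ^ (r + 2) := Nat.le_self_pow (by omega) a
          _ ≤ (B ^ 2 + 2 ^ (r + 4)) * a ^ (r + 2) := Nat.le_mul_of_pos_left _ (by positivity)
      · have hΔ1 : 1 ≤ Δ := Nat.pos_of_ne_zero hΔ0
        have h1 : n ^ (r + 2) ≤ (a * (Δ + 1)) ^ (r + 2) := Nat.pow_le_pow_left hScard _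
        have h2 : (a * (Δ + 1)) ^ (r + 2) ≤ a ^ (r + 2) * (2 * Δ) ^ (r + 2) := by
          rw [mul_pow]
          exact Nat.mul_le_mul_left _ (Nat.pow_le_pow_left (by omega) _)
        have h3 : a ^ (r + 2) * (2 * Δ) ^ (r + 2) < (2 ^ (r + 2) * a ^ (r + 2)) * n ^ (r + 1) := by
          rw [mul_pow]
          calc a ^ (r + 2) * (2 ^ (r + 2) * Δ ^ (r + 2))
              = (2 ^ (r + 2) * a ^ (r + 2)) * Δ ^ (r + 2) := by ring
            _ < (2 ^ (r + 2) * a ^ (r + 2)) * n ^ (r + 1) :=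
                mul_lt_mul_of_pos_left hcase (by positivity)
        have h4 : n * n ^ (r + 1) < (2 ^ (r + 2) * a ^ (r + 2)) * n ^ (r + 1) := by
          calc n * n ^ (r + 1) = n ^ (r + 2) := by ring
            _ ≤ (a * (Δ + 1)) ^ (r + 2) := h1
            _ ≤ a ^ (r + 2) * (2 * Δ) ^ (r + 2) := h2
            _ < _ := h3
        have h5 : n < 2 ^ (r + 2) * a ^ (r + 2) := Nat.lt_of_mul_lt_mul_right h4
        calc n ≤ 2 ^ (r + 2) * a ^ (r + 2) := le_of_lt h5
          _ ≤ (B ^ 2 + 2 ^ (r + 4)) * a ^ (r + 2) := by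
              refine Nat.mul_le_mul_right _ ?_
              have : (2:ℕ) ^ (r + 2) ≤ 2 ^ (r + 4) := Nat.pow_le_pow_right (by omega) (by omega)
              omega

-- Nat Bernoulli: k^m ≤ (k-1)^m + m * k^(m-1)
lemma my_nat_bern : ∀ (m k : ℕ), k ^ m ≤ (k - 1) ^ m + m * k ^ (m - 1) := by
  intro m
  induction m with
  | zero => intro k; simp
  | succ m IH =>
    intro k
    rcases Nat.eq_zero_or_pos m with hm | hm
    · subst hm
      rcases k with _ | k' <;> simp
    have h1 : k ^ (m + 1) = k * k ^ m := by ring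
    have h2 : k * k ^ m ≤ k * ((k - 1) ^ m + m * k ^ (m - 1)) :=
      Nat.mul_le_mul_left _ (IH k)
    have h3 : k * ((k - 1) ^ m + m * k ^ (m - 1)) = k * (k - 1) ^ m + m * (k * k ^ (m - 1)) := by
      ring
    have h4 : k * k ^ (m - 1) = k ^ m := by
      rcases Nat.exists_eq_add_of_le hm with ⟨m', rfl⟩
      simp [pow_succ]
      ring
    have h5 : k * (k - 1) ^ m ≤ (k - 1) * (k - 1) ^ m + (k - 1) ^ m := by
      have hk' : k ≤ (k - 1) + 1 := by omega
      calc k * (k - 1) ^ m ≤ ((k - 1) + 1) * (k - 1) ^ m := Nat.mul_le_mul_right _ hk'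
        _ = (k - 1) * (k - 1) ^ m + (k - 1) ^ m := by ring
    have h6 : (k - 1) ^ m ≤ k ^ m := Nat.pow_le_pow_left (by omega) _
    calc k ^ (m + 1) = k * k ^ m := h1
      _ ≤ k * (k - 1) ^ m + m * (k * k ^ (m - 1)) := by omega
      _ = k * (k - 1) ^ m + m * k ^ m := by rw [h4]
      _ ≤ ((k - 1) * (k - 1) ^ m + (k - 1) ^ m) + m * k ^ m := by omega
      _ ≤ ((k - 1) ^ (m + 1) + k ^ m) + m * k ^ m := by
          have : (k - 1) * (k - 1) ^ m = (k - 1) ^ (m + 1) := by ring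
          omega
      _ = (k - 1) ^ (m + 1) + (m + 1) * k ^ ((m + 1) - 1) := by
          simp only [Nat.add_sub_cancel]
          ring

-- key step inequality, all in ℕ: if σ := 2*(r+3) ≤ k then k*(k-σ)^(r+1) ≤ (k-1)^(r+2)
lemma my_step_ineq (r k : ℕ) (hk : 2 * (r + 3) ≤ k) :
    k * (k - 2 * (r + 3)) ^ (r + 1) ≤ (k - 1) ^ (r + 2) := by
  set σ := 2 * (r + 3) with hσ
  have hbern := my_nat_bern (r + 2) k
  -- k*(k-σ)^(r+1) + (r+2)*k^(r+1) ≤ k^(r+2)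
  have hA : (k - σ) ^ (r + 1) ≤ (k - σ) * k ^ r := by
    have : (k - σ) ^ (r + 1) = (k - σ) * (k - σ) ^ r := by ring
    rw [this]
    exact Nat.mul_le_mul_left _ (Nat.pow_le_pow_left (Nat.sub_le _ _) _)
  have hB : k * ((k - σ) * k ^ r) + (r + 2) * k ^ (r + 1) ≤ k ^ (r + 2) := by
    have h1 : k * ((k - σ) * k ^ r) + (r + 2) * k ^ (r + 1) = ((k - σ) + (r + 2)) * k ^ (r + 1) := by
      ring
    rw [h1]
    have h2 : (k - σ) + (r + 2) ≤ k := by omega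
    calc ((k - σ) + (r + 2)) * k ^ (r + 1) ≤ k * k ^ (r + 1) := Nat.mul_le_mul_right _ h2
      _ = k ^ (r + 2) := by ring
  have hC : k * (k - σ) ^ (r + 1) + (r + 2) * k ^ (r + 1) ≤ k ^ (r + 2) :=
    le_trans (by exact Nat.add_le_add_right (Nat.mul_le_mul_left _ hA) _) hB
  have hD : k ^ (r + 2) ≤ (k - 1) ^ (r + 2) + (r + 2) * k ^ (r + 1) := by
    simpa using hbern
  omega

lemma my_chi_lemma (r : ℕ) : ∃ D : ℕ, 0 < D ∧
    ∀ (k : ℕ) (V : Type) [Fintype V] [DecidableEq V] (G : SimpleGraph V),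
      G.CliqueFree (r + 3) → D * (Fintype.card V) ^ (r + 1) ≤ k ^ (r + 2) →
      G.Colorable k := by
  obtain ⟨B, hB, hIS⟩ := my_indep_lemma (r + 1)
  refine ⟨(2 * (r + 3)) ^ (r + 2) * B, by positivity, ?_⟩
  intro k
  induction k using Nat.strong_induction_on with
  | _ k IHk =>
    intro V _ _ G hcf hD
    classical
    by_cases hV : Fintype.card V = 0
    · haveI : IsEmpty V := Fintype.card_eq_zero_iff.mp hV
      exact SimpleGraph.Colorable.of_isEmpty k
    have hn1 : 1 ≤ Fintype.card V := Nat.pos_of_ne_zero hV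
    obtain ⟨S, hSind, hScard⟩ := hIS V G (by simpa using hcf)
    set n := Fintype.card V with hn
    set a := S.card with ha
    set σ := 2 * (r + 3) with hσ
    set D := σ ^ (r + 2) * B with hDdef
    -- a ≥ 1
    have ha1 : 1 ≤ a := by
      by_contra h
      have ha0 : a = 0 := by omega
      rw [ha0] at hScard
      rw [Nat.zero_pow (by omega : 0 < r + 2), Nat.mul_zero] at hScard
      omega
    have han : a ≤ n := by
      rw [hn, ha, ← Finset.card_univ]
      exact Finset.card_le_card (Finset.subset_univ S)
    -- k*a ≥ σ*n  (in ℕ, via (r+2)-th powers)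
    have hka : σ * n ≤ k * a := by
      have hScard2 : n ≤ B * a ^ (r + 2) := by
        simpa [show r + 1 + 1 = r + 2 from rfl] using hScard
      have h1 : (σ * n) ^ (r + 2) ≤ (k * a) ^ (r + 2) := by
        calc (σ * n) ^ (r + 2) = σ ^ (r + 2) * (n ^ (r + 1) * n) := by
              rw [mul_pow]; ring
          _ ≤ σ ^ (r + 2) * (n ^ (r + 1) * (B * a ^ (r + 2))) := by
              exact Nat.mul_le_mul_left _ (Nat.mul_le_mul_left _ hScard2)
          _ = (D * n ^ (r + 1)) * a ^ (r + 2) := by rw [hDdef]; ring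
          _ ≤ k ^ (r + 2) * a ^ (r + 2) := Nat.mul_le_mul_right _ hD
          _ = (k * a) ^ (r + 2) := by rw [mul_pow]
      exact (Nat.pow_le_pow_iff_left (by omega : r + 2 ≠ 0)).mp h1
    have hkσ : σ ≤ k := by
      by_contra hcon
      push_neg at hcon
      have h1 : k * a ≤ k * n := Nat.mul_le_mul_left _ han
      have h2 : σ * n ≤ k * n := le_trans hka h1
      have h3 : k * n < σ * n := by
        apply Nat.mul_lt_mul_of_lt_of_le hcon (le_refl n)
        omega
      omega
    have hk1 : 1 ≤ k := by omega
    -- key: D * (n - a)^(r+1) ≤ (k-1)^(r+2)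
    have hkey : D * (n - a) ^ (r + 1) ≤ (k - 1) ^ (r + 2) := by
      have hstep1 : k * (n - a) ≤ (k - σ) * n := by
        rw [Nat.mul_sub, Nat.sub_mul]
        exact Nat.sub_le_sub_left hka _
      have hstep2 : (k * (n - a)) ^ (r + 1) ≤ ((k - σ) * n) ^ (r + 1) :=
        Nat.pow_le_pow_left hstep1 _
      have hmain : k ^ (r + 1) * (D * (n - a) ^ (r + 1)) ≤ k ^ (r + 1) * (k - 1) ^ (r + 2) := by
        calc k ^ (r + 1) * (D * (n - a) ^ (r + 1)) = D * (k * (n - a)) ^ (r + 1) := by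
              rw [mul_pow]; ring
          _ ≤ D * ((k - σ) * n) ^ (r + 1) := Nat.mul_le_mul_left _ hstep2
          _ = (k - σ) ^ (r + 1) * (D * n ^ (r + 1)) := by rw [mul_pow]; ring
          _ ≤ (k - σ) ^ (r + 1) * k ^ (r + 2) := Nat.mul_le_mul_left _ hD
          _ = k ^ (r + 1) * (k * (k - σ) ^ (r + 1)) := by ring
          _ ≤ k ^ (r + 1) * (k - 1) ^ (r + 2) :=
              Nat.mul_le_mul_left _ (my_step_ineq r k hkσ)
      exact Nat.le_of_mul_le_mul_left hmain (by positivity)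
    -- the complement
    have hcard' : Fintype.card ↥((↑S : Set V)ᶜ) = n - a := by
      rw [Fintype.card_compl_set]
      simp [hn, ha]
    have hcol' : (G.induce ((↑S : Set V)ᶜ)).Colorable (k - 1) := by
      apply IHk (k - 1) (by omega)
      · exact SimpleGraph.CliqueFree.comap (SimpleGraph.Embedding.induce _).isContained hcf
      · rw [hcard']
        exact hkey
    have hfin := my_colorable_of_indep G S hSind hcol'
    have hk' : (k - 1) + 1 = k := by omega
    rwa [hk'] at hfin

lemma my_exists_critical {V : Type} [Fintype V] [DecidableEq V] (G : SimpleGraph V)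
    [DecidableRel G.Adj] {k : ℕ} (h : ¬ G.Colorable k) :
    ∃ t : Finset V, ¬ (G.induce (↑t : Set V)).Colorable k ∧
      ∀ v ∈ t, k ≤ (t.filter (G.Adj v)).card := by
  classical
  set P := Finset.univ.powerset.filter
    (fun t : Finset V => ¬ (G.induce (↑t : Set V)).Colorable k) with hP
  have hPne : P.Nonempty := by
    refine ⟨Finset.univ, ?_⟩
    simp only [hP, Finset.mem_filter, Finset.mem_powerset, Finset.subset_univ, true_and]
    intro hc
    apply h
    rw [Finset.coe_univ] at hc
    exact SimpleGraph.Colorable.of_hom (G.induceUnivIso.symm.toEmbedding).toHom hc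
  obtain ⟨t, htP, hmin⟩ := P.exists_min_image Finset.card hPne
  simp only [hP, Finset.mem_filter, Finset.mem_powerset] at htP
  refine ⟨t, htP.2, ?_⟩
  intro v hv
  by_contra hdeg
  push_neg at hdeg
  -- t.erase v is colorable
  have herase : (G.induce (↑(t.erase v) : Set V)).Colorable k := by
    by_contra hcon
    have hmem : t.erase v ∈ P := by
      simp only [hP, Finset.mem_filter, Finset.mem_powerset]
      exact ⟨Finset.subset_univ _, hcon⟩
    have := hmin _ hmem
    have hlt : (t.erase v).card < t.card := Finset.card_erase_lt_of_mem hv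
    omega
  obtain ⟨C⟩ := herase
  -- the set of colors used by neighbors of v in t
  set Nbr := t.filter (G.Adj v) with hNbr
  have hNbrsub : ∀ x ∈ Nbr, x ∈ t.erase v := by
    intro x hx
    rw [hNbr, Finset.mem_filter] at hx
    exact Finset.mem_erase.2 ⟨fun hc => G.loopless.irrefl v (hc ▸ hx.2), hx.1⟩
  set U : Finset (Fin k) := Nbr.attach.image
    (fun x => C ⟨x.1, hNbrsub _ x.2⟩) with hU
  have hUcard : U.card < k := by
    calc U.card ≤ Nbr.attach.card := Finset.card_image_le
      _ = Nbr.card := Finset.card_attach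
      _ < k := hdeg
  have hex : ∃ c : Fin k, c ∉ U := by
    by_contra hc
    push_neg at hc
    have : (Finset.univ : Finset (Fin k)) ⊆ U := fun c _ => hc c
    have := Finset.card_le_card this
    rw [Finset.card_univ, Fintype.card_fin] at this
    omega
  obtain ⟨c, hc⟩ := hex
  -- build coloring of induce t
  apply htP.2
  refine ⟨SimpleGraph.Coloring.mk
    (fun u => if hu : (u : V) = v then c else
      C ⟨u, Finset.mem_erase.2 ⟨hu, u.2⟩⟩) ?_⟩
  rintro ⟨a, hat⟩ ⟨b, hbt⟩ hab
  have hab' : G.Adj a b := hab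
  dsimp only
  split_ifs with ha hb hb
  · exact absurd (ha.trans hb.symm) (G.ne_of_adj hab')
  · -- a = v, b ≠ v : C ⟨b⟩ ∈ U
    subst ha
    intro hcontra
    apply hc
    rw [hU]
    have hbN : b ∈ Nbr := by
      rw [hNbr, Finset.mem_filter]
      exact ⟨hbt, hab'⟩
    refine Finset.mem_image.2 ⟨⟨b, hbN⟩, Finset.mem_attach _ _, ?_⟩
    exact hcontra.symm
  · subst hb
    intro hcontra
    apply hc
    rw [hU]
    have haN : a ∈ Nbr := by
      rw [hNbr, Finset.mem_filter]
      exact ⟨hat, hab'.symm⟩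
    refine Finset.mem_image.2 ⟨⟨a, haN⟩, Finset.mem_attach _ _, ?_⟩
    exact hcontra
  · have hadj : (G.induce (↑(t.erase v) : Set V)).Adj
        ⟨a, Finset.mem_erase.2 ⟨ha, hat⟩⟩ ⟨b, Finset.mem_erase.2 ⟨hb, hbt⟩⟩ := hab'
    exact C.valid hadj

/-- **Theorem.** For each `s ≥ 3` there exists `ε > 0` such that for all sufficiently
large `k`, every `K_s`-free graph with at most `k^(2+ε)` edges has chromatic number at
most `k`; that is, `m_k(K_s) > k^(2+ε)`. -/
theorem ks_free_lower_bound (s : ℕ) (hs : 3 ≤ s) :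
    ∃ ε : ℝ, 0 < ε ∧ ∃ k₀ : ℕ, ∀ k : ℕ, k₀ ≤ k →
      ∀ (V : Type) [Fintype V] [DecidableEq V] (G : SimpleGraph V) [DecidableRel G.Adj],
        G.CliqueFree s → (G.edgeFinset.card : ℝ) ≤ (k : ℝ) ^ ((2 : ℝ) + ε) →
        G.Colorable k := by
  obtain ⟨r, rfl⟩ : ∃ r, s = r + 3 := ⟨s - 3, by omega⟩
  obtain ⟨D, hD, hCHI⟩ := my_chi_lemma r
  refine ⟨1 / (2 * ((r : ℝ) + 1)), by positivity, (D * 2 ^ (r + 1)) ^ 2 + 1, ?_⟩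
  intro k hk V _ _ G _ hcf hE
  classical
  by_contra hcol
  obtain ⟨t, ht1, ht2⟩ := my_exists_critical G hcol
  have hnot : ¬ (D * (Fintype.card ↥(↑t : Set V)) ^ (r + 1) ≤ k ^ (r + 2)) :=
    fun hle => ht1 (hCHI k _ (G.induce (↑t : Set V))
      (SimpleGraph.CliqueFree.comap (SimpleGraph.Embedding.induce _).isContained hcf) hle)
  push_neg at hnot
  have hcardt : Fintype.card ↥(↑t : Set V) = t.card := by simp
  rw [hcardt] at hnot
  have hedge : k * t.card ≤ 2 * G.edgeFinset.card := by
    calc k * t.card = t.card * k := mul_comm _ _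
      _ ≤ ∑ v ∈ t, (t.filter (G.Adj v)).card := by
          have := Finset.card_nsmul_le_sum t (fun v => (t.filter (G.Adj v)).card) k ht2
          simpa [smul_eq_mul] using this
      _ ≤ ∑ v ∈ t, G.degree v := Finset.sum_le_sum (fun v hv => by
          apply Finset.card_le_card
          intro u hu
          rw [SimpleGraph.mem_neighborFinset]
          exact (Finset.mem_filter.1 hu).2)
      _ ≤ ∑ v, G.degree v := Finset.sum_le_sum_of_subset (t.subset_univ)
      _ = 2 * G.edgeFinset.card := G.sum_degrees_eq_twice_card_edges
  -- real arithmetic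
  have hk1 : 1 ≤ k := by
    have := Nat.zero_le ((D * 2 ^ (r + 1)) ^ 2)
    omega
  set K : ℝ := (k : ℝ) with hK
  set M : ℝ := (G.edgeFinset.card : ℝ) with hM
  have hK0 : (0 : ℝ) < K := by
    rw [hK]; exact_mod_cast hk1
  have hKnn : (0 : ℝ) ≤ K := hK0.le
  have hM0 : (0 : ℝ) ≤ M := by rw [hM]; positivity
  have hcast1 : K ^ (r + 2) < (D : ℝ) * (t.card : ℝ) ^ (r + 1) := by
    rw [hK]; exact_mod_cast hnot
  have hcast2 : K * (t.card : ℝ) ≤ 2 * M := by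
    rw [hK, hM]; exact_mod_cast hedge
  have hmono : (K * (t.card : ℝ)) ^ (r + 1) ≤ (2 * M) ^ (r + 1) :=
    pow_le_pow_left₀ (by positivity) hcast2 _
  have hchain1 : K ^ (r + 2) * K ^ (r + 1) < (D : ℝ) * (2 * M) ^ (r + 1) := by
    calc K ^ (r + 2) * K ^ (r + 1) < ((D : ℝ) * (t.card : ℝ) ^ (r + 1)) * K ^ (r + 1) :=
          mul_lt_mul_of_pos_right hcast1 (by positivity)
      _ = (D : ℝ) * (K * (t.card : ℝ)) ^ (r + 1) := by rw [mul_pow]; ring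
      _ ≤ (D : ℝ) * (2 * M) ^ (r + 1) := by
          apply mul_le_mul_of_nonneg_left hmono (by positivity)
  have hE2 : (2 * M) ^ (r + 1) ≤ 2 ^ (r + 1) * (K ^ ((2 : ℝ) + 1 / (2 * ((r : ℝ) + 1)))) ^ (r + 1) := by
    calc (2 * M) ^ (r + 1) ≤ (2 * K ^ ((2 : ℝ) + 1 / (2 * ((r : ℝ) + 1)))) ^ (r + 1) := by
          apply pow_le_pow_left₀ (by positivity)
          have := hE
          nlinarith [hE]
      _ = 2 ^ (r + 1) * (K ^ ((2 : ℝ) + 1 / (2 * ((r : ℝ) + 1)))) ^ (r + 1) := mul_pow _ _ _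
  have hr0 : (r : ℝ) + 1 ≠ 0 := by positivity
  have hrpow : (K ^ ((2 : ℝ) + 1 / (2 * ((r : ℝ) + 1)))) ^ (r + 1)
      = K ^ (2 * r + 2) * K ^ ((1 : ℝ) / 2) := by
    rw [← Real.rpow_natCast (K ^ ((2 : ℝ) + 1 / (2 * ((r : ℝ) + 1)))) (r + 1),
      ← Real.rpow_mul hKnn]
    have hexp : ((2 : ℝ) + 1 / (2 * ((r : ℝ) + 1))) * ((r + 1 : ℕ) : ℝ)
        = ((2 * r + 2 : ℕ) : ℝ) + 1 / 2 := by
      push_cast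
      field_simp
    rw [hexp, Real.rpow_add hK0, Real.rpow_natCast]
  have hhalf : (D : ℝ) * 2 ^ (r + 1) ≤ K ^ ((1 : ℝ) / 2) := by
    have hc2 : ((D : ℝ) * 2 ^ (r + 1)) ^ 2 ≤ K := by
      have h1 : ((D * 2 ^ (r + 1)) ^ 2 : ℕ) ≤ k := by omega
      rw [hK]
      exact_mod_cast h1
    have hc0 : (0 : ℝ) ≤ (D : ℝ) * 2 ^ (r + 1) := by positivity
    calc (D : ℝ) * 2 ^ (r + 1) = (((D : ℝ) * 2 ^ (r + 1)) ^ 2) ^ ((1 : ℝ) / 2) := by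
          rw [← Real.rpow_natCast ((D : ℝ) * 2 ^ (r + 1)) 2, ← Real.rpow_mul hc0]
          norm_num
      _ ≤ K ^ ((1 : ℝ) / 2) := Real.rpow_le_rpow (by positivity) hc2 (by norm_num)
  have hfinal : K ^ (r + 2) * K ^ (r + 1) < K ^ (r + 2) * K ^ (r + 1) := by
    calc K ^ (r + 2) * K ^ (r + 1) < (D : ℝ) * (2 * M) ^ (r + 1) := hchain1
      _ ≤ (D : ℝ) * (2 ^ (r + 1) * (K ^ ((2 : ℝ) + 1 / (2 * ((r : ℝ) + 1)))) ^ (r + 1)) :=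
          mul_le_mul_of_nonneg_left hE2 (by positivity)
      _ = ((D : ℝ) * 2 ^ (r + 1)) * (K ^ (2 * r + 2) * K ^ ((1 : ℝ) / 2)) := by
          rw [hrpow]; ring
      _ ≤ K ^ ((1 : ℝ) / 2) * (K ^ (2 * r + 2) * K ^ ((1 : ℝ) / 2)) := by
          apply mul_le_mul_of_nonneg_right hhalf (by positivity)
      _ = K ^ (2 * r + 2) * (K ^ ((1 : ℝ) / 2) * K ^ ((1 : ℝ) / 2)) := by ring
      _ = K ^ (2 * r + 2) * K := by
          rw [← Real.rpow_add hK0]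
          norm_num
      _ = K ^ (r + 2) * K ^ (r + 1) := by ring
  exact lt_irrefl _ hfinal
end
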